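/- arXiv:1112.4572 — 5 statements merged into one kernel-verified Lean document; each statement's English description precedes it below -/
import Mathlib

section
/- For m i.i.d. bidders with finite type space T and a single item, a bidder-symmetric reduced form π : T → [0,1] is feasible if and only if for every subset S ⊆ T we have m · Σ_{t∈S} π(t)·Pr[t] ≤ 1 − (1 − Pr[t ∈ S])^m. -/
set_option linter.unusedSectionVars false
set_option linter.unusedVariables false
set_option maxHeartbeats 1000000

open Finset

namespace Border

variable {T : Type*} [Fintype T] [DecidableEq T] {m : ℕ}

/-- Reduced form of a mechanism. -/
def R (μ : T → ℝ) (φ : (Fin m → T) → Fin m → ℝ) (i : Fin m) (A : T) : ℝ :=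
  ∑ P : Fin m → T, if P i = A then (∏ j ∈ Finset.univ.erase i, μ (P j)) * φ P i else 0

lemma sum_pi_prod (g : Fin m → T → ℝ) :
    ∑ P : Fin m → T, ∏ j, g j (P j) = ∏ j, ∑ t, g j t :=
  (Fintype.prod_sum g).symm

lemma sum_ite_forall_notmem (μ : T → ℝ) (hμ1 : ∑ t, μ t = 1) (S : Finset T) :
    ∑ P : Fin m → T, (if ∀ i, P i ∉ S then (∏ j, μ (P j)) else 0)
      = (1 - ∑ t ∈ S, μ t) ^ m := by
  classical
  have h1 : ∀ P : Fin m → T,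
      (if ∀ i, P i ∉ S then (∏ j, μ (P j)) else 0)
        = ∏ j, (if P j ∈ S then 0 else μ (P j)) := by
    intro P
    by_cases h : ∀ i, P i ∉ S
    · rw [if_pos h]
      exact Finset.prod_congr rfl fun j _ => by rw [if_neg (h j)]
    · rw [if_neg h]
      push_neg at h
      obtain ⟨i, hi⟩ := h
      exact (Finset.prod_eq_zero (mem_univ i) (by rw [if_pos hi])).symm
  rw [Finset.sum_congr rfl fun P _ => h1 P]
  rw [sum_pi_prod (fun _ t => if t ∈ S then 0 else μ t)]
  have h2 : ∑ t, (if t ∈ S then (0:ℝ) else μ t) = 1 - ∑ t ∈ S, μ t := by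
    have : ∑ t, (if t ∈ S then (0:ℝ) else μ t)
        = ∑ t, (μ t - if t ∈ S then μ t else 0) :=
      Finset.sum_congr rfl fun t _ => by split_ifs <;> ring
    rw [this, Finset.sum_sub_distrib, hμ1, Finset.sum_ite_mem, univ_inter]
  rw [Finset.prod_congr rfl fun j _ => h2, Finset.prod_const, Finset.card_univ,
    Fintype.card_fin]

lemma sum_prod_eq_one (μ : T → ℝ) (hμ1 : ∑ t, μ t = 1) :
    ∑ P : Fin m → T, ∏ j, μ (P j) = 1 := by
  rw [sum_pi_prod (fun _ t => μ t), Finset.prod_congr rfl fun j _ => hμ1,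
    Finset.prod_const, one_pow]

lemma sum_ite_exists_mem (μ : T → ℝ) (hμ1 : ∑ t, μ t = 1) (S : Finset T) :
    ∑ P : Fin m → T, (if ∃ i, P i ∈ S then (∏ j, μ (P j)) else 0)
      = 1 - (1 - ∑ t ∈ S, μ t) ^ m := by
  classical
  have h : ∀ P : Fin m → T,
      (if ∃ i, P i ∈ S then (∏ j, μ (P j)) else 0)
        = (∏ j, μ (P j)) - (if ∀ i, P i ∉ S then (∏ j, μ (P j)) else 0) := by
    intro P
    by_cases hE : ∃ i, P i ∈ S
    · rw [if_pos hE, if_neg (by push_neg; exact hE), sub_zero]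
    · rw [if_neg hE, if_pos (by push_neg at hE; exact hE), sub_self]
  rw [Finset.sum_congr rfl fun P _ => h P, Finset.sum_sub_distrib,
    sum_prod_eq_one μ hμ1, sum_ite_forall_notmem μ hμ1 S]

/-- A profile with `P i = A` contributes weight `∏_{j≠i} μ (P j)`; total is 1. -/
lemma sum_cond_prod (μ : T → ℝ) (hμ1 : ∑ t, μ t = 1) (i : Fin m) (A : T) :
    ∑ P : Fin m → T, (if P i = A then (∏ j ∈ Finset.univ.erase i, μ (P j)) else 0) = 1 := by
  classical
  have h1 : ∀ P : Fin m → T,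
      (if P i = A then (∏ j ∈ Finset.univ.erase i, μ (P j)) else 0)
        = ∏ j, (if j = i then (if P j = A then (1:ℝ) else 0) else μ (P j)) := by
    intro P
    rw [← Finset.mul_prod_erase univ _ (mem_univ i), if_pos rfl]
    have h2 : ∏ j ∈ univ.erase i, (if j = i then (if P j = A then (1:ℝ) else 0) else μ (P j))
        = ∏ j ∈ univ.erase i, μ (P j) :=
      Finset.prod_congr rfl fun j hj => by rw [if_neg (Finset.mem_erase.1 hj).1]
    rw [h2]
    split_ifs <;> ring
  rw [Finset.sum_congr rfl fun P _ => h1 P,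
    sum_pi_prod (fun j t => if j = i then (if t = A then (1:ℝ) else 0) else μ t)]
  refine Finset.prod_eq_one fun j _ => ?_
  by_cases hj : j = i
  · simp only [if_pos hj]
    rw [Finset.sum_ite_eq' univ A (fun _ => (1:ℝ)), if_pos (mem_univ A)]
  · simp only [if_neg hj]; exact hμ1


lemma easy_direction (μ : T → ℝ) (hμ0 : ∀ t, 0 ≤ μ t) (hμ1 : ∑ t, μ t = 1)
    (π : T → ℝ) (φ : (Fin m → T) → Fin m → ℝ)
    (h0 : ∀ P i, 0 ≤ φ P i) (h1 : ∀ P, ∑ i, φ P i ≤ 1)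
    (hR : ∀ i A, R μ φ i A = π A) (S : Finset T) :
    (m:ℝ) * ∑ t ∈ S, π t * μ t ≤ 1 - (1 - ∑ t ∈ S, μ t) ^ m := by
  classical
  have Wnn : ∀ P : Fin m → T, 0 ≤ ∏ j, μ (P j) :=
    fun P => Finset.prod_nonneg fun j _ => hμ0 _
  have step1 : ∀ i : Fin m, ∑ t ∈ S, π t * μ t
      = ∑ P : Fin m → T, (if P i ∈ S then (∏ j, μ (P j)) * φ P i else 0) := by
    intro i
    calc ∑ t ∈ S, π t * μ t
        = ∑ t ∈ S, ∑ P : Fin m → T,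
            (if P i = t then ((∏ j ∈ univ.erase i, μ (P j)) * φ P i) * μ t else 0) := by
          refine Finset.sum_congr rfl fun t _ => ?_
          rw [← hR i t]
          unfold R
          rw [Finset.sum_mul]
          exact Finset.sum_congr rfl fun P _ => by rw [ite_mul, zero_mul]
      _ = ∑ P : Fin m → T, ∑ t ∈ S,
            (if P i = t then ((∏ j ∈ univ.erase i, μ (P j)) * φ P i) * μ t else 0) :=
          Finset.sum_comm
      _ = ∑ P : Fin m → T, (if P i ∈ S then (∏ j, μ (P j)) * φ P i else 0) := by
          refine Finset.sum_congr rfl fun P _ => ?_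
          rw [Finset.sum_ite_eq S (P i)
            (fun t => ((∏ j ∈ univ.erase i, μ (P j)) * φ P i) * μ t)]
          split_ifs with h
          · rw [← Finset.mul_prod_erase univ (fun j => μ (P j)) (mem_univ i)]; ring
          · rfl
  calc (m:ℝ) * ∑ t ∈ S, π t * μ t
      = ∑ _i : Fin m, ∑ t ∈ S, π t * μ t := by
        rw [Finset.sum_const, card_univ, Fintype.card_fin, nsmul_eq_mul]
    _ = ∑ i : Fin m, ∑ P : Fin m → T, (if P i ∈ S then (∏ j, μ (P j)) * φ P i else 0) :=
        Finset.sum_congr rfl fun i _ => step1 i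
    _ = ∑ P : Fin m → T, ∑ i : Fin m, (if P i ∈ S then (∏ j, μ (P j)) * φ P i else 0) :=
        Finset.sum_comm
    _ ≤ ∑ P : Fin m → T, (if ∃ i, P i ∈ S then (∏ j, μ (P j)) else 0) := by
        refine Finset.sum_le_sum fun P _ => ?_
        by_cases hE : ∃ i, P i ∈ S
        · rw [if_pos hE]
          calc ∑ i : Fin m, (if P i ∈ S then (∏ j, μ (P j)) * φ P i else 0)
              ≤ ∑ i : Fin m, (∏ j, μ (P j)) * φ P i := by
                refine Finset.sum_le_sum fun i _ => ?_
                split_ifs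
                · exact le_refl _
                · exact mul_nonneg (Wnn P) (h0 P i)
            _ = (∏ j, μ (P j)) * ∑ i, φ P i := by rw [Finset.mul_sum]
            _ ≤ (∏ j, μ (P j)) * 1 := mul_le_mul_of_nonneg_left (h1 P) (Wnn P)
            _ = ∏ j, μ (P j) := mul_one _
        · rw [if_neg hE]
          push_neg at hE
          rw [Finset.sum_eq_zero fun i _ => by rw [if_neg (hE i)]]
    _ = 1 - (1 - ∑ t ∈ S, μ t) ^ m := sum_ite_exists_mem μ hμ1 S

noncomputable def vsup [Nonempty (Fin m)] (v : T → ℝ) (P : Fin m → T) : ℝ :=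
  univ.sup' univ_nonempty (fun i => v (P i))

open Classical in
noncomputable def psi [Nonempty (Fin m)] (v : T → ℝ) (P : Fin m → T) (i : Fin m) : ℝ :=
  if 0 < v (P i) ∧ v (P i) = vsup v P
  then ((univ.filter fun j => v (P j) = vsup v P).card : ℝ)⁻¹ else 0

variable [Nonempty (Fin m)]

lemma psi_nonneg (v : T → ℝ) (P : Fin m → T) (i : Fin m) : 0 ≤ psi v P i := by
  unfold psi
  split_ifs
  · positivity
  · exact le_refl 0

lemma vsup_mem (v : T → ℝ) (P : Fin m → T) :
    (univ.filter fun j => v (P j) = vsup v P).Nonempty := by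
  obtain ⟨i, _, hi⟩ := Finset.exists_mem_eq_sup' (univ_nonempty (α := Fin m)) (fun i => v (P i))
  exact ⟨i, mem_filter.2 ⟨mem_univ i, hi.symm⟩⟩

lemma psi_eq_ite (v : T → ℝ) (P : Fin m → T) (hpos : 0 < vsup v P) (i : Fin m) :
    psi v P i = if i ∈ (univ.filter fun j => v (P j) = vsup v P)
      then ((univ.filter fun j => v (P j) = vsup v P).card : ℝ)⁻¹ else 0 := by
  unfold psi
  by_cases h : v (P i) = vsup v P
  · rw [if_pos ⟨by rw [h]; exact hpos, h⟩, if_pos (by simp [h])]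
  · rw [if_neg (fun hc => h hc.2), if_neg (by simp [h])]

lemma psi_sum_le (v : T → ℝ) (P : Fin m → T) : ∑ i, psi v P i ≤ 1 := by
  classical
  by_cases hpos : 0 < vsup v P
  · rw [Finset.sum_congr rfl fun i _ => psi_eq_ite v P hpos i]
    rw [Finset.sum_ite_mem, univ_inter, Finset.sum_const, nsmul_eq_mul]
    have hc : ((univ.filter fun j => v (P j) = vsup v P).card : ℝ) ≠ 0 := by
      have := (vsup_mem v P).card_pos
      positivity
    rw [mul_inv_cancel₀ hc]
  · rw [Finset.sum_eq_zero]
    · exact zero_le_one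
    intro i _
    unfold psi
    rw [if_neg]
    rintro ⟨h1, h2⟩
    rw [h2] at h1
    exact hpos h1
lemma psi_dot (v : T → ℝ) (hv0 : ∀ t, 0 ≤ v t) (P : Fin m → T) :
    ∑ i, v (P i) * psi v P i = vsup v P := by
  classical
  by_cases hpos : 0 < vsup v P
  · have h1 : ∀ i : Fin m, v (P i) * psi v P i
        = if i ∈ (univ.filter fun j => v (P j) = vsup v P)
          then vsup v P * ((univ.filter fun j => v (P j) = vsup v P).card : ℝ)⁻¹ else 0 := by
      intro i
      rw [psi_eq_ite v P hpos i]
      split_ifs with h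
      · have : v (P i) = vsup v P := (mem_filter.1 h).2
        rw [this]
      · rw [mul_zero]
    rw [Finset.sum_congr rfl fun i _ => h1 i, Finset.sum_ite_mem, univ_inter,
      Finset.sum_const, nsmul_eq_mul]
    have hc : ((univ.filter fun j => v (P j) = vsup v P).card : ℝ) ≠ 0 := by
      have := (vsup_mem v P).card_pos
      positivity
    field_simp
  · have hz : vsup v P = 0 := by
      have h1 : ∀ i : Fin m, v (P i) ≤ 0 := by
        intro i
        calc v (P i) ≤ vsup v P := Finset.le_sup' (fun i => v (P i)) (mem_univ i)
          _ ≤ 0 := not_lt.1 hpos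
      exact le_antisymm (not_lt.1 hpos) (le_trans (hv0 _)
        (Finset.le_sup' (fun i => v (P i)) (mem_univ (Classical.arbitrary (Fin m)))))
    rw [hz]
    refine Finset.sum_eq_zero fun i _ => ?_
    unfold psi
    rw [if_neg, mul_zero]
    rintro ⟨h1, h2⟩
    rw [h2, hz] at h1
    exact lt_irrefl 0 h1

lemma psi_zero_of (v : T → ℝ) (P : Fin m → T) (i : Fin m) (h : v (P i) = 0) :
    psi v P i = 0 := by
  unfold psi
  rw [if_neg]
  rintro ⟨h1, _⟩
  rw [h] at h1
  exact lt_irrefl 0 h1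

lemma vsup_comp (v : T → ℝ) (P : Fin m → T) (σ : Equiv.Perm (Fin m)) :
    vsup v (P ∘ σ) = vsup v P := by
  unfold vsup
  refine le_antisymm ?_ ?_
  · refine Finset.sup'_le _ _ fun i _ => ?_
    exact Finset.le_sup' (fun i => v (P i)) (mem_univ (σ i))
  · refine Finset.sup'_le _ _ fun i _ => ?_
    have : v (P i) = v ((P ∘ σ) (σ.symm i)) := by simp
    rw [this]
    exact Finset.le_sup' (fun j => v ((P ∘ σ) j)) (mem_univ (σ.symm i))

lemma psi_symm (v : T → ℝ) (P : Fin m → T) (σ : Equiv.Perm (Fin m)) (i : Fin m) :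
    psi v (P ∘ σ) i = psi v P (σ i) := by
  classical
  unfold psi
  rw [vsup_comp v P σ]
  have hcard : (univ.filter fun j => v ((P ∘ σ) j) = vsup v P).card
      = (univ.filter fun j => v (P j) = vsup v P).card := by
    refine Finset.card_bij (fun j _ => σ j) ?_ ?_ ?_
    · intro a ha
      simp only [mem_filter, mem_univ, true_and] at ha ⊢
      exact ha
    · intro a _ b _ h
      exact σ.injective h
    · intro b hb
      refine ⟨σ.symm b, ?_, by simp⟩
      simp only [mem_filter, mem_univ, true_and, Function.comp] at hb ⊢
      simpa using hb
  rw [hcard]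
  rfl

lemma R_psi_comm (μ : T → ℝ) (v : T → ℝ) (i k : Fin m) (A : T) :
    R μ (psi v) i A = R μ (psi v) k A := by
  classical
  unfold R
  set σ : Equiv.Perm (Fin m) := Equiv.swap i k with hσ
  have hbij : Function.Bijective (fun Q : Fin m → T => Q ∘ σ) := by
    constructor
    · intro a b h
      funext x
      have := congrFun h (σ.symm x)
      simpa using this
    · intro Q
      exact ⟨Q ∘ σ.symm, by funext x; simp⟩
  refine (Fintype.sum_bijective _ hbij _ _ fun Q => ?_).symm
  have h1 : (Q ∘ σ) i = Q k := by simp [hσ, Equiv.swap_apply_left]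
  have h2 : ∏ j ∈ univ.erase i, μ ((Q ∘ σ) j) = ∏ j ∈ univ.erase k, μ (Q j) := by
    have e1 : ∏ j ∈ univ.erase i, μ (Q (σ j)) = ∏ x ∈ (univ.erase i).map σ.toEmbedding, μ (Q x) := by
      rw [Finset.prod_map]
      rfl
    have e2 : (univ.erase i).map σ.toEmbedding = univ.erase k := by
      rw [Finset.map_erase]
      have : (univ : Finset (Fin m)).map σ.toEmbedding = univ := Finset.map_univ_equiv σ
      rw [this]
      congr 1
      simp [hσ, Equiv.swap_apply_left]
    calc ∏ j ∈ univ.erase i, μ ((Q ∘ σ) j) = ∏ j ∈ univ.erase i, μ (Q (σ j)) := rfl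
      _ = ∏ x ∈ (univ.erase i).map σ.toEmbedding, μ (Q x) := e1
      _ = ∏ x ∈ univ.erase k, μ (Q x) := by rw [e2]
  have h3 : psi v (Q ∘ σ) i = psi v Q k := by
    rw [psi_symm v Q σ i]
    congr 1
    simp [hσ, Equiv.swap_apply_left]
  rw [h1, h2, h3]

lemma layer_sup [Nonempty (Fin m)] (μ : T → ℝ) (hμ0 : ∀ t, 0 ≤ μ t) (hμ1 : ∑ t, μ t = 1)
    (π : T → ℝ)
    (hB : ∀ S : Finset T, (m : ℝ) * ∑ t ∈ S, π t * μ t ≤ 1 - (1 - ∑ t ∈ S, μ t) ^ m) :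
    ∀ (N : ℕ) (v : T → ℝ), (univ.filter fun t => 0 < v t).card ≤ N → (∀ t, 0 ≤ v t) →
    (m:ℝ) * ∑ t, v t * (π t * μ t)
      ≤ ∑ P : Fin m → T, (∏ j, μ (P j)) * univ.sup' univ_nonempty (fun i => v (P i)) := by
  classical
  intro N
  induction N with
  | zero =>
    intro v hcard hv0
    have hz : ∀ t, v t = 0 := by
      intro t
      by_contra h
      have ht : t ∈ univ.filter fun t => 0 < v t := by
        simp only [mem_filter, mem_univ, true_and]
        exact lt_of_le_of_ne (hv0 t) (Ne.symm h)
      have := Finset.card_pos.2 ⟨t, ht⟩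
      omega
    have h1 : ∑ t, v t * (π t * μ t) = 0 :=
      Finset.sum_eq_zero fun t _ => by rw [hz t, zero_mul]
    have h2 : ∀ P : Fin m → T,
        univ.sup' univ_nonempty (fun i => v (P i)) = 0 := by
      intro P
      rw [show (fun i : Fin m => v (P i)) = fun _ => (0:ℝ) from funext fun i => hz (P i)]
      exact Finset.sup'_const _ _
    rw [h1, mul_zero]
    rw [Finset.sum_congr rfl fun P _ => by rw [h2 P, mul_zero]]
    rw [Finset.sum_const, smul_zero]
  | succ N ih =>
    intro v hcard hv0
    set S : Finset T := univ.filter fun t => 0 < v t with hS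
    by_cases hSne : S.Nonempty
    case neg =>
      refine ih v ?_ hv0
      rw [← hS, Finset.not_nonempty_iff_eq_empty.1 hSne]
      simp
    case pos =>
    set α : ℝ := S.inf' hSne v with hα
    have hα0 : 0 < α := by
      rw [hα]
      rw [Finset.lt_inf'_iff]
      intro t ht
      exact (mem_filter.1 ht).2
    have hαle : ∀ t ∈ S, α ≤ v t := fun t ht => Finset.inf'_le v ht
    obtain ⟨t₀, ht₀S, ht₀⟩ := Finset.exists_mem_eq_inf' hSne v
    set v' : T → ℝ := fun t => if 0 < v t then v t - α else 0 with hv'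
    have hv'0 : ∀ t, 0 ≤ v' t := by
      intro t
      rw [hv']
      dsimp only
      split_ifs with h
      · exact sub_nonneg.2 (hαle t (by simp [hS, h]))
      · exact le_refl 0
    have hv'card : (univ.filter fun t => 0 < v' t).card ≤ N := by
      have hsub : (univ.filter fun t => 0 < v' t) ⊆ S.erase t₀ := by
        intro t ht
        have ht' : 0 < v' t := (mem_filter.1 ht).2
        have htv : 0 < v t := by
          by_contra h
          rw [hv'] at ht'
          simp only [if_neg h] at ht'
          exact lt_irrefl 0 ht'
        refine Finset.mem_erase.2 ⟨?_, by simp [hS, htv]⟩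
        rintro rfl
        rw [hv'] at ht'
        simp only [if_pos htv] at ht'
        rw [hα, ht₀] at ht'
        linarith
      calc (univ.filter fun t => 0 < v' t).card ≤ (S.erase t₀).card :=
            Finset.card_le_card hsub
        _ = S.card - 1 := Finset.card_erase_of_mem ht₀S
        _ ≤ N := by omega
    -- decomposition of v
    have hdec : ∀ t, v t = v' t + α * (if t ∈ S then 1 else 0) := by
      intro t
      by_cases h : 0 < v t
      · rw [hv']
        simp only [if_pos h, if_pos (show t ∈ S by simp [hS, h])]
        ring
      · have hv0t : v t = 0 := le_antisymm (not_lt.1 h) (hv0 t)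
        rw [hv']
        simp only [if_neg h, if_neg (show t ∉ S by simp [hS, h])]
        rw [hv0t]; ring
    -- sup decomposition
    have hsupdec : ∀ P : Fin m → T,
        univ.sup' univ_nonempty (fun i => v (P i))
          = univ.sup' univ_nonempty (fun i => v' (P i))
            + α * (if ∃ i, P i ∈ S then 1 else 0) := by
      intro P
      by_cases hE : ∃ i, P i ∈ S
      · rw [if_pos hE, mul_one]
        obtain ⟨i₀, hi₀⟩ := hE
        set M : ℝ := univ.sup' univ_nonempty (fun i => v (P i)) with hM
        have hMα : α ≤ M :=
          le_trans (hαle _ hi₀) (Finset.le_sup' (fun i => v (P i)) (mem_univ i₀))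
        have hle : univ.sup' univ_nonempty (fun i => v' (P i)) ≤ M - α := by
          refine Finset.sup'_le _ _ fun i _ => ?_
          rw [hv']
          dsimp only
          split_ifs with h
          · exact sub_le_sub_right (Finset.le_sup' (fun i => v (P i)) (mem_univ i)) α
          · linarith
        have hge : M - α ≤ univ.sup' univ_nonempty (fun i => v' (P i)) := by
          obtain ⟨i₁, _, hi₁⟩ := Finset.exists_mem_eq_sup' univ_nonempty (fun i => v (P i))
          have hvpos : 0 < v (P i₁) := by rw [← hi₁]; linarith
          have : v' (P i₁) = M - α := by
            rw [hv']; simp only [if_pos hvpos]; rw [hM, hi₁]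
          rw [← this]
          exact Finset.le_sup' (fun i => v' (P i)) (mem_univ i₁)
        linarith
      · rw [if_neg hE, mul_zero, add_zero]
        push_neg at hE
        have h1 : ∀ i : Fin m, v (P i) = 0 := by
          intro i
          have : ¬ 0 < v (P i) := fun h => hE i (by simp [hS, h])
          exact le_antisymm (not_lt.1 this) (hv0 _)
        have h2 : ∀ i : Fin m, v' (P i) = 0 := by
          intro i
          rw [hv']
          simp [h1 i]
        rw [show (fun i : Fin m => v (P i)) = fun i => v' (P i) from
          funext fun i => by rw [h1 i, h2 i]]
    -- put together
    have hL : (m:ℝ) * ∑ t, v t * (π t * μ t)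
        = (m:ℝ) * ∑ t, v' t * (π t * μ t) + α * ((m:ℝ) * ∑ t ∈ S, π t * μ t) := by
      have : ∑ t, v t * (π t * μ t)
          = ∑ t, (v' t * (π t * μ t) + α * (if t ∈ S then π t * μ t else 0)) := by
        refine Finset.sum_congr rfl fun t _ => ?_
        rw [hdec t]
        split_ifs <;> ring
      rw [this, Finset.sum_add_distrib, ← Finset.mul_sum, Finset.sum_ite_mem, univ_inter]
      ring
    have hRd : ∑ P : Fin m → T, (∏ j, μ (P j)) * univ.sup' univ_nonempty (fun i => v (P i))
        = ∑ P : Fin m → T, (∏ j, μ (P j)) * univ.sup' univ_nonempty (fun i => v' (P i))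
          + α * (1 - (1 - ∑ t ∈ S, μ t) ^ m) := by
      have : ∀ P : Fin m → T,
          (∏ j, μ (P j)) * univ.sup' univ_nonempty (fun i => v (P i))
            = (∏ j, μ (P j)) * univ.sup' univ_nonempty (fun i => v' (P i))
              + α * (if ∃ i, P i ∈ S then (∏ j, μ (P j)) else 0) := by
        intro P
        rw [hsupdec P]
        split_ifs <;> ring
      rw [Finset.sum_congr rfl fun P _ => this P, Finset.sum_add_distrib, ← Finset.mul_sum,
        sum_ite_exists_mem μ hμ1 S]
    have h1 := ih v' hv'card hv'0
    have h2 := hB S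
    rw [hL, hRd]
    have h3 : α * ((m:ℝ) * ∑ t ∈ S, π t * μ t) ≤ α * (1 - (1 - ∑ t ∈ S, μ t) ^ m) :=
      mul_le_mul_of_nonneg_left h2 (le_of_lt hα0)
    linarith

lemma layer [Nonempty (Fin m)] (μ : T → ℝ) (hμ0 : ∀ t, 0 ≤ μ t) (hμ1 : ∑ t, μ t = 1)
    (π : T → ℝ)
    (hB : ∀ S : Finset T, (m : ℝ) * ∑ t ∈ S, π t * μ t ≤ 1 - (1 - ∑ t ∈ S, μ t) ^ m) :
    ∀ (N : ℕ) (v : T → ℝ), (univ.filter fun t => 0 < v t).card ≤ N → (∀ t, 0 ≤ v t) →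
    (m:ℝ) * ∑ t, v t * (π t * μ t)
      ≤ ∑ P : Fin m → T, (∏ j, μ (P j)) * vsup v P :=
  layer_sup μ hμ0 hμ1 π hB

open Classical in
noncomputable def ext (μ π : T → ℝ) (ψ : (Fin m → T) → Fin m → ℝ)
    (P : Fin m → T) (i : Fin m) : ℝ :=
  if μ (P i) = 0 then (if ∀ j, j ≠ i → μ (P j) ≠ 0 then π (P i) else 0)
  else (if ∀ j, μ (P j) ≠ 0 then ψ P i else 0)

lemma ext_nonneg (μ π : T → ℝ) (ψ : (Fin m → T) → Fin m → ℝ)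
    (hπ0 : ∀ t, 0 ≤ π t) (hψ0 : ∀ P i, 0 ≤ ψ P i) (P : Fin m → T) (i : Fin m) :
    0 ≤ ext μ π ψ P i := by
  unfold ext
  split_ifs
  · exact hπ0 _
  · exact le_refl 0
  · exact hψ0 P i
  · exact le_refl 0

lemma ext_sum_le (μ π : T → ℝ) (ψ : (Fin m → T) → Fin m → ℝ)
    (hπ0 : ∀ t, 0 ≤ π t) (hπ1 : ∀ t, π t ≤ 1)
    (hψ0 : ∀ P i, 0 ≤ ψ P i) (hψ1 : ∀ P, ∑ i, ψ P i ≤ 1) (P : Fin m → T) :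
    ∑ i, ext μ π ψ P i ≤ 1 := by
  classical
  by_cases hall : ∀ j, μ (P j) ≠ 0
  · have h1 : ∀ i : Fin m, ext μ π ψ P i = ψ P i := by
      intro i
      unfold ext
      rw [if_neg (hall i), if_pos hall]
    rw [Finset.sum_congr rfl fun i _ => h1 i]
    exact hψ1 P
  · push_neg at hall
    obtain ⟨k, hk⟩ := hall
    have h2 : ∀ i ∈ univ, i ≠ k → ext μ π ψ P i = 0 := by
      intro i _ hik
      unfold ext
      by_cases hi : μ (P i) = 0
      · rw [if_pos hi, if_neg]
        push_neg
        exact ⟨k, Ne.symm hik, hk⟩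
      · rw [if_neg hi, if_neg]
        push_neg
        exact ⟨k, hk⟩
    rw [Finset.sum_eq_single k h2 (fun h => absurd (mem_univ k) h)]
    unfold ext
    rw [if_pos hk]
    split_ifs
    · exact hπ1 _
    · exact zero_le_one

lemma ext_R (μ π : T → ℝ) (hμ1 : ∑ t, μ t = 1) (ψ : (Fin m → T) → Fin m → ℝ)
    (i : Fin m) (A : T) :
    R μ (ext μ π ψ) i A = if μ A = 0 then π A else R μ ψ i A := by
  classical
  by_cases hA : μ A = 0
  · rw [if_pos hA]
    unfold R
    have h1 : ∀ P : Fin m → T,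
        (if P i = A then (∏ j ∈ univ.erase i, μ (P j)) * ext μ π ψ P i else 0)
          = (if P i = A then (∏ j ∈ univ.erase i, μ (P j)) else 0) * π A := by
      intro P
      by_cases hPi : P i = A
      · rw [if_pos hPi, if_pos hPi]
        by_cases hall : ∀ j, j ≠ i → μ (P j) ≠ 0
        · unfold ext
          rw [if_pos (by rw [hPi]; exact hA), if_pos hall, hPi]
        · push_neg at hall
          obtain ⟨j, hji, hj⟩ := hall
          rw [Finset.prod_eq_zero (Finset.mem_erase.2 ⟨hji, mem_univ j⟩) hj]
          ring
      · rw [if_neg hPi, if_neg hPi, zero_mul]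
    rw [Finset.sum_congr rfl fun P _ => h1 P, ← Finset.sum_mul, sum_cond_prod μ hμ1 i A,
      one_mul]
  · rw [if_neg hA]
    unfold R
    refine Finset.sum_congr rfl fun P _ => ?_
    by_cases hPi : P i = A
    · rw [if_pos hPi, if_pos hPi]
      by_cases hall : ∀ j, j ≠ i → μ (P j) ≠ 0
      · have hall' : ∀ j, μ (P j) ≠ 0 := by
          intro j
          by_cases hji : j = i
          · rw [hji, hPi]; exact hA
          · exact hall j hji
        unfold ext
        rw [if_neg (hall' i), if_pos hall']
      · push_neg at hall
        obtain ⟨j, hji, hj⟩ := hall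
        rw [Finset.prod_eq_zero (Finset.mem_erase.2 ⟨hji, mem_univ j⟩) hj]
        ring
    · rw [if_neg hPi, if_neg hPi]

lemma R_psi_zero (μ : T → ℝ) (v : T → ℝ) (i : Fin m) (A : T) (hA : v A = 0) :
    R μ (psi v) i A = 0 := by
  refine Finset.sum_eq_zero fun P _ => ?_
  by_cases h : P i = A
  · rw [if_pos h, psi_zero_of v P i (by rw [h]; exact hA), mul_zero]
  · rw [if_neg h]

lemma psi_stepA (μ : T → ℝ) (v : T → ℝ) (i : Fin m) :
    ∑ A, v A * μ A * R μ (psi v) i A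
      = ∑ P : Fin m → T, (∏ j, μ (P j)) * (v (P i) * psi v P i) := by
  classical
  calc ∑ A, v A * μ A * R μ (psi v) i A
      = ∑ A, ∑ P : Fin m → T,
          (if P i = A then v A * μ A * ((∏ j ∈ univ.erase i, μ (P j)) * psi v P i) else 0) := by
        refine Finset.sum_congr rfl fun A _ => ?_
        unfold R
        rw [Finset.mul_sum]
        exact Finset.sum_congr rfl fun P _ => by rw [mul_ite, mul_zero]
    _ = ∑ P : Fin m → T, ∑ A,
          (if P i = A then v A * μ A * ((∏ j ∈ univ.erase i, μ (P j)) * psi v P i) else 0) :=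
        Finset.sum_comm
    _ = ∑ P : Fin m → T, (∏ j, μ (P j)) * (v (P i) * psi v P i) := by
        refine Finset.sum_congr rfl fun P _ => ?_
        rw [Finset.sum_ite_eq univ (P i)
          (fun A => v A * μ A * ((∏ j ∈ univ.erase i, μ (P j)) * psi v P i)),
          if_pos (mem_univ _), ← Finset.mul_prod_erase univ (fun j => μ (P j)) (mem_univ i)]
        ring

lemma psi_stepB (μ : T → ℝ) (v : T → ℝ) (i k : Fin m) :
    ∑ P : Fin m → T, (∏ j, μ (P j)) * (v (P i) * psi v P i)
      = ∑ P : Fin m → T, (∏ j, μ (P j)) * (v (P k) * psi v P k) := by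
  classical
  set σ : Equiv.Perm (Fin m) := Equiv.swap i k with hσ
  have hbij : Function.Bijective (fun Q : Fin m → T => Q ∘ σ) := by
    constructor
    · intro a b h
      funext x
      have := congrFun h (σ.symm x)
      simpa using this
    · intro Q
      exact ⟨Q ∘ σ.symm, by funext x; simp⟩
  refine (Fintype.sum_bijective _ hbij _ _ fun Q => ?_).symm
  have h1 : (Q ∘ σ) i = Q k := by simp [hσ, Equiv.swap_apply_left]
  have h2 : ∏ j, μ ((Q ∘ σ) j) = ∏ j, μ (Q j) := Equiv.prod_comp σ fun j => μ (Q j)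
  have h3 : psi v (Q ∘ σ) i = psi v Q k := by
    rw [psi_symm v Q σ i]
    congr 1
    simp [hσ, Equiv.swap_apply_left]
  rw [h1, h2, h3]

lemma psi_value (μ : T → ℝ) (v : T → ℝ) (hv0 : ∀ t, 0 ≤ v t) (i₀ : Fin m) :
    (m:ℝ) * ∑ A, v A * μ A * R μ (psi v) i₀ A
      = ∑ P : Fin m → T, (∏ j, μ (P j)) * vsup v P := by
  classical
  calc (m:ℝ) * ∑ A, v A * μ A * R μ (psi v) i₀ A
      = ∑ _i : Fin m, ∑ A, v A * μ A * R μ (psi v) i₀ A := by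
        rw [Finset.sum_const, card_univ, Fintype.card_fin, nsmul_eq_mul]
    _ = ∑ i : Fin m, ∑ P : Fin m → T, (∏ j, μ (P j)) * (v (P i) * psi v P i) := by
        refine Finset.sum_congr rfl fun i _ => ?_
        rw [psi_stepA μ v i₀, psi_stepB μ v i₀ i]
    _ = ∑ P : Fin m → T, ∑ i : Fin m, (∏ j, μ (P j)) * (v (P i) * psi v P i) :=
        Finset.sum_comm
    _ = ∑ P : Fin m → T, (∏ j, μ (P j)) * vsup v P := by
        refine Finset.sum_congr rfl fun P _ => ?_
        rw [← Finset.mul_sum, psi_dot v hv0 P]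

end Border

open Finset Border

/-- Border's theorem: for `m` i.i.d. bidders with types drawn from `μ` on a finite type
space `T` and a single item, a bidder-symmetric reduced form `π : T → [0,1]` is feasible
(i.e. induced by some ex-post allocation rule `φ` that never over-allocates the item)
if and only if for every subset `S ⊆ T`,
`m · Σ_{t∈S} π(t)·Pr[t] ≤ 1 − (1 − Pr[t ∈ S])^m`. -/
theorem stmt_1 {T : Type*} [Fintype T] [DecidableEq T]
    (m : ℕ) (hm : 0 < m)
    (μ : T → ℝ) (hμ0 : ∀ t, 0 ≤ μ t) (hμ1 : ∑ t, μ t = 1)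
    (π : T → ℝ) (hπ0 : ∀ t, 0 ≤ π t) (hπ1 : ∀ t, π t ≤ 1) :
    (∃ φ : (Fin m → T) → Fin m → ℝ,
        (∀ P i, 0 ≤ φ P i) ∧ (∀ P, ∑ i, φ P i ≤ 1) ∧
        (∀ (i : Fin m) (A : T),
          (∑ P : Fin m → T,
            if P i = A then (∏ j ∈ Finset.univ.erase i, μ (P j)) * φ P i else 0) = π A)) ↔
    (∀ S : Finset T,
      (m : ℝ) * ∑ t ∈ S, π t * μ t ≤ 1 - (1 - ∑ t ∈ S, μ t) ^ m) := by
  classical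
  constructor
  · rintro ⟨φ, h0, h1, h2⟩ S
    exact easy_direction μ hμ0 hμ1 π φ h0 h1 h2 S
  · intro hB
    haveI : Nonempty (Fin m) := ⟨⟨0, hm⟩⟩
    set i₀ : Fin m := ⟨0, hm⟩ with hi₀
    set K : Set ((Fin m → T) → Fin m → ℝ) :=
      {φ | (∀ P i, 0 ≤ φ P i) ∧ (∀ P, ∑ i, φ P i ≤ 1) ∧
        ∀ (i : Fin m) (A : T), R μ φ i A = R μ φ i₀ A} with hK
    set Q : Set (T → ℝ) := (fun φ A => R μ φ i₀ A) '' K with hQ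
    by_cases hmem : π ∈ Q
    · obtain ⟨φ, ⟨h0, h1, h2⟩, hφ⟩ := hmem
      refine ⟨φ, h0, h1, fun i A => ?_⟩
      show R μ φ i A = π A
      rw [h2 i A]
      exact congrFun hφ A
    · exfalso
      have hRcont : ∀ (i : Fin m) (A : T),
          Continuous fun φ : (Fin m → T) → Fin m → ℝ => R μ φ i A := by
        intro i A
        unfold R
        refine continuous_finset_sum _ fun P _ => ?_
        by_cases h : P i = A
        · simp only [if_pos h]
          exact continuous_const.mul ((continuous_apply i).comp (continuous_apply P))
        · simp only [if_neg h]
          exact continuous_const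
      have hR_comb : ∀ (a b : ℝ) (φ ψ : (Fin m → T) → Fin m → ℝ) (i : Fin m) (A : T),
          R μ (a • φ + b • ψ) i A = a * R μ φ i A + b * R μ ψ i A := by
        intro a b φ ψ i A
        unfold R
        rw [Finset.mul_sum, Finset.mul_sum, ← Finset.sum_add_distrib]
        refine Finset.sum_congr rfl fun P _ => ?_
        by_cases h : P i = A
        · simp only [if_pos h, Pi.add_apply, Pi.smul_apply, smul_eq_mul]
          ring
        · simp only [if_neg h, mul_zero, add_zero]
      have hQconvex : Convex ℝ Q := by
        rintro x ⟨φ, ⟨hφ0, hφ1, hφ2⟩, hφx⟩ y ⟨ψ, ⟨hψ0, hψ1, hψ2⟩, hψy⟩ a b ha hb hab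
        refine ⟨a • φ + b • ψ, ⟨?_, ?_, ?_⟩, ?_⟩
        · intro P i
          simp only [Pi.add_apply, Pi.smul_apply, smul_eq_mul]
          exact add_nonneg (mul_nonneg ha (hφ0 P i)) (mul_nonneg hb (hψ0 P i))
        · intro P
          have he : ∑ i, (a • φ + b • ψ) P i = a * ∑ i, φ P i + b * ∑ i, ψ P i := by
            rw [Finset.mul_sum, Finset.mul_sum, ← Finset.sum_add_distrib]
            exact Finset.sum_congr rfl fun i _ => by
              simp only [Pi.add_apply, Pi.smul_apply, smul_eq_mul]
          rw [he]
          calc a * ∑ i, φ P i + b * ∑ i, ψ P i ≤ a * 1 + b * 1 :=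
                add_le_add (mul_le_mul_of_nonneg_left (hφ1 P) ha)
                  (mul_le_mul_of_nonneg_left (hψ1 P) hb)
            _ = 1 := by rw [mul_one, mul_one, hab]
        · intro i A
          rw [hR_comb, hR_comb, hφ2 i A, hψ2 i A]
        · funext A
          simp only [Pi.add_apply, Pi.smul_apply, smul_eq_mul]
          rw [hR_comb, show R μ φ i₀ A = x A from congrFun hφx A,
            show R μ ψ i₀ A = y A from congrFun hψy A]
      have hKclosed : IsClosed K := by
        have hKeq : K = (⋂ (P : Fin m → T), ⋂ (i : Fin m),
              {φ : (Fin m → T) → Fin m → ℝ | 0 ≤ φ P i})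
            ∩ ((⋂ (P : Fin m → T), {φ : (Fin m → T) → Fin m → ℝ | ∑ i, φ P i ≤ 1})
              ∩ (⋂ (i : Fin m), ⋂ (A : T),
                {φ : (Fin m → T) → Fin m → ℝ | R μ φ i A = R μ φ i₀ A})) := by
          ext φ
          simp only [hK, Set.mem_setOf_eq, Set.mem_inter_iff, Set.mem_iInter]
        rw [hKeq]
        refine IsClosed.inter ?_ (IsClosed.inter ?_ ?_)
        · refine isClosed_iInter fun P => isClosed_iInter fun i => ?_
          exact isClosed_le continuous_const ((continuous_apply i).comp (continuous_apply P))
        · refine isClosed_iInter fun P => ?_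
          exact isClosed_le (continuous_finset_sum _ fun i _ =>
            (continuous_apply i).comp (continuous_apply P)) continuous_const
        · refine isClosed_iInter fun i => isClosed_iInter fun A => ?_
          exact isClosed_eq (hRcont i A) (hRcont i₀ A)
      have hKsub : K ⊆ Set.Icc (0 : (Fin m → T) → Fin m → ℝ) 1 := by
        rintro φ ⟨h0, h1, _⟩
        constructor
        · intro P
          intro i
          simpa using h0 P i
        · intro P
          intro i
          have : φ P i ≤ ∑ j, φ P j :=
            Finset.single_le_sum (fun j _ => h0 P j) (mem_univ i)
          simpa using le_trans this (h1 P)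
      have hKcpt : IsCompact K :=
        IsCompact.of_isClosed_subset isCompact_Icc hKclosed hKsub
      have hQcpt : IsCompact Q := hKcpt.image (continuous_pi fun A => hRcont i₀ A)
      obtain ⟨f, u, hfK, hfπ⟩ :=
        geometric_hahn_banach_closed_point hQconvex hQcpt.isClosed hmem
      set c : T → ℝ := fun A => f (fun j => if A = j then (1:ℝ) else 0) with hc
      have hfeval : ∀ x : T → ℝ, f x = ∑ A, x A * c A := by
        intro x
        conv_lhs => rw [pi_eq_sum_univ x]
        rw [map_sum]
        refine Finset.sum_congr rfl fun A _ => ?_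
        rw [map_smul, smul_eq_mul, hc]
      set v : T → ℝ := fun A => if μ A = 0 then 0 else max (c A) 0 / μ A with hv
      have hv0 : ∀ t, 0 ≤ v t := by
        intro t
        rw [hv]
        dsimp only
        split_ifs with h
        · exact le_refl 0
        · exact div_nonneg (le_max_right _ _) (hμ0 t)
      have hcmax : ∀ A, μ A ≠ 0 → v A * μ A = max (c A) 0 := by
        intro A h
        rw [hv]
        dsimp only
        rw [if_neg h]
        exact div_mul_cancel₀ _ h
      have hψ0 : ∀ (P : Fin m → T) (i : Fin m), 0 ≤ psi v P i := psi_nonneg v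
      set x' : T → ℝ := fun A => if μ A = 0 then π A else R μ (psi v) i₀ A with hx'
      have hx'Q : x' ∈ Q := by
        refine ⟨ext μ π (psi v),
          ⟨ext_nonneg μ π (psi v) hπ0 hψ0,
            fun P => ext_sum_le μ π (psi v) hπ0 hπ1 hψ0 (psi_sum_le v) P, ?_⟩, ?_⟩
        · intro i A
          rw [ext_R μ π hμ1 (psi v) i A, ext_R μ π hμ1 (psi v) i₀ A]
          by_cases hA : μ A = 0
          · rw [if_pos hA, if_pos hA]
          · rw [if_neg hA, if_neg hA]
            exact R_psi_comm μ v i i₀ A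
        · funext A
          show R μ (ext μ π (psi v)) i₀ A = x' A
          rw [ext_R μ π hμ1 (psi v) i₀ A, hx']
      have hlt : f x' < f π := lt_trans (hfK x' hx'Q) hfπ
      -- chain of inequalities
      have key1 : ∀ A, (if μ A = 0 then (0:ℝ) else π A * c A) ≤ v A * (π A * μ A) := by
        intro A
        by_cases hA : μ A = 0
        · rw [if_pos hA]
          have hvA : v A = 0 := by rw [hv]; simp [hA]
          rw [hvA, zero_mul]
        · rw [if_neg hA]
          have he : v A * (π A * μ A) = max (c A) 0 * π A := by
            calc v A * (π A * μ A) = v A * μ A * π A := by ring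
              _ = max (c A) 0 * π A := by rw [hcmax A hA]
          rw [he]
          calc π A * c A ≤ π A * max (c A) 0 :=
                mul_le_mul_of_nonneg_left (le_max_left _ _) (hπ0 A)
            _ = max (c A) 0 * π A := mul_comm _ _
      have key2 : ∀ A, (if μ A = 0 then (0:ℝ) else R μ (psi v) i₀ A * c A)
          = v A * μ A * R μ (psi v) i₀ A := by
        intro A
        by_cases hA : μ A = 0
        · rw [if_pos hA]
          have hvA : v A = 0 := by rw [hv]; simp [hA]
          rw [hvA]
          ring
        · rw [if_neg hA, hcmax A hA]
          by_cases hc0 : 0 ≤ c A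
          · rw [max_eq_left hc0]
            ring
          · have hmax : max (c A) 0 = 0 := max_eq_right (le_of_lt (not_le.1 hc0))
            have hvA : v A = 0 := by
              rw [hv]
              dsimp only
              rw [if_neg hA, hmax, zero_div]
            rw [hmax, R_psi_zero μ v i₀ A hvA]
            ring
      have hdiff : f π - f x'
          = ∑ A, ((if μ A = 0 then (0:ℝ) else π A * c A)
            - (if μ A = 0 then (0:ℝ) else R μ (psi v) i₀ A * c A)) := by
        rw [hfeval π, hfeval x', ← Finset.sum_sub_distrib]
        refine Finset.sum_congr rfl fun A _ => ?_
        rw [hx']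
        dsimp only
        by_cases hA : μ A = 0
        · rw [if_pos hA, if_pos hA, if_pos hA]
          ring
        · rw [if_neg hA, if_neg hA, if_neg hA]
      have hm' : (0:ℝ) < m := by exact_mod_cast hm
      have hM1 : (m:ℝ) * ∑ A, (if μ A = 0 then (0:ℝ) else π A * c A)
          ≤ ∑ P : Fin m → T, (∏ j, μ (P j)) * vsup v P := by
        calc (m:ℝ) * ∑ A, (if μ A = 0 then (0:ℝ) else π A * c A)
            ≤ (m:ℝ) * ∑ A, v A * (π A * μ A) :=
              mul_le_mul_of_nonneg_left (Finset.sum_le_sum fun A _ => key1 A) (le_of_lt hm')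
          _ ≤ ∑ P : Fin m → T, (∏ j, μ (P j)) * vsup v P :=
              layer μ hμ0 hμ1 π hB (univ.filter fun t => 0 < v t).card v (le_refl _) hv0
      have hM2 : (m:ℝ) * ∑ A, (if μ A = 0 then (0:ℝ) else R μ (psi v) i₀ A * c A)
          = ∑ P : Fin m → T, (∏ j, μ (P j)) * vsup v P := by
        rw [Finset.sum_congr rfl fun A _ => key2 A]
        exact psi_value μ v hv0 i₀
      have hfin : f π - f x' ≤ 0 := by
        rw [hdiff, Finset.sum_sub_distrib]
        have := hM2 ▸ hM1
        nlinarith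
      linarith
end

section
/- For m i.i.d. bidders with finite type space T, a bidder-symmetric reduced form π is feasible if and only if for every x, the threshold set S_x = {A ∈ T : π(A) > x} satisfies Border's inequality m · Σ_{t∈S_x} π(t)·Pr[t] ≤ 1 − (1 − Pr[t ∈ S_x])^m. Equivalently, it suffices to check Border's condition only on the (at most |T|) sets of the form S_x. -/
open Finset


lemma tangent_pow {a b : ℝ} (ha : 0 ≤ a) (hb : 0 ≤ b) {m : ℕ} (hm : 0 < m) :
    a ^ m + m * a ^ (m - 1) * (b - a) ≤ b ^ m := by
  rcases eq_or_lt_of_le ha with h0 | h0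
  · subst h0
    rcases Nat.lt_or_ge 1 m with h1 | h1
    · rw [zero_pow (by omega), zero_pow (by omega)]
      simpa using pow_nonneg hb m
    · interval_cases m
      simp
  · have key := one_add_mul_le_pow (a := b / a - 1) (by nlinarith [div_nonneg hb h0.le]) m
    have h1 : (1 : ℝ) + (b / a - 1) = b / a := by ring
    rw [h1] at key
    have h2 := mul_le_mul_of_nonneg_left key (le_of_lt (pow_pos h0 m))
    have ham : a ^ m = a ^ (m - 1) * a := by
      rw [← pow_succ]; congr 1; omega
    have hane : a ≠ 0 := h0.ne'
    calc a ^ m + (m : ℝ) * a ^ (m - 1) * (b - a)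
        = a ^ m * (1 + m * (b / a - 1)) := by
          rw [ham]; field_simp
      _ ≤ a ^ m * (b / a) ^ m := h2
      _ = b ^ m := by rw [div_pow]; field_simp

lemma sum_pi_prod {T : Type*} [Fintype T] [DecidableEq T] (m : ℕ) (μ : T → ℝ) (s : Finset T) :
    ∑ P ∈ Fintype.piFinset (fun _ : Fin m => s), ∏ j, μ (P j) = (∑ t ∈ s, μ t) ^ m :=
  (Finset.sum_pow' s μ m).symm

lemma sum_pi_prod' {T : Type*} [Fintype T] [DecidableEq T] (m : ℕ) (μ : T → ℝ) (s : Finset T) :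
    ∑ P ∈ Fintype.piFinset (fun _ : Fin m => s), ∏ j, μ (P j) = (∑ t ∈ s, μ t) ^ m :=
  (Finset.sum_pow' s μ m).symm

lemma border_forward {T : Type*} [Fintype T] [DecidableEq T] {m : ℕ}
    (μ : T → ℝ) (hμ0 : ∀ t, 0 ≤ μ t) (hμ1 : ∑ t, μ t = 1)
    (π : T → ℝ)
    (φ : (Fin m → T) → Fin m → ℝ)
    (h0 : ∀ P i, 0 ≤ φ P i) (h1 : ∀ P, ∑ i, φ P i ≤ 1)
    (hI : ∀ (i : Fin m) (A : T),
      (∑ P : Fin m → T, if P i = A then (∏ j ∈ Finset.univ.erase i, μ (P j)) * φ P i else 0) = π A)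
    (S : Finset T) :
    (m : ℝ) * ∑ t ∈ S, π t * μ t ≤ 1 - (1 - ∑ t ∈ S, μ t) ^ m := by
  classical
  have hfull : ∀ P : Fin m → T, 0 ≤ ∏ j, μ (P j) :=
    fun P => Finset.prod_nonneg fun j _ => hμ0 _
  have step1 : ∀ i : Fin m, ∑ t ∈ S, π t * μ t
      = ∑ P : Fin m → T, (if P i ∈ S then (∏ j, μ (P j)) * φ P i else 0) := by
    intro i
    have h : ∀ t ∈ S, π t * μ t
        = ∑ P : Fin m → T, (if P i = t then (∏ j, μ (P j)) * φ P i else 0) := by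
      intro t _
      rw [← hI i t, Finset.sum_mul]
      refine Finset.sum_congr rfl fun P _ => ?_
      by_cases h : P i = t
      · simp only [h, if_true]
        subst h
        rw [← Finset.mul_prod_erase Finset.univ (fun j => μ (P j)) (Finset.mem_univ i)]
        ring
      · simp [h]
    rw [Finset.sum_congr rfl h, Finset.sum_comm]
    refine Finset.sum_congr rfl fun P _ => ?_
    exact Finset.sum_ite_eq S (P i) (fun _ => (∏ j, μ (P j)) * φ P i)
  have step2 : (m : ℝ) * ∑ t ∈ S, π t * μ t
      ≤ ∑ P : Fin m → T, (if ∃ i, P i ∈ S then (∏ j, μ (P j)) else 0) := by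
    calc (m : ℝ) * ∑ t ∈ S, π t * μ t
        = ∑ _i : Fin m, ∑ t ∈ S, π t * μ t := by
          rw [Finset.sum_const, card_univ, Fintype.card_fin, nsmul_eq_mul]
      _ = ∑ i : Fin m, ∑ P : Fin m → T, (if P i ∈ S then (∏ j, μ (P j)) * φ P i else 0) := by
          exact Finset.sum_congr rfl fun i _ => step1 i
      _ = ∑ P : Fin m → T, ∑ i : Fin m, (if P i ∈ S then (∏ j, μ (P j)) * φ P i else 0) :=
          Finset.sum_comm
      _ ≤ ∑ P : Fin m → T, (if ∃ i, P i ∈ S then (∏ j, μ (P j)) else 0) := by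
          refine Finset.sum_le_sum fun P _ => ?_
          by_cases hex : ∃ i, P i ∈ S
          · rw [if_pos hex]
            calc ∑ i : Fin m, (if P i ∈ S then (∏ j, μ (P j)) * φ P i else 0)
                ≤ ∑ i : Fin m, (∏ j, μ (P j)) * φ P i := by
                  refine Finset.sum_le_sum fun i _ => ?_
                  split
                  · exact le_refl _
                  · exact mul_nonneg (hfull P) (h0 P i)
              _ = (∏ j, μ (P j)) * ∑ i, φ P i := by rw [Finset.mul_sum]
              _ ≤ (∏ j, μ (P j)) * 1 := by
                  exact mul_le_mul_of_nonneg_left (h1 P) (hfull P)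
              _ = ∏ j, μ (P j) := mul_one _
          · push_neg at hex
            rw [if_neg (by push_neg; exact hex)]
            rw [Finset.sum_congr rfl (fun i _ => if_neg (by simpa using hex i))]
            simp
  refine step2.trans ?_
  have hsplit : ∀ P : Fin m → T,
      (if ∃ i, P i ∈ S then (∏ j, μ (P j)) else 0)
      = (∏ j, μ (P j)) - (if ∀ i, P i ∈ Sᶜ then (∏ j, μ (P j)) else 0) := by
    intro P
    by_cases hex : ∃ i, P i ∈ S
    · rw [if_pos hex, if_neg, sub_zero]
      obtain ⟨i, hi⟩ := hex
      intro hall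
      exact (Finset.mem_compl.mp (hall i)) hi
    · rw [if_neg hex, if_pos, sub_self]
      push_neg at hex
      exact fun i => Finset.mem_compl.mpr (hex i)
  rw [Finset.sum_congr rfl fun P _ => hsplit P, Finset.sum_sub_distrib]
  have hall : ∑ P : Fin m → T, ∏ j, μ (P j) = 1 := by
    have := sum_pi_prod' m μ (Finset.univ : Finset T)
    rw [Fintype.piFinset_univ] at this
    rw [this, hμ1, one_pow]
  have hcmem : ∀ P : Fin m → T, (∀ i, P i ∈ Sᶜ) ↔ P ∈ Fintype.piFinset (fun _ : Fin m => Sᶜ) := by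
    intro P; simp [Fintype.mem_piFinset]
  have hc : ∑ P : Fin m → T, (if ∀ i, P i ∈ Sᶜ then (∏ j, μ (P j)) else 0)
      = (1 - ∑ t ∈ S, μ t) ^ m := by
    calc ∑ P : Fin m → T, (if ∀ i, P i ∈ Sᶜ then (∏ j, μ (P j)) else 0)
        = ∑ P : Fin m → T, (if P ∈ Fintype.piFinset (fun _ : Fin m => Sᶜ) then (∏ j, μ (P j)) else 0) := by
          refine Finset.sum_congr rfl fun P _ => ?_
          rw [if_congr (hcmem P) rfl rfl]
      _ = ∑ P ∈ Fintype.piFinset (fun _ : Fin m => Sᶜ), ∏ j, μ (P j) := by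
          rw [Finset.sum_ite_mem, Finset.univ_inter]
      _ = (∑ t ∈ Sᶜ, μ t) ^ m := sum_pi_prod' m μ Sᶜ
      _ = (1 - ∑ t ∈ S, μ t) ^ m := by
          congr 1
          have := Finset.sum_add_sum_compl S μ
          rw [hμ1] at this
          linarith
  rw [hall, hc]


lemma threshold_to_all {T : Type*} [Fintype T] [DecidableEq T] {m : ℕ} (hm : 0 < m)
    (μ : T → ℝ) (hμ0 : ∀ t, 0 ≤ μ t) (hμ1 : ∑ t, μ t = 1)
    (π : T → ℝ)
    (hb : ∀ x : ℝ,
      (m : ℝ) * ∑ t ∈ Finset.univ.filter (fun t => x < π t), π t * μ t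
        ≤ 1 - (1 - ∑ t ∈ Finset.univ.filter (fun t => x < π t), μ t) ^ m)
    (S : Finset T) :
    (m : ℝ) * ∑ t ∈ S, π t * μ t ≤ 1 - (1 - ∑ t ∈ S, μ t) ^ m := by
  classical
  set s := ∑ t ∈ S, μ t with hs_def
  have hs0 : 0 ≤ s := Finset.sum_nonneg fun t _ => hμ0 t
  have hs1 : s ≤ 1 := by
    rw [← hμ1]
    exact Finset.sum_le_sum_of_subset_of_nonneg (Finset.subset_univ S) fun t _ _ => hμ0 t
  set x := (1 - s) ^ (m - 1) with hx_def
  have hx0 : 0 ≤ x := pow_nonneg (by linarith) _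
  set Sx := Finset.univ.filter (fun t => x < π t) with hSx_def
  set M := ∑ t ∈ Sx, μ t with hM_def
  have hM0 : 0 ≤ M := Finset.sum_nonneg fun t _ => hμ0 t
  have hM1 : M ≤ 1 := by
    rw [← hμ1]
    exact Finset.sum_le_sum_of_subset_of_nonneg (Finset.subset_univ Sx) fun t _ _ => hμ0 t
  -- pointwise rearrangement bound
  have e1 : ∑ t ∈ S ∩ Sx, (π t * μ t) + ∑ t ∈ S \ Sx, (π t * μ t) = ∑ t ∈ S, π t * μ t :=
    Finset.sum_inter_add_sum_sdiff S Sx _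
  have e2 : ∑ t ∈ Sx ∩ S, (π t * μ t) + ∑ t ∈ Sx \ S, (π t * μ t) = ∑ t ∈ Sx, π t * μ t :=
    Finset.sum_inter_add_sum_sdiff Sx S _
  have e3 : ∑ t ∈ S ∩ Sx, μ t + ∑ t ∈ S \ Sx, μ t = s := Finset.sum_inter_add_sum_sdiff S Sx _
  have e4 : ∑ t ∈ Sx ∩ S, μ t + ∑ t ∈ Sx \ S, μ t = M := Finset.sum_inter_add_sum_sdiff Sx S _
  have ecomm : ∑ t ∈ S ∩ Sx, (π t * μ t) = ∑ t ∈ Sx ∩ S, (π t * μ t) := by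
    rw [Finset.inter_comm]
  have ecomm2 : ∑ t ∈ S ∩ Sx, μ t = ∑ t ∈ Sx ∩ S, μ t := by rw [Finset.inter_comm]
  have b1 : ∑ t ∈ S \ Sx, (π t * μ t) ≤ x * ∑ t ∈ S \ Sx, μ t := by
    rw [Finset.mul_sum]
    refine Finset.sum_le_sum fun t ht => ?_
    have h := Finset.mem_sdiff.mp ht
    have hπx : π t ≤ x := by
      by_contra hc
      exact h.2 (Finset.mem_filter.mpr ⟨Finset.mem_univ t, lt_of_not_ge hc⟩)
    exact mul_le_mul_of_nonneg_right hπx (hμ0 t)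
  have b2 : x * ∑ t ∈ Sx \ S, μ t ≤ ∑ t ∈ Sx \ S, (π t * μ t) := by
    rw [Finset.mul_sum]
    refine Finset.sum_le_sum fun t ht => ?_
    have h := Finset.mem_sdiff.mp ht
    have hπx : x ≤ π t := le_of_lt (Finset.mem_filter.mp h.1).2
    exact mul_le_mul_of_nonneg_right hπx (hμ0 t)
  have pointwise : ∑ t ∈ S, π t * μ t ≤ (∑ t ∈ Sx, π t * μ t) + x * (s - M) := by
    nlinarith [b1, b2, e1, e2, e3, e4, ecomm, ecomm2]
  have tangent := tangent_pow (a := 1 - s) (b := 1 - M) (by linarith) (by linarith) hm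
  have hbx := hb x
  rw [← hSx_def, ← hM_def] at hbx
  have hmul : (m : ℝ) * ∑ t ∈ S, π t * μ t
      ≤ (m : ℝ) * (∑ t ∈ Sx, π t * μ t) + (m : ℝ) * x * (s - M) := by
    have hmn : (0:ℝ) ≤ (m:ℝ) := Nat.cast_nonneg m
    nlinarith [pointwise]
  have : (1 - s) ^ m + (m : ℝ) * x * (s - M) ≤ (1 - M) ^ m := by
    have : (1 - M) - (1 - s) = s - M := by ring
    nlinarith [tangent]
  linarith

lemma fold_max_nonneg {ι : Type*} (f : ι → ℝ) (s : Finset ι) : 0 ≤ s.fold max 0 f :=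
  (Finset.le_fold_max _).mpr (Or.inl le_rfl)

lemma le_fold_max' {ι : Type*} (f : ι → ℝ) {s : Finset ι} {i : ι} (hi : i ∈ s) :
    f i ≤ s.fold max 0 f :=
  (Finset.le_fold_max _).mpr (Or.inr ⟨i, hi, le_rfl⟩)

lemma fold_max_mul {ι : Type*} (f : ι → ℝ) (s : Finset ι) {c : ℝ} (hc : 0 ≤ c) :
    s.fold max 0 (fun i => c * f i) = c * s.fold max 0 f := by
  induction s using Finset.cons_induction with
  | empty => simp
  | cons a s ha ih =>
    rw [Finset.fold_cons, Finset.fold_cons, ih, mul_max_of_nonneg _ _ hc]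

lemma key_induction {T : Type*} [Fintype T] [DecidableEq T] {m : ℕ} (hm : 0 < m)
    (μ : T → ℝ) (hμ0 : ∀ t, 0 ≤ μ t)
    (π : T → ℝ) (hπ0 : ∀ t, 0 ≤ π t)
    (hball : ∀ S : Finset T, (m : ℝ) * ∑ t ∈ S, π t * μ t ≤ 1 - (1 - ∑ t ∈ S, μ t) ^ m)
    (Tp : Finset T) (hTp : ∑ t ∈ Tp, μ t = 1) :
    ∀ (q : ℕ) (β : T → ℝ), ((Tp.filter fun A => 0 < β A).image β).card ≤ q →
      (m : ℝ) * ∑ A ∈ Tp, β A * (μ A * π A)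
        ≤ ∑ P ∈ Fintype.piFinset (fun _ : Fin m => Tp),
            (∏ j, μ (P j)) * (Finset.univ.fold max 0 (fun i => β (P i))) := by
  classical
  have hfull : ∀ P : Fin m → T, 0 ≤ ∏ j, μ (P j) :=
    fun P => Finset.prod_nonneg fun j _ => hμ0 _
  have base : ∀ β : T → ℝ, (Tp.filter fun A => 0 < β A) = ∅ →
      (m : ℝ) * ∑ A ∈ Tp, β A * (μ A * π A)
        ≤ ∑ P ∈ Fintype.piFinset (fun _ : Fin m => Tp),
            (∏ j, μ (P j)) * (Finset.univ.fold max 0 (fun i => β (P i))) := by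
    intro β hemp
    have hle : ∀ A ∈ Tp, β A ≤ 0 := by
      intro A hA
      by_contra hc
      have : A ∈ Tp.filter fun A => 0 < β A :=
        Finset.mem_filter.mpr ⟨hA, lt_of_not_ge hc⟩
      rw [hemp] at this
      exact absurd this (Finset.notMem_empty A)
    have hL : ∑ A ∈ Tp, β A * (μ A * π A) ≤ 0 := by
      refine Finset.sum_nonpos fun A hA => ?_
      exact mul_nonpos_of_nonpos_of_nonneg (hle A hA) (mul_nonneg (hμ0 A) (hπ0 A))
    have hR : (0:ℝ) ≤ ∑ P ∈ Fintype.piFinset (fun _ : Fin m => Tp),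
        (∏ j, μ (P j)) * (Finset.univ.fold max 0 (fun i => β (P i))) := by
      refine Finset.sum_nonneg fun P _ => ?_
      exact mul_nonneg (hfull P) (fold_max_nonneg _ _)
    have : (m:ℝ) * ∑ A ∈ Tp, β A * (μ A * π A) ≤ 0 :=
      mul_nonpos_of_nonneg_of_nonpos (Nat.cast_nonneg m) hL
    linarith
  intro q
  induction q with
  | zero =>
    intro β hcard
    apply base
    rw [← Finset.image_eq_empty (f := β)]
    exact Finset.card_eq_zero.mp (Nat.le_zero.mp hcard)
  | succ q ih =>
    intro β hcard
    by_cases hB : (Tp.filter fun A => 0 < β A) = ∅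
    · exact base β hB
    · set B := (Tp.filter fun A => 0 < β A).image β with hB_def
      have hBne : B.Nonempty := Finset.image_nonempty.mpr (Finset.nonempty_iff_ne_empty.mpr hB)
      set b := B.min' hBne with hb_def
      have hbB : b ∈ B := Finset.min'_mem B hBne
      have hb0 : 0 < b := by
        obtain ⟨A, hA, hAb⟩ := Finset.mem_image.mp hbB
        have := (Finset.mem_filter.mp hA).2
        linarith [hAb ▸ this]
      set V := Tp.filter (fun A => b ≤ β A) with hV_def
      have hVsub : V ⊆ Tp := Finset.filter_subset _ _
      set β' := fun A => if A ∈ V then β A - b else β A with hβ'_def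
      -- on Tp \ V, β is nonpositive
      have f1 : ∀ A ∈ Tp, A ∉ V → β A ≤ 0 := by
        intro A hA hAV
        by_contra hc
        have hmem : β A ∈ B := Finset.mem_image.mpr
          ⟨A, Finset.mem_filter.mpr ⟨hA, lt_of_not_ge hc⟩, rfl⟩
        exact hAV (Finset.mem_filter.mpr ⟨hA, Finset.min'_le B _ hmem⟩)
      have f2 : ∀ A ∈ V, b ≤ β A := fun A hA => (Finset.mem_filter.mp hA).2
      -- card bound for β'
      have hcard' : ((Tp.filter fun A => 0 < β' A).image β').card ≤ q := by
        have hsub : (Tp.filter fun A => 0 < β' A).image β' ⊆ (B.erase b).image (· - b) := by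
          intro y hy
          obtain ⟨A, hA, hAy⟩ := Finset.mem_image.mp hy
          obtain ⟨hATp, hA'⟩ := Finset.mem_filter.mp hA
          by_cases hAV : A ∈ V
          · have hβ'A : β' A = β A - b := by simp [hβ'_def, hAV]
            have hβA : b < β A := by rw [hβ'A] at hA'; linarith
            have hmem : β A ∈ B := Finset.mem_image.mpr
              ⟨A, Finset.mem_filter.mpr ⟨hATp, by linarith⟩, rfl⟩
            refine Finset.mem_image.mpr ⟨β A, Finset.mem_erase.mpr ⟨hβA.ne', hmem⟩, ?_⟩
            rw [← hAy, hβ'A]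
          · have hβ'A : β' A = β A := by simp [hβ'_def, hAV]
            rw [hβ'A] at hA'
            exact absurd (f1 A hATp hAV) (not_le.mpr hA')
        calc ((Tp.filter fun A => 0 < β' A).image β').card
            ≤ ((B.erase b).image (· - b)).card := Finset.card_le_card hsub
          _ ≤ (B.erase b).card := Finset.card_image_le
          _ = B.card - 1 := Finset.card_erase_of_mem hbB
          _ ≤ q := by
              have : B.card ≤ q + 1 := hcard
              omega
      have IH := ih β' hcard'
      -- (c) LHS split
      have hc1 : ∑ A ∈ Tp, β A * (μ A * π A)
          = (∑ A ∈ Tp, β' A * (μ A * π A)) + b * ∑ A ∈ V, μ A * π A := by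
        have : ∀ A ∈ Tp, β A * (μ A * π A)
            = β' A * (μ A * π A) + (if A ∈ V then b * (μ A * π A) else 0) := by
          intro A _
          by_cases hAV : A ∈ V
          · simp only [hβ'_def, hAV, if_true]; ring
          · simp [hβ'_def, hAV]
        rw [Finset.sum_congr rfl this, Finset.sum_add_distrib]
        congr 1
        rw [Finset.sum_ite_mem, Finset.inter_eq_right.mpr hVsub, Finset.mul_sum]
      -- (d) fold split
      have hd : ∀ P ∈ Fintype.piFinset (fun _ : Fin m => Tp),
          Finset.univ.fold max 0 (fun i => β (P i))
          = Finset.univ.fold max 0 (fun i => β' (P i)) + (if ∃ i, P i ∈ V then b else 0) := by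
        intro P hP
        have hPT : ∀ i, P i ∈ Tp := by
          intro i; exact (Fintype.mem_piFinset.mp hP) i
        by_cases hex : ∃ i, P i ∈ V
        · rw [if_pos hex]
          have hfold'0 : (0:ℝ) ≤ Finset.univ.fold max 0 (fun i => β' (P i)) :=
            fold_max_nonneg _ _
          obtain ⟨i₀, hi₀⟩ := hex
          have hbfold : b ≤ Finset.univ.fold max 0 (fun i => β (P i)) :=
            le_trans (f2 _ hi₀) (le_fold_max' (fun i => β (P i)) (Finset.mem_univ i₀))
          apply le_antisymm
          · rw [Finset.fold_max_le]
            refine ⟨by linarith, fun i _ => ?_⟩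
            by_cases hi : P i ∈ V
            · have : β (P i) = β' (P i) + b := by simp [hβ'_def, hi]
              rw [this]
              exact add_le_add_left (le_fold_max' (fun i => β' (P i)) (Finset.mem_univ i)) b
            · linarith [f1 _ (hPT i) hi]
          · have : Finset.univ.fold max 0 (fun i => β' (P i))
                ≤ Finset.univ.fold max 0 (fun i => β (P i)) - b := by
              rw [Finset.fold_max_le]
              refine ⟨by linarith, fun i _ => ?_⟩
              by_cases hi : P i ∈ V
              · have hβ' : β' (P i) = β (P i) - b := by simp [hβ'_def, hi]
                rw [hβ']
                have := le_fold_max' (fun i => β (P i)) (Finset.mem_univ i)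
                simpa using sub_le_sub_right this b
              · have hβ' : β' (P i) = β (P i) := by simp [hβ'_def, hi]
                rw [hβ']
                linarith [f1 _ (hPT i) hi]
            linarith
        · rw [if_neg hex, add_zero]
          apply Finset.fold_congr
          intro i _
          have hi : P i ∉ V := fun hc => hex ⟨i, hc⟩
          simp [hβ'_def, hi]
      -- (e) probability of hitting V
      have he : ∑ P ∈ Fintype.piFinset (fun _ : Fin m => Tp),
          (∏ j, μ (P j)) * (if ∃ i, P i ∈ V then b else 0)
          = b * (1 - (1 - ∑ t ∈ V, μ t) ^ m) := by
        have hsplit : ∀ P ∈ Fintype.piFinset (fun _ : Fin m => Tp),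
            (∏ j, μ (P j)) * (if ∃ i, P i ∈ V then b else 0)
            = b * ((∏ j, μ (P j))
                - (if P ∈ Fintype.piFinset (fun _ : Fin m => Tp \ V) then (∏ j, μ (P j)) else 0)) := by
          intro P hP
          have hPT : ∀ i, P i ∈ Tp := fun i => (Fintype.mem_piFinset.mp hP) i
          by_cases hex : ∃ i, P i ∈ V
          · rw [if_pos hex, if_neg, sub_zero]
            · ring
            · intro hc
              obtain ⟨i, hi⟩ := hex
              exact (Finset.mem_sdiff.mp ((Fintype.mem_piFinset.mp hc) i)).2 hi
          · rw [if_neg hex, if_pos, sub_self]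
            · ring
            · push_neg at hex
              exact Fintype.mem_piFinset.mpr fun i => Finset.mem_sdiff.mpr ⟨hPT i, hex i⟩
        rw [Finset.sum_congr rfl hsplit, ← Finset.mul_sum, Finset.sum_sub_distrib]
        have h1 : ∑ P ∈ Fintype.piFinset (fun _ : Fin m => Tp), ∏ j, μ (P j) = 1 := by
          rw [sum_pi_prod', hTp, one_pow]
        have hsubpi : Fintype.piFinset (fun _ : Fin m => Tp \ V)
            ⊆ Fintype.piFinset (fun _ : Fin m => Tp) := by
          intro P hP
          exact Fintype.mem_piFinset.mpr fun i =>
            (Finset.mem_sdiff.mp ((Fintype.mem_piFinset.mp hP) i)).1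
        have h2 : ∑ P ∈ Fintype.piFinset (fun _ : Fin m => Tp),
            (if P ∈ Fintype.piFinset (fun _ : Fin m => Tp \ V) then (∏ j, μ (P j)) else 0)
            = (1 - ∑ t ∈ V, μ t) ^ m := by
          rw [Finset.sum_ite_mem, Finset.inter_eq_right.mpr hsubpi, sum_pi_prod']
          congr 1
          rw [Finset.sum_sdiff_eq_sub hVsub, hTp]
        rw [h1, h2]
      -- (f) Border for V
      have hf : (m:ℝ) * ∑ t ∈ V, μ t * π t ≤ 1 - (1 - ∑ t ∈ V, μ t) ^ m := by
        have := hball V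
        calc (m:ℝ) * ∑ t ∈ V, μ t * π t
            = (m:ℝ) * ∑ t ∈ V, π t * μ t := by
              congr 1; exact Finset.sum_congr rfl fun t _ => mul_comm _ _
          _ ≤ 1 - (1 - ∑ t ∈ V, μ t) ^ m := hball V
      -- combine
      calc (m:ℝ) * ∑ A ∈ Tp, β A * (μ A * π A)
          = (m:ℝ) * ∑ A ∈ Tp, β' A * (μ A * π A) + b * ((m:ℝ) * ∑ t ∈ V, μ t * π t) := by
            rw [hc1]; ring
        _ ≤ (∑ P ∈ Fintype.piFinset (fun _ : Fin m => Tp),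
              (∏ j, μ (P j)) * (Finset.univ.fold max 0 (fun i => β' (P i))))
            + b * (1 - (1 - ∑ t ∈ V, μ t) ^ m) := by
            refine add_le_add IH ?_
            exact mul_le_mul_of_nonneg_left hf hb0.le
        _ = ∑ P ∈ Fintype.piFinset (fun _ : Fin m => Tp),
              (∏ j, μ (P j)) * (Finset.univ.fold max 0 (fun i => β (P i))) := by
            rw [← he, ← Finset.sum_add_distrib]
            refine (Finset.sum_congr rfl fun P hP => ?_).symm
            rw [hd P hP]
            ring

lemma key_dual {T : Type*} [Fintype T] [DecidableEq T] {m : ℕ} (hm : 0 < m)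
    (μ : T → ℝ) (hμ0 : ∀ t, 0 ≤ μ t) (hμ1 : ∑ t, μ t = 1)
    (π : T → ℝ) (hπ0 : ∀ t, 0 ≤ π t) (hπ1 : ∀ t, π t ≤ 1)
    (hball : ∀ S : Finset T, (m : ℝ) * ∑ t ∈ S, π t * μ t ≤ 1 - (1 - ∑ t ∈ S, μ t) ^ m)
    (γ : T → ℝ) :
    (m : ℝ) * ∑ A, γ A * π A
      ≤ ∑ P : Fin m → T,
          Finset.univ.fold max 0
            (fun i => (∏ j ∈ Finset.univ.erase i, μ (P j)) * γ (P i)) := by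
  classical
  set w : (Fin m → T) → Fin m → ℝ :=
    fun P i => (∏ j ∈ Finset.univ.erase i, μ (P j)) * γ (P i) with hw_def
  set Tp := Finset.univ.filter (fun A : T => μ A ≠ 0) with hTp_def
  set Tz := Finset.univ.filter (fun A : T => ¬ μ A ≠ 0) with hTz_def
  have hTpz : ∀ A ∈ Tz, μ A = 0 := fun A hA => not_not.mp (Finset.mem_filter.mp hA).2
  have hTppos : ∀ A ∈ Tp, 0 < μ A := fun A hA =>
    lt_of_le_of_ne (hμ0 A) (Ne.symm (Finset.mem_filter.mp hA).2)
  have hTp1 : ∑ t ∈ Tp, μ t = 1 := by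
    have := Finset.sum_filter_add_sum_filter_not Finset.univ (fun A : T => μ A ≠ 0) μ
    have hz : ∑ t ∈ Tz, μ t = 0 := Finset.sum_eq_zero hTpz
    rw [← hTz_def] at this
    rw [← hTp_def] at this
    rw [hz, add_zero] at this
    rw [this, hμ1]
  set Tz' := Tz.filter (fun A => 0 < γ A) with hTz'_def
  -- split of LHS
  have hLsplit : ∑ A, γ A * π A = (∑ A ∈ Tp, γ A * π A) + ∑ A ∈ Tz, γ A * π A := by
    rw [← Finset.sum_filter_add_sum_filter_not Finset.univ (fun A : T => μ A ≠ 0)]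
  have hZ : ∑ A ∈ Tz, γ A * π A ≤ ∑ A ∈ Tz', γ A := by
    have : ∀ A ∈ Tz, γ A * π A ≤ (if 0 < γ A then γ A else 0) := by
      intro A _
      by_cases h : 0 < γ A
      · rw [if_pos h]
        exact mul_le_of_le_one_right h.le (hπ1 A)
      · rw [if_neg h]
        exact mul_nonpos_of_nonpos_of_nonneg (not_lt.mp h) (hπ0 A)
    calc ∑ A ∈ Tz, γ A * π A ≤ ∑ A ∈ Tz, (if 0 < γ A then γ A else 0) :=
          Finset.sum_le_sum this
      _ = ∑ A ∈ Tz', γ A := (Finset.sum_filter _ _).symm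
  -- positive part via key_induction
  set β : T → ℝ := fun A => γ A / μ A with hβ_def
  have hTpgb : ∀ A ∈ Tp, γ A = β A * μ A := by
    intro A hA
    rw [hβ_def]
    field_simp [(hTppos A hA).ne']
  have hpos : (m : ℝ) * ∑ A ∈ Tp, γ A * π A
      ≤ ∑ P ∈ Fintype.piFinset (fun _ : Fin m => Tp),
          Finset.univ.fold max 0 (fun i => w P i) := by
    have h1 : ∑ A ∈ Tp, γ A * π A = ∑ A ∈ Tp, β A * (μ A * π A) := by
      refine Finset.sum_congr rfl fun A hA => ?_
      rw [hTpgb A hA]; ring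
    have h2 := key_induction hm μ hμ0 π hπ0 hball Tp hTp1
      ((Tp.filter fun A => 0 < β A).image β).card β le_rfl
    rw [h1]
    refine h2.trans (le_of_eq (Finset.sum_congr rfl fun P hP => ?_))
    have hPT : ∀ i, P i ∈ Tp := fun i => (Fintype.mem_piFinset.mp hP) i
    have hμP : 0 ≤ ∏ j, μ (P j) := Finset.prod_nonneg fun j _ => hμ0 _
    rw [← fold_max_mul (fun i => β (P i)) Finset.univ hμP]
    apply Finset.fold_congr
    intro i _
    rw [hw_def]
    have hfact : ∏ j, μ (P j) = μ (P i) * ∏ j ∈ Finset.univ.erase i, μ (P j) :=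
      (Finset.mul_prod_erase Finset.univ (fun j => μ (P j)) (Finset.mem_univ i)).symm
    rw [hfact, hβ_def]
    have : μ (P i) ≠ 0 := (hTppos _ (hPT i)).ne'
    field_simp
  -- zero-mass part via single-deviation profiles
  set E : Fin m → Finset (Fin m → T) :=
    fun i₀ => Fintype.piFinset (fun j => if j = i₀ then Tz' else Tp) with hE_def
  have hEsum : ∀ i₀ : Fin m, ∑ A ∈ Tz', γ A ≤ ∑ P ∈ E i₀, Finset.univ.fold max 0 (w P) := by
    intro i₀
    have hterm : ∀ P ∈ E i₀, w P i₀ ≤ Finset.univ.fold max 0 (w P) :=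
      fun P _ => le_fold_max' (w P) (Finset.mem_univ i₀)
    have hval : ∑ P ∈ E i₀, w P i₀ = ∑ A ∈ Tz', γ A := by
      set h : Fin m → T → ℝ := fun j t => if j = i₀ then γ t else μ t with hh_def
      have hwh : ∀ P ∈ E i₀, w P i₀ = ∏ j, h j (P j) := by
        intro P _
        rw [← Finset.mul_prod_erase Finset.univ (fun j => h j (P j)) (Finset.mem_univ i₀)]
        have h1 : h i₀ (P i₀) = γ (P i₀) := by simp [hh_def]
        have h2 : ∏ j ∈ Finset.univ.erase i₀, h j (P j)
            = ∏ j ∈ Finset.univ.erase i₀, μ (P j) := by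
          refine Finset.prod_congr rfl fun j hj => ?_
          have : j ≠ i₀ := (Finset.mem_erase.mp hj).1
          simp [hh_def, this]
        rw [h1, h2, hw_def, mul_comm]
      rw [Finset.sum_congr rfl hwh, hE_def, ← Finset.prod_univ_sum]
      have : ∀ j : Fin m, ∑ t ∈ (if j = i₀ then Tz' else Tp), h j t
          = if j = i₀ then ∑ A ∈ Tz', γ A else 1 := by
        intro j
        by_cases hj : j = i₀
        · simp [hj, hh_def]
        · simp [hj, hh_def, hTp1]
      rw [Finset.prod_congr rfl fun j _ => this j]
      rw [Finset.prod_ite_eq' Finset.univ i₀ (fun _ => ∑ A ∈ Tz', γ A)]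
      simp
    rw [← hval]
    exact Finset.sum_le_sum hterm
  -- assemble: the union
  set F : Finset (Fin m → T) :=
    (Fintype.piFinset (fun _ : Fin m => Tp)) ∪ Finset.univ.biUnion E with hF_def
  have hdisj1 : Disjoint (Fintype.piFinset (fun _ : Fin m => Tp)) (Finset.univ.biUnion E) := by
    rw [Finset.disjoint_left]
    intro P hP hP'
    obtain ⟨i₀, _, hPi₀⟩ := Finset.mem_biUnion.mp hP'
    have h1 : P i₀ ∈ Tz' := by
      have := (Fintype.mem_piFinset.mp hPi₀) i₀
      simpa using this
    have h2 : P i₀ ∈ Tp := (Fintype.mem_piFinset.mp hP) i₀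
    have := hTpz _ (Finset.mem_filter.mp h1).1
    exact (Finset.mem_filter.mp h2).2 this
  have hdisj2 : ∀ i₀ ∈ (Finset.univ : Finset (Fin m)), ∀ i₁ ∈ (Finset.univ : Finset (Fin m)),
      i₀ ≠ i₁ → Disjoint (E i₀) (E i₁) := by
    intro i₀ _ i₁ _ hne
    rw [Finset.disjoint_left]
    intro P hP0 hP1
    have h0 : P i₁ ∈ Tp := by
      have := (Fintype.mem_piFinset.mp hP0) i₁
      rwa [if_neg (Ne.symm hne)] at this
    have h1 : P i₁ ∈ Tz' := by
      have := (Fintype.mem_piFinset.mp hP1) i₁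
      rwa [if_pos rfl] at this
    have := hTpz _ (Finset.mem_filter.mp h1).1
    exact (Finset.mem_filter.mp h0).2 this
  have hFsum : (∑ P ∈ Fintype.piFinset (fun _ : Fin m => Tp), Finset.univ.fold max 0 (w P))
      + (m : ℝ) * ∑ A ∈ Tz', γ A
      ≤ ∑ P ∈ F, Finset.univ.fold max 0 (w P) := by
    rw [hF_def, Finset.sum_union hdisj1, Finset.sum_biUnion hdisj2]
    refine add_le_add_right ?_ _
    calc (m:ℝ) * ∑ A ∈ Tz', γ A = ∑ _i₀ : Fin m, ∑ A ∈ Tz', γ A := by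
          rw [Finset.sum_const, card_univ, Fintype.card_fin, nsmul_eq_mul]
      _ ≤ ∑ i₀ : Fin m, ∑ P ∈ E i₀, Finset.univ.fold max 0 (w P) :=
          Finset.sum_le_sum fun i₀ _ => hEsum i₀
  have hFuniv : ∑ P ∈ F, Finset.univ.fold max 0 (w P)
      ≤ ∑ P : Fin m → T, Finset.univ.fold max 0 (w P) :=
    Finset.sum_le_sum_of_subset_of_nonneg (Finset.subset_univ F)
      fun P _ _ => fold_max_nonneg (w P) _
  calc (m : ℝ) * ∑ A, γ A * π A
      = (m : ℝ) * ∑ A ∈ Tp, γ A * π A + (m:ℝ) * ∑ A ∈ Tz, γ A * π A := by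
        rw [hLsplit]; ring
    _ ≤ (∑ P ∈ Fintype.piFinset (fun _ : Fin m => Tp), Finset.univ.fold max 0 (w P))
        + (m:ℝ) * ∑ A ∈ Tz', γ A := by
        refine add_le_add hpos ?_
        exact mul_le_mul_of_nonneg_left hZ (Nat.cast_nonneg m)
    _ ≤ ∑ P ∈ F, Finset.univ.fold max 0 (w P) := hFsum
    _ ≤ ∑ P : Fin m → T, Finset.univ.fold max 0 (w P) := hFuniv

section
variable {T : Type*} [Fintype T] [DecidableEq T] {m : ℕ}

-- the simplex-like set
def simS (m : ℕ) : Set (Fin m → ℝ) := {y | (∀ i, 0 ≤ y i) ∧ ∑ i, y i ≤ 1}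

lemma simS_compact (m : ℕ) : IsCompact (simS m) := by
  have hsub : simS m ⊆ Set.univ.pi (fun _ : Fin m => Set.Icc (0:ℝ) 1) := by
    intro y hy
    intro i _
    refine ⟨hy.1 i, ?_⟩
    calc y i ≤ ∑ j, y j := Finset.single_le_sum (fun j _ => hy.1 j) (Finset.mem_univ i)
      _ ≤ 1 := hy.2
  have hclosed : IsClosed (simS m) := by
    have h1 : IsClosed {y : Fin m → ℝ | ∀ i, 0 ≤ y i} := by
      have : {y : Fin m → ℝ | ∀ i, 0 ≤ y i} = ⋂ i, {y | 0 ≤ y i} := by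
        ext y; simp
      rw [this]
      exact isClosed_iInter fun i => isClosed_le continuous_const (continuous_apply i)
    have h2 : IsClosed {y : Fin m → ℝ | ∑ i, y i ≤ 1} :=
      isClosed_le (by continuity) continuous_const
    exact (h1.inter h2 : IsClosed _)
  exact (isCompact_univ_pi fun _ => isCompact_Icc).of_isClosed_subset hclosed hsub

lemma simS_convex (m : ℕ) : Convex ℝ (simS m) := by
  intro x hx y hy a b ha hb hab
  constructor
  · intro i
    have : (a • x + b • y) i = a * x i + b * y i := by simp [smul_eq_mul]
    rw [this]
    have := hx.1 i; have := hy.1 i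
    positivity
  · have : ∑ i, (a • x + b • y) i = a * ∑ i, x i + b * ∑ i, y i := by
      simp [Finset.mul_sum, Finset.sum_add_distrib, smul_eq_mul]
    rw [this]
    nlinarith [hx.2, hy.2]

def Kset (T : Type*) [Fintype T] [DecidableEq T] (m : ℕ) : Set ((Fin m → T) → Fin m → ℝ) :=
  Set.univ.pi (fun _ => simS m)

lemma Kset_compact : IsCompact (Kset T m) := isCompact_univ_pi fun _ => simS_compact m

lemma Kset_convex : Convex ℝ (Kset T m) := convex_pi fun _ _ => simS_convex m

noncomputable def Psi (μ : T → ℝ) (m : ℕ) :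
    ((Fin m → T) → Fin m → ℝ) →ₗ[ℝ] (T → ℝ) where
  toFun φ := fun A => ∑ P : Fin m → T, ∑ i : Fin m,
    (if P i = A then (∏ j ∈ Finset.univ.erase i, μ (P j)) * φ P i else 0)
  map_add' φ ψ := by
    funext A
    rw [Pi.add_apply, ← Finset.sum_add_distrib]
    refine Finset.sum_congr rfl fun P _ => ?_
    rw [← Finset.sum_add_distrib]
    refine Finset.sum_congr rfl fun i _ => ?_
    by_cases h : P i = A
    · simp only [h, if_true, Pi.add_apply]
      ring
    · simp [h]
  map_smul' c φ := by
    funext A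
    simp only [RingHom.id_apply, Pi.smul_apply, smul_eq_mul, Finset.mul_sum]
    refine Finset.sum_congr rfl fun P _ => ?_
    refine Finset.sum_congr rfl fun i _ => ?_
    by_cases h : P i = A
    · simp only [h, if_true, Pi.smul_apply, smul_eq_mul]
      ring
    · simp [h]

lemma Psi_image_closed (μ : T → ℝ) : IsClosed ((Psi (T := T) μ m) '' (Kset T m)) := by
  have hc : Continuous (Psi (T := T) μ m) := (Psi (T := T) μ m).continuous_of_finiteDimensional
  exact ((Kset_compact).image hc).isClosed

lemma sep {μ : T → ℝ} {τ : T → ℝ} (h : τ ∉ (Psi (T := T) μ m) '' (Kset T m)) :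
    ∃ (f : (T → ℝ) →L[ℝ] ℝ) (u : ℝ), (∀ b ∈ (Psi (T := T) μ m) '' (Kset T m), f b < u) ∧ u < f τ :=
  geometric_hahn_banach_closed_point ((Kset_convex).linear_image _) (Psi_image_closed μ) h


lemma tau_mem (hm : 0 < m)
    (μ : T → ℝ) (hμ0 : ∀ t, 0 ≤ μ t) (hμ1 : ∑ t, μ t = 1)
    (π : T → ℝ) (hπ0 : ∀ t, 0 ≤ π t) (hπ1 : ∀ t, π t ≤ 1)
    (hball : ∀ S : Finset T, (m : ℝ) * ∑ t ∈ S, π t * μ t ≤ 1 - (1 - ∑ t ∈ S, μ t) ^ m) :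
    (fun A => (m : ℝ) * π A) ∈ (Psi (T := T) μ m) '' (Kset T m) := by
  classical
  by_contra hmem
  obtain ⟨f, u, hfs, hfτ⟩ := sep hmem
  set γ : T → ℝ := fun A => f (fun j => if A = j then 1 else 0) with hγ_def
  have hrepr : ∀ ψ : T → ℝ, f ψ = ∑ A, ψ A * γ A := by
    intro ψ
    conv_lhs => rw [pi_eq_sum_univ ψ]
    rw [map_sum]
    refine Finset.sum_congr rfl fun A _ => ?_
    rw [map_smul, smul_eq_mul]
  set w : (Fin m → T) → Fin m → ℝ :=
    fun P i => (∏ j ∈ Finset.univ.erase i, μ (P j)) * γ (P i) with hw_def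
  have hne : (Finset.univ : Finset (Fin m)).Nonempty := ⟨⟨0, hm⟩, Finset.mem_univ _⟩
  have hchoice : ∀ P : Fin m → T, ∃ y : Fin m → ℝ, y ∈ simS m ∧
      ∑ i, w P i * y i = Finset.univ.fold max 0 (w P) := by
    intro P
    obtain ⟨i₀, _, hmax⟩ := Finset.exists_max_image Finset.univ (w P) hne
    by_cases h0 : 0 < w P i₀
    · refine ⟨Pi.single i₀ 1, ⟨fun i => ?_, ?_⟩, ?_⟩
      · by_cases hi : i = i₀ <;> simp [Pi.single_apply, hi]
      · simp [Pi.single_apply]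
      · have hsum : ∑ i, w P i * (Pi.single i₀ 1 : Fin m → ℝ) i = w P i₀ := by
          simp [Pi.single_apply, mul_ite]
        rw [hsum]
        refine le_antisymm (le_fold_max' (w P) (Finset.mem_univ i₀)) ?_
        exact (Finset.fold_max_le (w P i₀)).mpr ⟨h0.le, fun i _ => hmax i (Finset.mem_univ i)⟩
    · refine ⟨0, ⟨fun i => le_rfl, by simp⟩, ?_⟩
      have hsum : ∑ i, w P i * (0:Fin m → ℝ) i = 0 := by simp
      rw [hsum]
      refine le_antisymm (fold_max_nonneg (w P) _) ?_
      exact (Finset.fold_max_le 0).mpr ⟨le_rfl, fun i _ => (hmax i (Finset.mem_univ i)).trans (not_lt.mp h0)⟩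
  choose y hy hval using hchoice
  have hyK : y ∈ Kset T m := fun P _ => hy P
  have himg : Psi (T := T) μ m y ∈ (Psi (T := T) μ m) '' (Kset T m) := ⟨y, hyK, rfl⟩
  have hcomp : f (Psi (T := T) μ m y) = ∑ P : Fin m → T, Finset.univ.fold max 0 (w P) := by
    rw [hrepr]
    have hPsiA : ∀ A, (Psi (T := T) μ m y) A
        = ∑ P : Fin m → T, ∑ i, (if P i = A then (∏ j ∈ Finset.univ.erase i, μ (P j)) * y P i else 0) := by
      intro A; rfl
    calc ∑ A, (Psi (T := T) μ m y) A * γ A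
        = ∑ A, ∑ P : Fin m → T, ∑ i,
            (if P i = A then (∏ j ∈ Finset.univ.erase i, μ (P j)) * y P i * γ A else 0) := by
          refine Finset.sum_congr rfl fun A _ => ?_
          rw [hPsiA A, Finset.sum_mul]
          refine Finset.sum_congr rfl fun P _ => ?_
          rw [Finset.sum_mul]
          refine Finset.sum_congr rfl fun i _ => ?_
          by_cases h : P i = A
          · simp [h]
          · simp [h]
      _ = ∑ P : Fin m → T, ∑ A, ∑ i,
            (if P i = A then (∏ j ∈ Finset.univ.erase i, μ (P j)) * y P i * γ A else 0) :=
          Finset.sum_comm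
      _ = ∑ P : Fin m → T, Finset.univ.fold max 0 (w P) := by
          refine Finset.sum_congr rfl fun P _ => ?_
          rw [Finset.sum_comm]
          have hinner : ∀ i : Fin m, ∑ A,
              (if P i = A then (∏ j ∈ Finset.univ.erase i, μ (P j)) * y P i * γ A else 0)
              = w P i * y P i := by
            intro i
            rw [Finset.sum_ite_eq Finset.univ (P i)
              (fun A => (∏ j ∈ Finset.univ.erase i, μ (P j)) * y P i * γ A)]
            simp only [Finset.mem_univ, if_true, hw_def]
            ring
          rw [Finset.sum_congr rfl fun i _ => hinner i, hval P]
  have hkd := key_dual hm μ hμ0 hμ1 π hπ0 hπ1 hball γ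
  have hτ : f (fun A => (m:ℝ) * π A) = (m:ℝ) * ∑ A, γ A * π A := by
    rw [hrepr, Finset.mul_sum]
    exact Finset.sum_congr rfl fun A _ => by ring
  have hlt := hfs _ himg
  rw [hcomp] at hlt
  rw [hτ] at hfτ
  have : (m:ℝ) * ∑ A, γ A * π A ≤ ∑ P : Fin m → T, Finset.univ.fold max 0 (w P) := hkd
  linarith


lemma erase_prod_ite (μ : T → ℝ) (P : Fin m → T) (i : Fin m) :
    ∏ j ∈ Finset.univ.erase i, μ (P j) = ∏ j, (if j = i then 1 else μ (P j)) := by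
  rw [← Finset.mul_prod_erase Finset.univ (fun j => if j = i then 1 else μ (P j))
    (Finset.mem_univ i)]
  rw [if_pos rfl, one_mul]
  exact (Finset.prod_congr rfl fun j hj => if_neg (Finset.mem_erase.mp hj).1).symm

lemma interim_perm (μ : T → ℝ) (φ : (Fin m → T) → Fin m → ℝ) (e : Fin m ≃ Fin m)
    (i : Fin m) (A : T) :
    (∑ P : Fin m → T,
      if P i = A then (∏ j ∈ Finset.univ.erase i, μ (P j)) * φ (P ∘ e) (e.symm i) else 0)
    = ∑ P : Fin m → T,
      if P (e.symm i) = A then (∏ j ∈ Finset.univ.erase (e.symm i), μ (P j)) * φ P (e.symm i) else 0 := by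
  refine Fintype.sum_equiv (Equiv.arrowCongr e.symm (Equiv.refl T)) _ _ fun P => ?_
  have happ : (Equiv.arrowCongr e.symm (Equiv.refl T)) P = P ∘ e := by
    funext j
    simp [Equiv.arrowCongr]
  rw [happ]
  have hcond : ((P ∘ e) (e.symm i) = A) = (P i = A) := by
    simp [Function.comp_apply]
  have hprod : ∏ j ∈ Finset.univ.erase (e.symm i), μ ((P ∘ e) j)
      = ∏ j ∈ Finset.univ.erase i, μ (P j) := by
    rw [erase_prod_ite μ (P ∘ e) (e.symm i), erase_prod_ite μ P i]
    rw [← Equiv.prod_comp e (fun j => if j = i then 1 else μ (P j))]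
    refine Finset.prod_congr rfl fun j _ => ?_
    simp only [Function.comp_apply]
    by_cases hji : j = e.symm i
    · rw [if_pos hji, if_pos (by rw [hji, Equiv.apply_symm_apply])]
    · rw [if_neg hji, if_neg (fun hc => hji (by rw [← hc, Equiv.symm_apply_apply]))]
  by_cases h : P i = A
  · rw [if_pos h, if_pos (show (P ∘ ⇑e) (e.symm i) = A by simpa using h), hprod]
  · rw [if_neg h, if_neg (fun hc => h (by simpa using hc))]

lemma exists_phi (hm : 0 < m)
    (μ : T → ℝ) (hμ0 : ∀ t, 0 ≤ μ t) (hμ1 : ∑ t, μ t = 1)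
    (π : T → ℝ) (hπ0 : ∀ t, 0 ≤ π t) (hπ1 : ∀ t, π t ≤ 1)
    (hball : ∀ S : Finset T, (m : ℝ) * ∑ t ∈ S, π t * μ t ≤ 1 - (1 - ∑ t ∈ S, μ t) ^ m) :
    ∃ φ : (Fin m → T) → Fin m → ℝ,
      (∀ P i, 0 ≤ φ P i) ∧ (∀ P, ∑ i, φ P i ≤ 1) ∧
      (∀ (i : Fin m) (A : T),
        (∑ P : Fin m → T,
          if P i = A then (∏ j ∈ Finset.univ.erase i, μ (P j)) * φ P i else 0) = π A) := by
  classical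
  haveI : NeZero m := ⟨hm.ne'⟩
  obtain ⟨φ₀, hφ₀K, hφ₀Ψ⟩ := tau_mem hm μ hμ0 hμ1 π hπ0 hπ1 hball
  have hφ₀0 : ∀ P i, 0 ≤ φ₀ P i := fun P i => ((hφ₀K P (Set.mem_univ P)).1 i)
  have hφ₀1 : ∀ P, ∑ i, φ₀ P i ≤ 1 := fun P => (hφ₀K P (Set.mem_univ P)).2
  have hmR : (0:ℝ) < m := by exact_mod_cast hm
  have hΨA : ∀ A, ∑ i : Fin m, (∑ P : Fin m → T,
      if P i = A then (∏ j ∈ Finset.univ.erase i, μ (P j)) * φ₀ P i else 0) = m * π A := by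
    intro A
    have h1 : (Psi (T := T) μ m φ₀) A = ∑ P : Fin m → T, ∑ i : Fin m,
        (if P i = A then (∏ j ∈ Finset.univ.erase i, μ (P j)) * φ₀ P i else 0) := rfl
    have h2 := congrFun hφ₀Ψ A
    rw [h1] at h2
    rw [Finset.sum_comm, h2]
  set e : Fin m → (Fin m ≃ Fin m) := fun c => Equiv.addRight c with he_def
  refine ⟨fun P i => (m:ℝ)⁻¹ * ∑ c : Fin m, φ₀ (P ∘ e c) ((e c).symm i), ?_, ?_, ?_⟩
  · intro P i
    have : (0:ℝ) ≤ ∑ c : Fin m, φ₀ (P ∘ e c) ((e c).symm i) :=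
      Finset.sum_nonneg fun c _ => hφ₀0 _ _
    positivity
  · intro P
    have hswap : ∑ i : Fin m, ∑ c : Fin m, φ₀ (P ∘ e c) ((e c).symm i)
        = ∑ c : Fin m, ∑ i : Fin m, φ₀ (P ∘ e c) ((e c).symm i) := Finset.sum_comm
    have hinner : ∀ c : Fin m, ∑ i : Fin m, φ₀ (P ∘ e c) ((e c).symm i) ≤ 1 := by
      intro c
      rw [Equiv.sum_comp (e c).symm (φ₀ (P ∘ e c))]
      exact hφ₀1 _
    calc ∑ i : Fin m, (m:ℝ)⁻¹ * ∑ c : Fin m, φ₀ (P ∘ e c) ((e c).symm i)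
        = (m:ℝ)⁻¹ * ∑ i : Fin m, ∑ c : Fin m, φ₀ (P ∘ e c) ((e c).symm i) := by
          rw [Finset.mul_sum]
      _ = (m:ℝ)⁻¹ * ∑ c : Fin m, ∑ i : Fin m, φ₀ (P ∘ e c) ((e c).symm i) := by rw [hswap]
      _ ≤ (m:ℝ)⁻¹ * ∑ _c : Fin m, (1:ℝ) := by
          refine mul_le_mul_of_nonneg_left ?_ (by positivity)
          exact Finset.sum_le_sum fun c _ => hinner c
      _ = 1 := by
          rw [Finset.sum_const, card_univ, Fintype.card_fin, nsmul_eq_mul, mul_one]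
          field_simp
  · intro i A
    have hsplit : ∀ P : Fin m → T,
        (if P i = A then (∏ j ∈ Finset.univ.erase i, μ (P j))
            * ((m:ℝ)⁻¹ * ∑ c : Fin m, φ₀ (P ∘ e c) ((e c).symm i)) else 0)
        = (m:ℝ)⁻¹ * ∑ c : Fin m,
            (if P i = A then (∏ j ∈ Finset.univ.erase i, μ (P j)) * φ₀ (P ∘ e c) ((e c).symm i) else 0) := by
      intro P
      by_cases h : P i = A
      · simp only [h, if_true, Finset.mul_sum]
        refine Finset.sum_congr rfl fun c _ => ?_
        ring
      · simp [h]
    rw [Finset.sum_congr rfl fun P _ => hsplit P, ← Finset.mul_sum, Finset.sum_comm]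
    have hperm : ∀ c : Fin m,
        (∑ P : Fin m → T,
          if P i = A then (∏ j ∈ Finset.univ.erase i, μ (P j)) * φ₀ (P ∘ e c) ((e c).symm i) else 0)
        = ∑ P : Fin m → T,
          if P ((e c).symm i) = A then (∏ j ∈ Finset.univ.erase ((e c).symm i), μ (P j)) * φ₀ P ((e c).symm i) else 0 :=
      fun c => interim_perm μ φ₀ (e c) i A
    set G : Fin m → ℝ := fun k => ∑ P : Fin m → T,
      if P k = A then (∏ j ∈ Finset.univ.erase k, μ (P j)) * φ₀ P k else 0 with hG_def
    have hre : ∑ c : Fin m, G ((e c).symm i) = ∑ k : Fin m, G k := by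
      refine Fintype.sum_equiv (Equiv.subLeft i) _ _ fun c => ?_
      congr 1
      simp [he_def, Equiv.subLeft, sub_eq_add_neg]
    have hbig : ∑ c : Fin m, (∑ P : Fin m → T,
        if P i = A then (∏ j ∈ Finset.univ.erase i, μ (P j)) * φ₀ (P ∘ e c) ((e c).symm i) else 0)
        = (m : ℝ) * π A := by
      calc ∑ c : Fin m, (∑ P : Fin m → T,
          if P i = A then (∏ j ∈ Finset.univ.erase i, μ (P j)) * φ₀ (P ∘ e c) ((e c).symm i) else 0)
          = ∑ c : Fin m, G ((e c).symm i) := Finset.sum_congr rfl fun c _ => hperm c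
        _ = ∑ k : Fin m, G k := hre
        _ = (m : ℝ) * π A := hΨA A
    rw [hbig]
    field_simp

end

/-- Border's theorem, threshold form: for `m` i.i.d. bidders on finite `T`, a
bidder-symmetric reduced form `π` is feasible if and only if Border's inequality holds
for every threshold set `S_x = {A ∈ T : π(A) > x}`; i.e. it suffices to check Border's
condition only on the (at most `|T|`) sets of this form. -/
theorem stmt_2 {T : Type*} [Fintype T] [DecidableEq T]
    (m : ℕ) (hm : 0 < m)
    (μ : T → ℝ) (hμ0 : ∀ t, 0 ≤ μ t) (hμ1 : ∑ t, μ t = 1)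
    (π : T → ℝ) (hπ0 : ∀ t, 0 ≤ π t) (hπ1 : ∀ t, π t ≤ 1) :
    (∃ φ : (Fin m → T) → Fin m → ℝ,
        (∀ P i, 0 ≤ φ P i) ∧ (∀ P, ∑ i, φ P i ≤ 1) ∧
        (∀ (i : Fin m) (A : T),
          (∑ P : Fin m → T,
            if P i = A then (∏ j ∈ Finset.univ.erase i, μ (P j)) * φ P i else 0) = π A)) ↔
    (∀ x : ℝ,
      (m : ℝ) * ∑ t ∈ Finset.univ.filter (fun t => x < π t), π t * μ t
        ≤ 1 - (1 - ∑ t ∈ Finset.univ.filter (fun t => x < π t), μ t) ^ m) := by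
  constructor
  · rintro ⟨φ, h0, h1, hI⟩ x
    exact border_forward μ hμ0 hμ1 π φ h0 h1 hI (Finset.univ.filter (fun t => x < π t))
  · intro hb
    exact exists_phi hm μ hμ0 hμ1 π hπ0 hπ1
      (fun S => threshold_to_all hm μ hμ0 hμ1 π hb S)
end

section
/- For independent (not necessarily identically distributed) bidders with finite type spaces T_1,…,T_m and a single item, a reduced form (π_i)_{i} is feasible if and only if for all choices of subsets S_1 ⊆ T_1, …, S_m ⊆ T_m: Σ_i Σ_{A∈S_i} π_i(A)·Pr[t_i = A] ≤ 1 − Π_i (1 − Pr[t_i ∈ S_i]). -/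
set_option linter.unusedSectionVars false

open Finset

section BorderHelpers

variable {m : ℕ} {T : Fin m → Type*} [∀ i, Fintype (T i)] [∀ i, DecidableEq (T i)]

lemma sum_prod_pi (g : ∀ i, T i → ℝ) :
    ∑ P : ∀ i, T i, ∏ j, g j (P j) = ∏ j, ∑ t, g j t := by
  rw [Finset.prod_univ_sum, Fintype.piFinset_univ]

lemma mul_sup' {ι : Type*} {s : Finset ι} (H : s.Nonempty) (f : ι → ℝ) {k : ℝ} (hk : 0 ≤ k) :
    k * s.sup' H f = s.sup' H (fun i => k * f i) := by
  apply le_antisymm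
  · obtain ⟨i, hi, hEq⟩ := Finset.exists_mem_eq_sup' H f
    rw [hEq]; exact Finset.le_sup' (fun i => k * f i) hi
  · exact Finset.sup'_le _ _ fun i hi => mul_le_mul_of_nonneg_left (Finset.le_sup' f hi) hk

lemma sup'_max_zero {ι : Type*} {s : Finset ι} (H : s.Nonempty) (f : ι → ℝ) :
    s.sup' H (fun i => max (f i) 0) = max (s.sup' H f) 0 := by
  apply le_antisymm
  · exact Finset.sup'_le _ _ fun i hi => max_le_max (Finset.le_sup' f hi) le_rfl
  · obtain ⟨i, hi, -⟩ := Finset.exists_mem_eq_sup' H f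
    exact max_le
      (Finset.sup'_le _ _ fun j hj => le_trans (le_max_left (f j) 0) (Finset.le_sup' (fun j => max (f j) 0) hj))
      (le_trans (le_max_right (f i) 0) (Finset.le_sup' (fun j => max (f j) 0) hi))

lemma no_hit_prob (μ : ∀ i, T i → ℝ) (hμ1 : ∀ i, ∑ t, μ i t = 1) (S : ∀ i, Finset (T i)) :
    ∑ P : ∀ i, T i, ∏ j, (μ j (P j) * if P j ∈ S j then 0 else 1)
      = ∏ i, (1 - ∑ A ∈ S i, μ i A) := by
  rw [sum_prod_pi (fun j t => μ j t * if t ∈ S j then (0:ℝ) else 1)]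
  refine Finset.prod_congr rfl fun i _ => ?_
  have h2 : ∀ t, μ i t * (if t ∈ S i then 0 else 1)
      = μ i t - (if t ∈ S i then μ i t else 0) := by
    intro t; split_ifs <;> ring
  rw [Finset.sum_congr rfl fun t _ => h2 t, Finset.sum_sub_distrib, hμ1,
    Finset.sum_ite_mem, Finset.univ_inter]

lemma total_prob (μ : ∀ i, T i → ℝ) (hμ1 : ∀ i, ∑ t, μ i t = 1) :
    ∑ P : ∀ i, T i, ∏ j, μ j (P j) = 1 := by
  rw [sum_prod_pi (fun j t => μ j t)]; simp [hμ1]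


open scoped Classical in
lemma border_core (hm : 0 < m) (μ : ∀ i, T i → ℝ) (hμ0 : ∀ i t, 0 ≤ μ i t)
    (hμ1 : ∀ i, ∑ t, μ i t = 1) (π : ∀ i, T i → ℝ)
    (hB : ∀ S : ∀ i, Finset (T i),
      ∑ i, ∑ A ∈ S i, π i A * μ i A ≤ 1 - ∏ i, (1 - ∑ A ∈ S i, μ i A)) :
    ∀ (n : ℕ) (y : ∀ i, T i → ℝ), (∀ i A, 0 ≤ y i A) →
      ((Finset.univ.filter (fun e : (i : Fin m) × T i => 0 < y e.1 e.2)).card ≤ n) →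
      ∑ i, ∑ A, y i A * (π i A * μ i A) ≤
        ∑ P : ∀ i, T i, (∏ j, μ j (P j)) *
          (Finset.univ.sup' ⟨⟨0, hm⟩, Finset.mem_univ _⟩ (fun i => y i (P i))) := by
  have hne : (Finset.univ : Finset (Fin m)).Nonempty := ⟨⟨0, hm⟩, Finset.mem_univ _⟩
  intro n
  induction n with
  | zero =>
    intro y hy0 hcard
    have hflt : ∀ (e : (i : Fin m) × T i), ¬ 0 < y e.1 e.2 := by
      intro e
      have := Finset.card_eq_zero.mp (Nat.le_zero.mp hcard)
      have h2 := Finset.filter_eq_empty_iff.mp this (Finset.mem_univ e)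
      exact h2
    have hy : ∀ i A, y i A = 0 := fun i A => le_antisymm (not_lt.mp (hflt ⟨i, A⟩)) (hy0 i A)
    simp [hy, Finset.sup'_const]
    exact Finset.sum_nonneg fun P _ => mul_nonneg (Finset.prod_nonneg fun j _ => hμ0 _ _) (Finset.sup'_const (s := Finset.univ) hne (0:ℝ)).ge
  | succ n ih =>
    intro y hy0 hcard
    by_cases hpos : (Finset.univ.filter (fun e : (i : Fin m) × T i => 0 < y e.1 e.2)).Nonempty
    · set E := Finset.univ.filter (fun e : (i : Fin m) × T i => 0 < y e.1 e.2) with hE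
      set c := E.inf' hpos (fun e => y e.1 e.2) with hcdef
      have hc0 : 0 < c := by
        rw [hcdef, Finset.lt_inf'_iff]
        intro e he; exact (Finset.mem_filter.mp he).2
      have hcle : ∀ i A, 0 < y i A → c ≤ y i A := by
        intro i A h
        exact Finset.inf'_le (fun e : (i : Fin m) × T i => y e.1 e.2)
          (Finset.mem_filter.mpr ⟨Finset.mem_univ (⟨i, A⟩ : (i : Fin m) × T i), h⟩)
      set S : ∀ i, Finset (T i) := fun i => Finset.univ.filter (fun A => 0 < y i A) with hS
      have hSmem : ∀ i A, A ∈ S i ↔ 0 < y i A := by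
        intro i A; rw [hS]; simp
      set z : ∀ i, T i → ℝ := fun i A => if 0 < y i A then y i A - c else 0 with hz
      have hz0 : ∀ i A, 0 ≤ z i A := by
        intro i A; rw [hz]; dsimp only; split_ifs with h
        · linarith [hcle i A h]
        · exact le_refl 0
      have hyz : ∀ i A, y i A = (if A ∈ S i then c else 0) + z i A := by
        intro i A
        rw [hz]; dsimp only
        by_cases h : 0 < y i A
        · rw [if_pos ((hSmem i A).mpr h), if_pos h]; ring
        · rw [if_neg (fun hh => h ((hSmem i A).mp hh)), if_neg h]
          have := hy0 i A
          linarith [not_lt.mp h]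
      -- strict card decrease
      obtain ⟨e₀, he₀, he₀eq⟩ := Finset.exists_mem_eq_inf' hpos (fun e : (i : Fin m) × T i => y e.1 e.2)
      have hzcard : (Finset.univ.filter (fun e : (i : Fin m) × T i => 0 < z e.1 e.2)).card ≤ n := by
        have hsub : (Finset.univ.filter (fun e : (i : Fin m) × T i => 0 < z e.1 e.2)) ⊆ E := by
          intro e he
          rw [Finset.mem_filter] at he
          rw [hE, Finset.mem_filter]
          refine ⟨Finset.mem_univ _, ?_⟩
          by_contra hcon
          have : z e.1 e.2 = 0 := by rw [hz]; simp only; rw [if_neg hcon]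
          rw [this] at he; exact lt_irrefl 0 he.2
        have he₀z : e₀ ∉ (Finset.univ.filter (fun e : (i : Fin m) × T i => 0 < z e.1 e.2)) := by
          rw [Finset.mem_filter]
          rintro ⟨-, hlt⟩
          have hy0' : 0 < y e₀.1 e₀.2 := (Finset.mem_filter.mp he₀).2
          have : z e₀.1 e₀.2 = 0 := by
            rw [hz]; simp only; rw [if_pos hy0', ← he₀eq, ← hcdef]; ring
          rw [this] at hlt; exact lt_irrefl 0 hlt
        have hlt := Finset.card_lt_card
          ((Finset.ssubset_iff_of_subset hsub).mpr ⟨e₀, he₀, he₀z⟩)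
        have : E.card ≤ n + 1 := hcard
        omega
      have IH := ih z hz0 hzcard
      -- LHS decomposition
      have hLi : ∀ i, ∑ A, y i A * (π i A * μ i A)
          = c * (∑ A ∈ S i, π i A * μ i A) + ∑ A, z i A * (π i A * μ i A) := by
        intro i
        have hterm : ∀ A, y i A * (π i A * μ i A)
            = (if A ∈ S i then c * (π i A * μ i A) else 0) + z i A * (π i A * μ i A) := by
          intro A; rw [hyz i A]; split_ifs <;> ring
        rw [Finset.sum_congr rfl fun A _ => hterm A, Finset.sum_add_distrib,
          Finset.sum_ite_mem, Finset.univ_inter, Finset.mul_sum]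
      have hL : ∑ i, ∑ A, y i A * (π i A * μ i A)
          = c * (∑ i, ∑ A ∈ S i, π i A * μ i A) + ∑ i, ∑ A, z i A * (π i A * μ i A) := by
        rw [Finset.sum_congr rfl fun i _ => hLi i, Finset.sum_add_distrib, Finset.mul_sum]
      -- sup decomposition
      have hymem0 : ∀ (P : ∀ i, T i) i, P i ∉ S i → y i (P i) = 0 := by
        intro P i h
        exact le_antisymm (not_lt.mp (fun hh => h ((hSmem i (P i)).mpr hh))) (hy0 _ _)
      have hsupz0 : ∀ P : ∀ i, T i,
          0 ≤ Finset.univ.sup' hne (fun i => z i (P i)) := by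
        intro P
        exact le_trans (hz0 ⟨0, hm⟩ (P ⟨0, hm⟩))
          (Finset.le_sup' (fun i => z i (P i)) (Finset.mem_univ ⟨0, hm⟩))
      have hsup : ∀ P : ∀ i, T i,
          Finset.univ.sup' hne (fun i => y i (P i))
            = (if ∃ i, P i ∈ S i then c else 0) + Finset.univ.sup' hne (fun i => z i (P i)) := by
        intro P
        by_cases hex : ∃ i, P i ∈ S i
        · rw [if_pos hex]
          obtain ⟨i₀, hi₀⟩ := hex
          apply le_antisymm
          · apply Finset.sup'_le
            intro i _
            by_cases h : P i ∈ S i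
            · have hyi : y i (P i) = c + z i (P i) := by rw [hyz i (P i), if_pos h]
              rw [hyi]
              exact add_le_add_right (Finset.le_sup' (fun i => z i (P i)) (Finset.mem_univ i)) c
            · rw [hymem0 P i h]
              have := hsupz0 P
              linarith
          · obtain ⟨i₁, -, h₁⟩ := Finset.exists_mem_eq_sup' hne (fun i => z i (P i))
            rw [h₁]
            by_cases h : P i₁ ∈ S i₁
            · have hyi : c + z i₁ (P i₁) = y i₁ (P i₁) := by rw [hyz i₁ (P i₁), if_pos h]
              rw [hyi]
              exact Finset.le_sup' (fun i => y i (P i)) (Finset.mem_univ i₁)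
            · have hz1 : z i₁ (P i₁) = 0 := by
                rw [hz]; simp only
                rw [if_neg (fun hh => h ((hSmem i₁ (P i₁)).mpr hh))]
              rw [hz1, add_zero]
              calc c ≤ y i₀ (P i₀) := hcle _ _ ((hSmem i₀ (P i₀)).mp hi₀)
                _ ≤ _ := Finset.le_sup' (fun i => y i (P i)) (Finset.mem_univ i₀)
        · rw [if_neg hex, zero_add]
          push_neg at hex
          refine Finset.sup'_congr hne rfl fun i _ => ?_
          rw [hymem0 P i (hex i), hz]; simp only
          rw [if_neg (fun hh => (hex i) ((hSmem i (P i)).mpr hh))]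
      -- RHS decomposition
      have hhit : ∀ P : ∀ i, T i, (∏ j, μ j (P j)) * (if ∃ i, P i ∈ S i then c else 0)
          = c * ((∏ j, μ j (P j)) - ∏ j, (μ j (P j) * if P j ∈ S j then 0 else 1)) := by
        intro P
        by_cases hex : ∃ i, P i ∈ S i
        · rw [if_pos hex]
          obtain ⟨i₀, h⟩ := hex
          have hzero : ∏ j, (μ j (P j) * if P j ∈ S j then 0 else 1) = 0 :=
            Finset.prod_eq_zero (Finset.mem_univ i₀) (by rw [if_pos h]; ring)
          rw [hzero]; ring
        · rw [if_neg hex]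
          push_neg at hex
          have heq : ∏ j, (μ j (P j) * if P j ∈ S j then 0 else 1) = ∏ j, μ j (P j) :=
            Finset.prod_congr rfl fun j _ => by rw [if_neg (hex j)]; ring
          rw [heq]; ring
      have hR : ∑ P : ∀ i, T i, (∏ j, μ j (P j)) * Finset.univ.sup' hne (fun i => y i (P i))
          = c * (1 - ∏ i, (1 - ∑ A ∈ S i, μ i A))
            + ∑ P : ∀ i, T i, (∏ j, μ j (P j)) * Finset.univ.sup' hne (fun i => z i (P i)) := by
        have hterm : ∀ P : ∀ i, T i,
            (∏ j, μ j (P j)) * Finset.univ.sup' hne (fun i => y i (P i))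
              = (∏ j, μ j (P j)) * (if ∃ i, P i ∈ S i then c else 0)
                + (∏ j, μ j (P j)) * Finset.univ.sup' hne (fun i => z i (P i)) := by
          intro P; rw [hsup P]; ring
        rw [Finset.sum_congr rfl fun P _ => hterm P, Finset.sum_add_distrib]
        congr 1
        rw [Finset.sum_congr rfl fun P _ => hhit P, ← Finset.mul_sum,
          Finset.sum_sub_distrib, total_prob μ hμ1, no_hit_prob μ hμ1 S]
      rw [hL, hR]
      exact add_le_add (mul_le_mul_of_nonneg_left (hB S) hc0.le) IH
    · -- no positive values: y ≡ 0
      have hy : ∀ i A, y i A = 0 := by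
        intro i A
        refine le_antisymm (not_lt.mp fun h => hpos ⟨⟨i, A⟩, ?_⟩) (hy0 i A)
        exact Finset.mem_filter.mpr ⟨Finset.mem_univ _, h⟩
      simp [hy, Finset.sup'_const]
      exact Finset.sum_nonneg fun P _ => mul_nonneg (Finset.prod_nonneg fun j _ => hμ0 _ _) (Finset.sup'_const (s := Finset.univ) hne (0:ℝ)).ge


end BorderHelpers

set_option maxHeartbeats 3200000 in
/-- Border's theorem for independent (not necessarily identical) bidders: bidder `i`'s
type is drawn independently from `μ i` on the finite set `T i`; a single item is for
sale. A reduced form `π` is feasible (induced by some ex-post allocation rule that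
never over-allocates the item) if and only if for all choices of subsets
`S i ⊆ T i`: `Σ_i Σ_{A∈S_i} π_i(A)·Pr[t_i = A] ≤ 1 − Π_i (1 − Pr[t_i ∈ S_i])`. -/
theorem stmt_3 (m : ℕ) (hm : 0 < m) (T : Fin m → Type*)
    [∀ i, Fintype (T i)] [∀ i, DecidableEq (T i)]
    (μ : ∀ i, T i → ℝ) (hμ0 : ∀ i t, 0 ≤ μ i t) (hμ1 : ∀ i, ∑ t, μ i t = 1)
    (π : ∀ i, T i → ℝ) (hπ0 : ∀ i t, 0 ≤ π i t) (hπ1 : ∀ i t, π i t ≤ 1) :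
    (∃ φ : (∀ i, T i) → Fin m → ℝ,
        (∀ P i, 0 ≤ φ P i) ∧ (∀ P, ∑ i, φ P i ≤ 1) ∧
        (∀ (i : Fin m) (A : T i),
          (∑ P : ∀ j, T j,
            if P i = A then (∏ j ∈ Finset.univ.erase i, μ j (P j)) * φ P i else 0)
          = π i A)) ↔
    (∀ S : ∀ i, Finset (T i),
      ∑ i, ∑ A ∈ S i, π i A * μ i A ≤ 1 - ∏ i, (1 - ∑ A ∈ S i, μ i A)) := by
  classical
  constructor
  · rintro ⟨φ, hφ0, hφ1, hφeq⟩ S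
    have key : ∀ i, ∑ A ∈ S i, π i A * μ i A
        = ∑ P : ∀ j, T j, (if P i ∈ S i then (∏ j, μ j (P j)) * φ P i else 0) := by
      intro i
      calc ∑ A ∈ S i, π i A * μ i A
          = ∑ A ∈ S i, (∑ P : ∀ j, T j,
              if P i = A then (∏ j ∈ Finset.univ.erase i, μ j (P j)) * φ P i else 0) * μ i A := by
            refine Finset.sum_congr rfl fun A _ => ?_
            rw [hφeq i A]
        _ = ∑ A ∈ S i, ∑ P : ∀ j, T j,
              (if P i = A then (∏ j, μ j (P j)) * φ P i else 0) := by
            refine Finset.sum_congr rfl fun A _ => ?_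
            rw [Finset.sum_mul]
            refine Finset.sum_congr rfl fun P _ => ?_
            split_ifs with h
            · rw [← h, ← Finset.mul_prod_erase Finset.univ (fun j => μ j (P j)) (Finset.mem_univ i)]
              ring
            · ring
        _ = ∑ P : ∀ j, T j, ∑ A ∈ S i,
              (if P i = A then (∏ j, μ j (P j)) * φ P i else 0) := Finset.sum_comm
        _ = ∑ P : ∀ j, T j, (if P i ∈ S i then (∏ j, μ j (P j)) * φ P i else 0) := by
            refine Finset.sum_congr rfl fun P _ => ?_
            exact Finset.sum_ite_eq (S i) (P i) (fun _ => (∏ j, μ j (P j)) * φ P i)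
    rw [Finset.sum_congr rfl fun i _ => key i, Finset.sum_comm]
    have hpt : ∀ P : ∀ j, T j,
        (∑ i, if P i ∈ S i then (∏ j, μ j (P j)) * φ P i else 0)
          ≤ (∏ j, μ j (P j)) - ∏ j, (μ j (P j) * if P j ∈ S j then 0 else 1) := by
      intro P
      by_cases hex : ∃ i, P i ∈ S i
      · obtain ⟨i₀, h₀⟩ := hex
        have hzero : ∏ j, (μ j (P j) * if P j ∈ S j then 0 else 1) = 0 :=
          Finset.prod_eq_zero (Finset.mem_univ i₀) (by rw [if_pos h₀]; ring)
        rw [hzero, sub_zero]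
        calc (∑ i, if P i ∈ S i then (∏ j, μ j (P j)) * φ P i else 0)
            ≤ ∑ i, (∏ j, μ j (P j)) * φ P i := by
              refine Finset.sum_le_sum fun i _ => ?_
              split_ifs
              · exact le_rfl
              · exact mul_nonneg (Finset.prod_nonneg fun j _ => hμ0 j (P j)) (hφ0 P i)
          _ = (∏ j, μ j (P j)) * ∑ i, φ P i := (Finset.mul_sum _ _ _).symm
          _ ≤ (∏ j, μ j (P j)) * 1 :=
              mul_le_mul_of_nonneg_left (hφ1 P) (Finset.prod_nonneg fun j _ => hμ0 j (P j))
          _ = ∏ j, μ j (P j) := mul_one _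
      · push_neg at hex
        have heq : ∏ j, (μ j (P j) * if P j ∈ S j then 0 else 1) = ∏ j, μ j (P j) :=
          Finset.prod_congr rfl fun j _ => by rw [if_neg (hex j)]; ring
        rw [heq, sub_self]
        refine le_of_eq (Finset.sum_eq_zero fun i _ => ?_)
        rw [if_neg (hex i)]
    calc ∑ P : ∀ j, T j, (∑ i, if P i ∈ S i then (∏ j, μ j (P j)) * φ P i else 0)
        ≤ ∑ P : ∀ j, T j,
            ((∏ j, μ j (P j)) - ∏ j, (μ j (P j) * if P j ∈ S j then 0 else 1)) :=
          Finset.sum_le_sum fun P _ => hpt P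
      _ = 1 - ∏ i, (1 - ∑ A ∈ S i, μ i A) := by
          rw [Finset.sum_sub_distrib, total_prob μ hμ1, no_hit_prob μ hμ1 S]
  · intro hB
    by_contra hno
    -- the linear map from allocation rules to reduced forms
    set L : ((∀ i, T i) → Fin m → ℝ) →ₗ[ℝ] (((i : Fin m) × T i) → ℝ) :=
      { toFun := fun φ e => ∑ P : ∀ j, T j,
          (if P e.1 = e.2 then ∏ j ∈ Finset.univ.erase e.1, μ j (P j) else 0) * φ P e.1
        map_add' := by
          intro φ ψ; funext e
          simp only [Pi.add_apply, mul_add, Finset.sum_add_distrib]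
        map_smul' := by
          intro r φ; funext e
          simp only [Pi.smul_apply, smul_eq_mul, RingHom.id_apply, Finset.mul_sum]
          exact Finset.sum_congr rfl fun P _ => by ring } with hLdef
    have hLapp : ∀ (φ : (∀ i, T i) → Fin m → ℝ) (e : (i : Fin m) × T i),
        L φ e = ∑ P : ∀ j, T j,
          (if P e.1 = e.2 then ∏ j ∈ Finset.univ.erase e.1, μ j (P j) else 0) * φ P e.1 := by
      intro φ e; rfl
    have hLcont : Continuous L := by
      apply continuous_pi; intro e
      apply continuous_finset_sum; intro P _
      exact continuous_const.mul ((continuous_apply e.1).comp (continuous_apply P))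
    set K : Set ((∀ i, T i) → Fin m → ℝ) :=
      {φ | (∀ P i, 0 ≤ φ P i) ∧ ∀ P, ∑ i, φ P i ≤ 1} with hKdef
    have hKconv : Convex ℝ K := by
      rintro φ hφ ψ hψ a b ha hb hab
      refine ⟨fun P i => add_nonneg (mul_nonneg ha (hφ.1 P i)) (mul_nonneg hb (hψ.1 P i)), ?_⟩
      intro P
      have : ∑ i, (a • φ + b • ψ) P i = a * ∑ i, φ P i + b * ∑ i, ψ P i := by
        simp [Finset.mul_sum, Finset.sum_add_distrib]
      rw [this]
      calc a * ∑ i, φ P i + b * ∑ i, ψ P i ≤ a * 1 + b * 1 :=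
            add_le_add (mul_le_mul_of_nonneg_left (hφ.2 P) ha)
              (mul_le_mul_of_nonneg_left (hψ.2 P) hb)
        _ = 1 := by rw [mul_one, mul_one, hab]
    have hKcomp : IsCompact K := by
      have hsub : K ⊆ Set.pi Set.univ (fun _ : ∀ i, T i =>
          Set.pi Set.univ (fun _ : Fin m => Set.Icc (0:ℝ) 1)) := by
        intro φ hφ P _ i _
        refine ⟨hφ.1 P i, ?_⟩
        calc φ P i ≤ ∑ j, φ P j :=
              Finset.single_le_sum (fun j _ => hφ.1 P j) (Finset.mem_univ i)
          _ ≤ 1 := hφ.2 P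
      have hclosed : IsClosed K := by
        have : K = (⋂ P, ⋂ i, {φ : (∀ i, T i) → Fin m → ℝ | 0 ≤ φ P i})
            ∩ (⋂ P, {φ : (∀ i, T i) → Fin m → ℝ | ∑ i, φ P i ≤ 1}) := by
          ext φ
          simp only [Set.mem_setOf_eq, Set.mem_inter_iff, Set.mem_iInter, hKdef]
        rw [this]
        refine IsClosed.inter (isClosed_iInter fun P => isClosed_iInter fun i => ?_)
          (isClosed_iInter fun P => ?_)
        · exact isClosed_le continuous_const ((continuous_apply i).comp (continuous_apply P))
        · exact isClosed_le
            (continuous_finset_sum _ fun i _ => (continuous_apply i).comp (continuous_apply P))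
            continuous_const
      exact IsCompact.of_isClosed_subset
        (isCompact_univ_pi fun _ => isCompact_univ_pi fun _ => isCompact_Icc) hclosed hsub
    set x : ((i : Fin m) × T i) → ℝ := fun e => π e.1 e.2 with hxdef
    have hxC : x ∉ L '' K := by
      rintro ⟨φ, hφK, hφx⟩
      refine hno ⟨φ, hφK.1, hφK.2, fun i A => ?_⟩
      have := congrFun hφx ⟨i, A⟩
      rw [hLapp] at this
      calc (∑ P : ∀ j, T j, if P i = A then (∏ j ∈ Finset.univ.erase i, μ j (P j)) * φ P i else 0)
          = ∑ P : ∀ j, T j,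
              (if P i = A then ∏ j ∈ Finset.univ.erase i, μ j (P j) else 0) * φ P i :=
            Finset.sum_congr rfl fun P _ => by split_ifs <;> ring
        _ = x ⟨i, A⟩ := this
        _ = π i A := rfl
    obtain ⟨f, u, hfx, hfb⟩ := geometric_hahn_banach_point_closed
      (hKconv.linear_image L) ((hKcomp.image hLcont).isClosed) hxC
    set w : ((i : Fin m) × T i) → ℝ :=
      fun e => -(f (fun e' => if e = e' then 1 else 0)) with hwdef
    have hfexp : ∀ v : ((i : Fin m) × T i) → ℝ, f v = -∑ e, v e * w e := by
      intro v
      have h1 := LinearMap.pi_apply_eq_sum_univ (f : (((i : Fin m) × T i) → ℝ) →ₗ[ℝ] ℝ) v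
      simp only [ContinuousLinearMap.coe_coe] at h1
      rw [h1, ← Finset.sum_neg_distrib]
      refine Finset.sum_congr rfl fun e _ => ?_
      rw [hwdef]; simp only [smul_eq_mul]; ring
    -- strict separation in sum form
    have hgap : ∀ φ ∈ K, ∑ e, (L φ) e * w e < ∑ e, x e * w e := by
      intro φ hφ
      have h1 := hfx
      have h2 := hfb (L φ) ⟨φ, hφ, rfl⟩
      rw [hfexp] at h1 h2
      linarith
    -- coefficients and the pointwise maximum
    set cP : (∀ i, T i) → Fin m → ℝ :=
      fun P i => w ⟨i, P i⟩ * ∏ j ∈ Finset.univ.erase i, μ j (P j) with hcP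
    have hne : (Finset.univ : Finset (Fin m)).Nonempty := ⟨⟨0, hm⟩, Finset.mem_univ _⟩
    set M : (∀ i, T i) → ℝ := fun P => max (Finset.univ.sup' hne (cP P)) 0 with hM
    have hLapp' : ∀ (φ : (∀ i, T i) → Fin m → ℝ) (i : Fin m) (A : T i),
        L φ ⟨i, A⟩ = ∑ P : ∀ j, T j,
          (if P i = A then ∏ j ∈ Finset.univ.erase i, μ j (P j) else 0) * φ P i :=
      fun φ i A => rfl
    have hLw : ∀ φ : (∀ i, T i) → Fin m → ℝ,
        ∑ e : (i : Fin m) × T i, (L φ) e * w e = ∑ P : ∀ i, T i, ∑ i, cP P i * φ P i := by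
      intro φ
      calc ∑ e : (i : Fin m) × T i, (L φ) e * w e
          = ∑ i, ∑ A, (L φ) ⟨i, A⟩ * w ⟨i, A⟩ := by
            rw [← Finset.univ_sigma_univ, Finset.sum_sigma]
        _ = ∑ i, ∑ P : ∀ j, T j,
              (∏ j ∈ Finset.univ.erase i, μ j (P j)) * φ P i * w ⟨i, P i⟩ := by
            refine Finset.sum_congr rfl fun i _ => ?_
            calc ∑ A, (L φ) ⟨i, A⟩ * w ⟨i, A⟩
                = ∑ A, ∑ P : ∀ j, T j, (if P i = A then
                    (∏ j ∈ Finset.univ.erase i, μ j (P j)) * φ P i * w ⟨i, A⟩ else 0) := by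
                  refine Finset.sum_congr rfl fun A _ => ?_
                  rw [hLapp' φ i A, Finset.sum_mul]
                  refine Finset.sum_congr rfl fun P _ => by split_ifs <;> ring
              _ = ∑ P : ∀ j, T j, ∑ A, (if P i = A then
                    (∏ j ∈ Finset.univ.erase i, μ j (P j)) * φ P i * w ⟨i, A⟩ else 0) :=
                  Finset.sum_comm
              _ = ∑ P : ∀ j, T j,
                    (∏ j ∈ Finset.univ.erase i, μ j (P j)) * φ P i * w ⟨i, P i⟩ := by
                  refine Finset.sum_congr rfl fun P _ => ?_
                  rw [Finset.sum_ite_eq Finset.univ (P i)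
                    (fun A => (∏ j ∈ Finset.univ.erase i, μ j (P j)) * φ P i * w ⟨i, A⟩),
                    if_pos (Finset.mem_univ _)]
        _ = ∑ P : ∀ i, T i, ∑ i, cP P i * φ P i := by
            rw [Finset.sum_comm]
            exact Finset.sum_congr rfl fun P _ => Finset.sum_congr rfl fun i _ => by
              rw [hcP]; ring
    -- a greedy allocation achieving the pointwise maximum
    have hgreedy : ∃ φ ∈ K, ∑ P : ∀ i, T i, ∑ i, cP P i * φ P i = ∑ P : ∀ i, T i, M P := by
      have hch : ∀ P : ∀ i, T i, ∃ g : Fin m → ℝ,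
          (∀ i, 0 ≤ g i) ∧ (∑ i, g i ≤ 1) ∧ ∑ i, cP P i * g i = M P := by
        intro P
        obtain ⟨i₀, -, hi₀⟩ := Finset.exists_mem_eq_sup' hne (cP P)
        by_cases hp : 0 < Finset.univ.sup' hne (cP P)
        · refine ⟨fun i => if i = i₀ then 1 else 0,
            fun i => by by_cases h : i = i₀ <;> simp [h], ?_, ?_⟩
          · simp
          · have h1 : ∑ i, cP P i * (if i = i₀ then 1 else 0) = cP P i₀ := by
              have h2 : ∀ i, cP P i * (if i = i₀ then 1 else 0)
                  = (if i = i₀ then cP P i else 0) := by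
                intro i; split_ifs <;> ring
              rw [Finset.sum_congr rfl fun i _ => h2 i,
                Finset.sum_ite_eq' Finset.univ i₀ (cP P), if_pos (Finset.mem_univ _)]
            rw [h1]
            show cP P i₀ = Finset.univ.sup' hne (cP P) ⊔ 0
            rw [max_eq_left hp.le, hi₀]
        · refine ⟨fun _ => 0, fun _ => le_rfl, by simp, ?_⟩
          show ∑ i, cP P i * (0:ℝ) = Finset.univ.sup' hne (cP P) ⊔ 0
          rw [max_eq_right (not_lt.mp hp)]
          simp
      choose g hg0 hg1 hgs using hch
      exact ⟨fun P => g P, ⟨hg0, hg1⟩, Finset.sum_congr rfl fun P _ => hgs P⟩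
    obtain ⟨φs, hφsK, hφsM⟩ := hgreedy
    have hlt : ∑ P : ∀ i, T i, M P < ∑ e : (i : Fin m) × T i, x e * w e := by
      have hg := hgap φs hφsK
      rw [hLw φs, hφsM] at hg
      exact hg
    -- the key inequality: Border's conditions bound the weighted reduced form
    have hKI : ∑ e : (i : Fin m) × T i, x e * w e ≤ ∑ P : ∀ i, T i, M P := by
      set y : ∀ i, T i → ℝ :=
        fun i A => if 0 < μ i A then max (w ⟨i, A⟩) 0 / μ i A else 0 with hy
      have hy0 : ∀ i A, 0 ≤ y i A := by
        intro i A; rw [hy]; dsimp only; split_ifs with h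
        · exact div_nonneg (le_max_right _ _) h.le
        · exact le_rfl
      -- step 1: bound the weighted reduced form by zero-probability mass plus y-mass
      have hstep1 : ∑ e : (i : Fin m) × T i, x e * w e
          ≤ (∑ e ∈ Finset.univ.filter (fun e : (i : Fin m) × T i => ¬ 0 < μ e.1 e.2),
                max (w e) 0)
            + ∑ i, ∑ A, y i A * (π i A * μ i A) := by
        rw [← Finset.sum_filter_add_sum_filter_not Finset.univ
          (fun e : (i : Fin m) × T i => 0 < μ e.1 e.2) (fun e => x e * w e), add_comm]
        refine add_le_add ?_ ?_
        · refine Finset.sum_le_sum fun e _ => ?_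
          have h0 := hπ0 e.1 e.2; have h1 := hπ1 e.1 e.2
          rcases le_or_gt (w e) 0 with h | h
          · calc x e * w e ≤ 0 := mul_nonpos_of_nonneg_of_nonpos h0 h
              _ ≤ max (w e) 0 := le_max_right _ _
          · calc x e * w e ≤ 1 * w e := mul_le_mul_of_nonneg_right h1 h.le
              _ = w e := one_mul _
              _ ≤ max (w e) 0 := le_max_left _ _
        · calc ∑ e ∈ Finset.univ.filter (fun e : (i : Fin m) × T i => 0 < μ e.1 e.2), x e * w e
              ≤ ∑ e ∈ Finset.univ.filter (fun e : (i : Fin m) × T i => 0 < μ e.1 e.2),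
                  y e.1 e.2 * (π e.1 e.2 * μ e.1 e.2) := by
                refine Finset.sum_le_sum fun e he => ?_
                have hμpos : 0 < μ e.1 e.2 := (Finset.mem_filter.mp he).2
                have hrw : y e.1 e.2 * (π e.1 e.2 * μ e.1 e.2)
                    = max (w ⟨e.1, e.2⟩) 0 * π e.1 e.2 := by
                  rw [hy]; dsimp only; rw [if_pos hμpos]
                  field_simp
                have hee : (⟨e.1, e.2⟩ : (i : Fin m) × T i) = e := rfl
                rw [hrw, hee]
                calc x e * w e = π e.1 e.2 * w e := rfl
                  _ ≤ π e.1 e.2 * max (w e) 0 :=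
                      mul_le_mul_of_nonneg_left (le_max_left _ _) (hπ0 e.1 e.2)
                  _ = max (w e) 0 * π e.1 e.2 := mul_comm _ _
            _ ≤ ∑ e : (i : Fin m) × T i, y e.1 e.2 * (π e.1 e.2 * μ e.1 e.2) := by
                refine Finset.sum_le_sum_of_subset_of_nonneg (Finset.filter_subset _ _) ?_
                intro e _ _
                exact mul_nonneg (hy0 e.1 e.2) (mul_nonneg (hπ0 _ _) (hμ0 _ _))
            _ = ∑ i, ∑ A, y i A * (π i A * μ i A) := by
                rw [← Finset.univ_sigma_univ, Finset.sum_sigma]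
      -- step 2: the core layer-cake induction
      have hstep2 := border_core hm μ hμ0 hμ1 π hB
        (Finset.univ.card) y hy0 (Finset.card_filter_le _ _)
      -- step 3: expected positive max is at most the mass of fully supported profiles
      have hstep3 : ∑ P : ∀ i, T i, (∏ j, μ j (P j)) *
          (Finset.univ.sup' ⟨⟨0, hm⟩, Finset.mem_univ _⟩ (fun i => y i (P i)))
          ≤ ∑ P ∈ Finset.univ.filter (fun P : ∀ i, T i => ∀ j, 0 < μ j (P j)), M P := by
        rw [← Finset.sum_filter_add_sum_filter_not Finset.univ
          (fun P : ∀ i, T i => ∀ j, 0 < μ j (P j))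
          (fun P => (∏ j, μ j (P j)) *
            (Finset.univ.sup' ⟨⟨0, hm⟩, Finset.mem_univ _⟩ (fun i => y i (P i))))]
        have hvanish : ∑ P ∈ Finset.univ.filter (fun P : ∀ i, T i => ¬ ∀ j, 0 < μ j (P j)),
            (∏ j, μ j (P j)) *
              (Finset.univ.sup' ⟨⟨0, hm⟩, Finset.mem_univ _⟩ (fun i => y i (P i))) = 0 := by
          refine Finset.sum_eq_zero fun P hP => ?_
          have hnp := (Finset.mem_filter.mp hP).2
          push_neg at hnp
          obtain ⟨j₀, hj₀⟩ := hnp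
          have hz : μ j₀ (P j₀) = 0 := le_antisymm hj₀ (hμ0 _ _)
          rw [Finset.prod_eq_zero (Finset.mem_univ j₀) hz, zero_mul]
        rw [hvanish, add_zero]
        refine le_of_eq (Finset.sum_congr rfl fun P hP => ?_)
        have hPpos : ∀ j, 0 < μ j (P j) := (Finset.mem_filter.mp hP).2
        have hprodnn : 0 ≤ ∏ j, μ j (P j) := Finset.prod_nonneg fun j _ => (hPpos j).le
        rw [mul_sup' ⟨⟨0, hm⟩, Finset.mem_univ _⟩ _ hprodnn]
        have hterm : ∀ i ∈ (Finset.univ : Finset (Fin m)),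
            (∏ j, μ j (P j)) * y i (P i) = max (cP P i) 0 := by
          intro i _
          have hprode : 0 ≤ ∏ j ∈ Finset.univ.erase i, μ j (P j) :=
            Finset.prod_nonneg fun j _ => hμ0 _ _
          rw [hy]; dsimp only; rw [if_pos (hPpos i)]
          rw [← Finset.mul_prod_erase Finset.univ (fun j => μ j (P j)) (Finset.mem_univ i)]
          have hne0 : μ i (P i) ≠ 0 := (hPpos i).ne'
          have h2 : (μ i (P i) * ∏ j ∈ Finset.univ.erase i, μ j (P j))
                * (max (w ⟨i, P i⟩) 0 / μ i (P i))
              = max (w ⟨i, P i⟩) 0 * ∏ j ∈ Finset.univ.erase i, μ j (P j) := by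
            field_simp
          rw [h2, max_mul_of_nonneg _ _ hprode, zero_mul, hcP]
        refine (Finset.sup'_congr ⟨⟨0, hm⟩, Finset.mem_univ _⟩ rfl hterm).trans ?_
        rw [sup'_max_zero ⟨⟨0, hm⟩, Finset.mem_univ _⟩ (cP P)]
      -- step 4: zero-probability mass is covered by not-fully-supported profiles
      have hstep4 : (∑ e ∈ Finset.univ.filter (fun e : (i : Fin m) × T i => ¬ 0 < μ e.1 e.2),
            max (w e) 0)
          ≤ ∑ P ∈ Finset.univ.filter (fun P : ∀ i, T i => ¬ ∀ j, 0 < μ j (P j)), M P := by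
        set Z : Finset ((i : Fin m) × T i) :=
          Finset.univ.filter (fun e : (i : Fin m) × T i => ¬ 0 < μ e.1 e.2) with hZ
        set B : ((i : Fin m) × T i) → Finset (∀ i, T i) := fun e =>
          Finset.univ.filter (fun P => P e.1 = e.2 ∧ ∀ j, j ≠ e.1 → 0 < μ j (P j)) with hBdef
        have hM0 : ∀ P, 0 ≤ M P := fun P => le_max_right _ _
        -- the conditional mass of each slice is 1
        have hsum1 : ∀ (i : Fin m) (A : T i),
            ∑ P ∈ B ⟨i, A⟩, ∏ j ∈ Finset.univ.erase i, μ j (P j) = 1 := by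
          intro i A
          -- all slices have equal mass
          have hslice : ∀ t : T i,
              (∑ P : ∀ i, T i, if P i = t then ∏ j ∈ Finset.univ.erase i, μ j (P j) else 0)
              = ∑ P : ∀ i, T i, if P i = A then ∏ j ∈ Finset.univ.erase i, μ j (P j) else 0 := by
            intro t
            set σ : (∀ i, T i) → (∀ i, T i) := fun P =>
              Function.update P i (if P i = t then A else if P i = A then t else P i) with hσ
            have hσi : ∀ P : ∀ i, T i,
                σ P i = (if P i = t then A else if P i = A then t else P i) := by
              intro P; rw [hσ]; simp
            have hσj : ∀ (P : ∀ i, T i) (j : Fin m), j ≠ i → σ P j = P j := by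
              intro P j hj; rw [hσ]; simp [Function.update_of_ne hj]
            have hinv : ∀ P, σ (σ P) = P := by
              intro P; funext j
              by_cases hj : j = i
              · subst hj
                rw [hσi, hσi]
                by_cases h1 : P j = t <;> by_cases h2 : P j = A <;>
                  by_cases h3 : (t : T j) = A <;> simp [h1, h2, h3] <;>
                  simp [← h3, h1, h2] <;> tauto
              · rw [hσj _ _ hj, hσj _ _ hj]
            have hprodeq : ∀ P : ∀ i, T i,
                ∏ j ∈ Finset.univ.erase i, μ j (σ P j) = ∏ j ∈ Finset.univ.erase i, μ j (P j) :=
              fun P => Finset.prod_congr rfl fun j hj =>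
                by rw [hσj P j (Finset.ne_of_mem_erase hj)]
            have hcond : ∀ P : ∀ i, T i, P i = t ↔ σ P i = A := by
              intro P
              rw [hσi]
              constructor
              · intro h; rw [if_pos h]
              · intro h
                by_contra hc
                rw [if_neg hc] at h
                by_cases h2 : P i = A
                · rw [if_pos h2] at h; rw [h2, ← h] at hc; exact hc rfl
                · rw [if_neg h2] at h; exact h2 h
            refine Finset.sum_nbij' (fun P => σ P) (fun P => σ P) ?_ ?_ ?_ ?_ ?_
            · intro P _; exact Finset.mem_univ _
            · intro P _; exact Finset.mem_univ _
            · intro P _; exact hinv P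
            · intro P _; exact hinv P
            · intro P _
              by_cases h : P i = t
              · rw [if_pos h, if_pos ((hcond P).mp h), hprodeq]
              · rw [if_neg h, if_neg (fun hc => h ((hcond P).mpr hc))]
          -- total mass over all profiles equals the number of types of bidder i
          have htot : (∑ P : ∀ i, T i, ∏ j ∈ Finset.univ.erase i, μ j (P j))
              = (Fintype.card (T i) : ℝ) := by
            have hrw : ∀ P : ∀ i, T i, ∏ j ∈ Finset.univ.erase i, μ j (P j)
                = ∏ j, (if j = i then 1 else μ j (P j)) := by
              intro P
              rw [← Finset.mul_prod_erase Finset.univ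
                (fun j => if j = i then (1:ℝ) else μ j (P j)) (Finset.mem_univ i),
                if_pos rfl, one_mul]
              exact (Finset.prod_congr rfl fun j hj =>
                by rw [if_neg (Finset.ne_of_mem_erase hj)]).symm
            rw [Finset.sum_congr rfl fun P _ => hrw P,
              sum_prod_pi (fun j t => if j = i then (1:ℝ) else μ j t)]
            rw [← Finset.mul_prod_erase Finset.univ
              (fun j => ∑ t, if j = i then (1:ℝ) else μ j t) (Finset.mem_univ i)]
            have ha : ∑ t : T i, (if (i : Fin m) = i then (1:ℝ) else μ i t)
                = (Fintype.card (T i) : ℝ) := by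
              simp [Finset.card_univ]
            have hb : ∏ j ∈ Finset.univ.erase i,
                (∑ t, if j = i then (1:ℝ) else μ j t) = 1 := by
              refine Finset.prod_eq_one fun j hj => ?_
              have heq : ∑ t : T j, (if j = i then (1:ℝ) else μ j t) = ∑ t : T j, μ j t :=
                Finset.sum_congr rfl fun t _ =>
                  by rw [if_neg (Finset.ne_of_mem_erase hj)]
              rw [heq, hμ1]
            rw [ha, hb, mul_one]
          -- each slice therefore has mass 1
          have hcard : (0:ℝ) < (Fintype.card (T i) : ℝ) := by
            have : 0 < Fintype.card (T i) := Fintype.card_pos_iff.mpr ⟨A⟩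
            exact_mod_cast this
          have hAslice : (∑ P : ∀ i, T i,
              if P i = A then ∏ j ∈ Finset.univ.erase i, μ j (P j) else 0) = 1 := by
            have hkey : (Fintype.card (T i) : ℝ) * (∑ P : ∀ i, T i,
                if P i = A then ∏ j ∈ Finset.univ.erase i, μ j (P j) else 0)
                = (Fintype.card (T i) : ℝ) * 1 := by
              calc (Fintype.card (T i) : ℝ) * (∑ P : ∀ i, T i,
                  if P i = A then ∏ j ∈ Finset.univ.erase i, μ j (P j) else 0)
                  = ∑ t : T i, ∑ P : ∀ i, T i,
                      (if P i = t then ∏ j ∈ Finset.univ.erase i, μ j (P j) else 0) := by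
                    rw [Finset.sum_congr rfl fun t _ => hslice t, Finset.sum_const,
                      Finset.card_univ, nsmul_eq_mul]
                _ = ∑ P : ∀ i, T i, ∑ t : T i,
                      (if P i = t then ∏ j ∈ Finset.univ.erase i, μ j (P j) else 0) :=
                    Finset.sum_comm
                _ = ∑ P : ∀ i, T i, ∏ j ∈ Finset.univ.erase i, μ j (P j) := by
                    refine Finset.sum_congr rfl fun P _ => ?_
                    rw [Finset.sum_ite_eq Finset.univ (P i)
                      (fun _ => ∏ j ∈ Finset.univ.erase i, μ j (P j)),
                      if_pos (Finset.mem_univ _)]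
                _ = (Fintype.card (T i) : ℝ) := htot
                _ = (Fintype.card (T i) : ℝ) * 1 := (mul_one _).symm
            exact mul_left_cancel₀ hcard.ne' hkey
          -- restrict to the fully-supported (off i) slice
          have hsubB : B ⟨i, A⟩ ⊆ Finset.univ.filter (fun P : ∀ i, T i => P i = A) := by
            intro P hP
            exact Finset.mem_filter.mpr ⟨Finset.mem_univ _, ((Finset.mem_filter.mp hP).2).1⟩
          have hzero : ∀ P ∈ Finset.univ.filter (fun P : ∀ i, T i => P i = A),
              P ∉ B ⟨i, A⟩ → ∏ j ∈ Finset.univ.erase i, μ j (P j) = 0 := by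
            intro P hP hPB
            have hPiA : P i = A := (Finset.mem_filter.mp hP).2
            have hnc : ¬ (P i = A ∧ ∀ j, j ≠ i → 0 < μ j (P j)) := by
              intro hc
              exact hPB (Finset.mem_filter.mpr ⟨Finset.mem_univ _, hc⟩)
            push_neg at hnc
            obtain ⟨j₀, hj₀ne, hj₀⟩ := hnc hPiA
            have hz0 : μ j₀ (P j₀) = 0 := le_antisymm hj₀ (hμ0 _ _)
            exact Finset.prod_eq_zero
              (Finset.mem_erase.mpr ⟨hj₀ne, Finset.mem_univ _⟩) hz0
          calc ∑ P ∈ B ⟨i, A⟩, ∏ j ∈ Finset.univ.erase i, μ j (P j)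
              = ∑ P ∈ Finset.univ.filter (fun P : ∀ i, T i => P i = A),
                  ∏ j ∈ Finset.univ.erase i, μ j (P j) :=
                Finset.sum_subset hsubB hzero
            _ = ∑ P : ∀ i, T i,
                  (if P i = A then ∏ j ∈ Finset.univ.erase i, μ j (P j) else 0) :=
                Finset.sum_filter _ _
            _ = 1 := hAslice
        -- each zero-probability term is covered by its own block of profiles
        have hBone : ∀ e ∈ Z, max (w e) 0 ≤ ∑ P ∈ B e, M P := by
          rintro ⟨i, A⟩ hz
          have h1 : max (w ⟨i, A⟩) 0
              = ∑ P ∈ B ⟨i, A⟩, max (w ⟨i, A⟩) 0 * ∏ j ∈ Finset.univ.erase i, μ j (P j) := by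
            rw [← Finset.mul_sum, hsum1 i A, mul_one]
          rw [h1]
          refine Finset.sum_le_sum fun P hP => ?_
          have hPiA : P i = A := ((Finset.mem_filter.mp hP).2).1
          have hprode : 0 ≤ ∏ j ∈ Finset.univ.erase i, μ j (P j) :=
            Finset.prod_nonneg fun j _ => hμ0 _ _
          have hsig : (⟨i, P i⟩ : (i : Fin m) × T i) = ⟨i, A⟩ := by rw [hPiA]
          have hcPe : cP P i = w ⟨i, A⟩ * ∏ j ∈ Finset.univ.erase i, μ j (P j) := by
            rw [hcP]; dsimp only; rw [hsig]
          calc max (w ⟨i, A⟩) 0 * ∏ j ∈ Finset.univ.erase i, μ j (P j)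
              = max (cP P i) 0 := by
                rw [max_mul_of_nonneg _ _ hprode, zero_mul, hcPe]
            _ ≤ M P := max_le_max (Finset.le_sup' (cP P) (Finset.mem_univ i)) le_rfl
        -- the blocks are pairwise disjoint and not fully supported
        have hdisj : (↑Z : Set ((i : Fin m) × T i)).PairwiseDisjoint B := by
          rintro ⟨i, A⟩ he ⟨i', A'⟩ he' hnee
          rw [Function.onFun, Finset.disjoint_left]
          intro P hPe hPe'
          have h1 := (Finset.mem_filter.mp hPe).2
          have h2 := (Finset.mem_filter.mp hPe').2
          dsimp only at h1 h2
          by_cases hii : i = i'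
          · subst hii
            refine hnee ?_
            have hAA : A = A' := by rw [← h1.1, ← h2.1]
            rw [hAA]
          · have hz' : ¬ 0 < μ i' A' := by
              have hmem := Finset.mem_filter.mp (Finset.mem_coe.mp he')
              exact hmem.2
            have hgt := h1.2 i' (fun hc => hii hc.symm)
            rw [h2.1] at hgt
            exact hz' hgt
        have hBsub : Z.biUnion B ⊆
            Finset.univ.filter (fun P : ∀ i, T i => ¬ ∀ j, 0 < μ j (P j)) := by
          intro P hP
          obtain ⟨e, heZ, hPB⟩ := Finset.mem_biUnion.mp hP
          refine Finset.mem_filter.mpr ⟨Finset.mem_univ _, fun hall => ?_⟩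
          have hW := (Finset.mem_filter.mp hPB).2
          have hμz := (Finset.mem_filter.mp heZ).2
          rw [← hW.1] at hμz
          exact hμz (hall e.1)
        calc ∑ e ∈ Z, max (w e) 0
            ≤ ∑ e ∈ Z, ∑ P ∈ B e, M P := Finset.sum_le_sum hBone
          _ = ∑ P ∈ Z.biUnion B, M P := (Finset.sum_biUnion hdisj).symm
          _ ≤ ∑ P ∈ Finset.univ.filter (fun P : ∀ i, T i => ¬ ∀ j, 0 < μ j (P j)), M P :=
              Finset.sum_le_sum_of_subset_of_nonneg hBsub fun P _ _ => hM0 P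
      -- combine all the steps
      have hsplit := Finset.sum_filter_add_sum_filter_not Finset.univ
        (fun P : ∀ i, T i => ∀ j, 0 < μ j (P j)) M
      calc ∑ e : (i : Fin m) × T i, x e * w e
          ≤ (∑ e ∈ Finset.univ.filter (fun e : (i : Fin m) × T i => ¬ 0 < μ e.1 e.2),
                max (w e) 0)
              + ∑ i, ∑ A, y i A * (π i A * μ i A) := hstep1
        _ ≤ (∑ e ∈ Finset.univ.filter (fun e : (i : Fin m) × T i => ¬ 0 < μ e.1 e.2),
                max (w e) 0)
              + ∑ P : ∀ i, T i, (∏ j, μ j (P j)) *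
                  (Finset.univ.sup' ⟨⟨0, hm⟩, Finset.mem_univ _⟩ (fun i => y i (P i))) :=
            add_le_add_right hstep2 _
        _ ≤ (∑ P ∈ Finset.univ.filter (fun P : ∀ i, T i => ¬ ∀ j, 0 < μ j (P j)), M P)
              + ∑ P ∈ Finset.univ.filter (fun P : ∀ i, T i => ∀ j, 0 < μ j (P j)), M P :=
            add_le_add hstep4 hstep3
        _ = ∑ P : ∀ i, T i, M P := by rw [add_comm]; exact hsplit
    exact absurd hKI (not_le.mpr hlt)
end

section
/- For independent bidders with finite type spaces and a single item, a reduced form π is feasible if and only if for all x ≥ 0, the virtual-threshold sets S^{(i)}_x = {A ∈ T_i : \hat{π}_i(A) > x} (where \hat{π}_i(A) = Pr[π_i(t_i) ≤ π_i(A)]·π_i(A)) satisfy Σ_i Σ_{A ∈ S^{(i)}_x} π_i(A)·Pr[t_i = A] ≤ 1 − Π_i (1 − Pr[t_i ∈ S^{(i)}_x]). -/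
open Finset

set_option linter.unusedSectionVars false
set_option linter.unusedVariables false
set_option maxHeartbeats 1000000

section BorderAux
variable {m : ℕ} {T : Fin m → Type*} [∀ i, Fintype (T i)] [∀ i, DecidableEq (T i)]

/-- total mass of product measure -/
lemma prodMass (μ : ∀ i, T i → ℝ) (hμ1 : ∀ i, ∑ t, μ i t = 1) :
    ∑ P : ∀ i, T i, ∏ i, μ i (P i) = 1 := by
  rw [← Fintype.prod_sum (fun i A => μ i A)]
  simp [hμ1]

/-- coverage identity -/
lemma coverage (μ : ∀ i, T i → ℝ) (hμ1 : ∀ i, ∑ t, μ i t = 1)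
    (S : ∀ i, Finset (T i)) [∀ P : ∀ i, T i, Decidable (∃ i, P i ∈ S i)] :
    ∑ P : ∀ i, T i, (∏ i, μ i (P i)) * (if ∃ i, P i ∈ S i then (1:ℝ) else 0)
      = 1 - ∏ i, (1 - ∑ A ∈ S i, μ i A) := by
  have key : ∀ P : ∀ i, T i,
      (∏ i, μ i (P i)) * (if ∃ i, P i ∈ S i then (1:ℝ) else 0)
        = (∏ i, μ i (P i)) - ∏ i, (if P i ∈ S i then 0 else μ i (P i)) := by
    intro P
    by_cases h : ∃ i, P i ∈ S i
    · obtain ⟨i, hi⟩ := h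
      have h0 : ∏ i, (if P i ∈ S i then (0:ℝ) else μ i (P i)) = 0 :=
        Finset.prod_eq_zero (mem_univ i) (by simp [hi])
      rw [if_pos ⟨i, hi⟩, h0]; ring
    · rw [if_neg h]
      push_neg at h
      have h1 : ∏ i, (if P i ∈ S i then (0:ℝ) else μ i (P i)) = ∏ i, μ i (P i) :=
        Finset.prod_congr rfl fun i _ => by simp [h i]
      rw [h1]; ring
  rw [Finset.sum_congr rfl fun P _ => key P, Finset.sum_sub_distrib,
    prodMass μ hμ1]
  have h2 : ∑ P : ∀ i, T i, ∏ i, (if P i ∈ S i then (0:ℝ) else μ i (P i))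
      = ∏ i, (1 - ∑ A ∈ S i, μ i A) := by
    rw [← Fintype.prod_sum (fun i A => if A ∈ S i then (0:ℝ) else μ i A)]
    refine Finset.prod_congr rfl fun i _ => ?_
    have h3 : ∀ A : T i, (if A ∈ S i then (0:ℝ) else μ i A)
        = μ i A - (if A ∈ S i then μ i A else 0) := by
      intro A; by_cases h : A ∈ S i <;> simp [h]
    rw [Finset.sum_congr rfl fun A _ => h3 A, Finset.sum_sub_distrib, hμ1,
      Finset.sum_ite_mem, univ_inter]
  rw [h2]

/-- basic interim identity -/
lemma interim_identity (μ : ∀ i, T i → ℝ) (y : ∀ i, T i → ℝ)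
    (φ : (∀ i, T i) → Fin m → ℝ) :
    ∑ i, ∑ A, y i A * μ i A *
      (∑ P : ∀ j, T j, if P i = A then (∏ j ∈ univ.erase i, μ j (P j)) * φ P i else 0)
    = ∑ P : ∀ i, T i, (∏ i, μ i (P i)) * ∑ i, y i (P i) * φ P i := by
  have step1 : ∀ i : Fin m, ∑ A, y i A * μ i A *
      (∑ P : ∀ j, T j, if P i = A then (∏ j ∈ univ.erase i, μ j (P j)) * φ P i else 0)
      = ∑ P : ∀ j, T j, (∏ j, μ j (P j)) * (y i (P i) * φ P i) := by
    intro i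
    have : ∀ A, y i A * μ i A *
        (∑ P : ∀ j, T j, if P i = A then (∏ j ∈ univ.erase i, μ j (P j)) * φ P i else 0)
        = ∑ P : ∀ j, T j, (if P i = A then
            y i A * μ i A * ((∏ j ∈ univ.erase i, μ j (P j)) * φ P i) else 0) := by
      intro A
      rw [Finset.mul_sum]
      exact Finset.sum_congr rfl fun P _ => by split <;> simp
    rw [Finset.sum_congr rfl fun A _ => this A, Finset.sum_comm]
    refine Finset.sum_congr rfl fun P _ => ?_
    rw [Finset.sum_ite_eq univ (P i) (fun A =>
      y i A * μ i A * ((∏ j ∈ univ.erase i, μ j (P j)) * φ P i)), if_pos (mem_univ _)]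
    rw [← Finset.mul_prod_erase univ (fun j => μ j (P j)) (mem_univ i)]
    ring
  rw [Finset.sum_congr rfl fun i (_ : i ∈ univ) => step1 i, Finset.sum_comm]
  exact Finset.sum_congr rfl fun P _ => by rw [Finset.mul_sum]


/-- The general-set Border inequality holds for any feasible reduced form. -/
lemma border_of_feasible (μ : ∀ i, T i → ℝ) (hμ0 : ∀ i t, 0 ≤ μ i t)
    (hμ1 : ∀ i, ∑ t, μ i t = 1) (π : ∀ i, T i → ℝ)
    (φ : (∀ i, T i) → Fin m → ℝ) (hφ0 : ∀ P i, 0 ≤ φ P i) (hφ1 : ∀ P, ∑ i, φ P i ≤ 1)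
    (hint : ∀ (i : Fin m) (A : T i),
      (∑ P : ∀ j, T j, if P i = A then (∏ j ∈ univ.erase i, μ j (P j)) * φ P i else 0) = π i A)
    (S : ∀ i, Finset (T i)) :
    ∑ i, ∑ A ∈ S i, π i A * μ i A ≤ 1 - ∏ i, (1 - ∑ A ∈ S i, μ i A) := by
  classical
  set y : ∀ i, T i → ℝ := fun i A => if A ∈ S i then 1 else 0 with hy
  have lhs_eq : ∑ i, ∑ A ∈ S i, π i A * μ i A
      = ∑ P : ∀ i, T i, (∏ i, μ i (P i)) * ∑ i, y i (P i) * φ P i := by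
    rw [← interim_identity μ y φ]
    refine Finset.sum_congr rfl fun i _ => ?_
    rw [← Finset.sum_filter_add_sum_filter_not univ (· ∈ S i)
      (fun A => y i A * μ i A * _)]
    have h1 : ∑ A ∈ univ.filter (· ∈ S i), y i A * μ i A *
        (∑ P : ∀ j, T j, if P i = A then (∏ j ∈ univ.erase i, μ j (P j)) * φ P i else 0)
        = ∑ A ∈ S i, π i A * μ i A := by
      rw [Finset.filter_mem_eq_inter, univ_inter]
      refine Finset.sum_congr rfl fun A hA => ?_
      rw [hint i A]
      simp only [hy, if_pos hA]; ring
    have h2 : ∑ A ∈ univ.filter (¬ · ∈ S i), y i A * μ i A *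
        (∑ P : ∀ j, T j, if P i = A then (∏ j ∈ univ.erase i, μ j (P j)) * φ P i else 0)
        = 0 := by
      refine Finset.sum_eq_zero fun A hA => ?_
      rw [mem_filter] at hA
      simp only [hy, if_neg hA.2]; ring
    rw [h1, h2, add_zero]
  rw [lhs_eq, ← coverage μ hμ1 S]
  refine Finset.sum_le_sum fun P _ => ?_
  refine mul_le_mul_of_nonneg_left ?_ (Finset.prod_nonneg fun i _ => hμ0 i (P i))
  by_cases h : ∃ i, P i ∈ S i
  · rw [if_pos h]
    calc ∑ i, y i (P i) * φ P i ≤ ∑ i, φ P i := by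
          refine Finset.sum_le_sum fun i _ => ?_
          by_cases hi : P i ∈ S i
          · simp [hy, hi]
          · simp [hy, hi, hφ0 P i]
      _ ≤ 1 := hφ1 P
  · rw [if_neg h]
    push_neg at h
    refine le_of_eq (Finset.sum_eq_zero fun i _ => ?_)
    simp [hy, h i]


lemma border_general_of_virtual (μ : ∀ i, T i → ℝ) (hμ0 : ∀ i t, 0 ≤ μ i t)
    (hμ1 : ∀ i, ∑ t, μ i t = 1) (π : ∀ i, T i → ℝ) (hπ0 : ∀ i t, 0 ≤ π i t)
    (hv : ∀ x : ℝ, 0 ≤ x →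
      ∑ i, ∑ A ∈ Finset.univ.filter (fun A : T i =>
          x < (∑ B ∈ Finset.univ.filter (fun B : T i => π i B ≤ π i A), μ i B) * π i A),
        π i A * μ i A
      ≤ 1 - ∏ i, (1 - ∑ A ∈ Finset.univ.filter (fun A : T i =>
          x < (∑ B ∈ Finset.univ.filter (fun B : T i => π i B ≤ π i A), μ i B) * π i A),
            μ i A)) :
    ∀ S : ∀ i, Finset (T i),
      ∑ i, ∑ A ∈ S i, π i A * μ i A ≤ 1 - ∏ i, (1 - ∑ A ∈ S i, μ i A) := by
  classical
  set F : (∀ i, Finset (T i)) → ℝ := fun S =>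
    ∑ i, ∑ A ∈ S i, π i A * μ i A - (1 - ∏ i, (1 - ∑ A ∈ S i, μ i A)) with hF
  suffices hsuf : ∀ S, F S ≤ 0 by
    intro S; have := hsuf S; rw [hF] at this; dsimp at this; linarith
  have hne : Nonempty (∀ i, Finset (T i)) := ⟨fun _ => ∅⟩
  obtain ⟨S₀, -, hS₀⟩ := Finset.exists_max_image univ F univ_nonempty
  set C := univ.filter (fun S' : ∀ i, Finset (T i) => F S₀ ≤ F S') with hC
  have hCne : C.Nonempty := ⟨S₀, by simp [hC]⟩
  obtain ⟨S, hSC, hScard⟩ := Finset.exists_max_image C (fun S' => ∑ i, (S' i).card) hCne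
  have hFS : ∀ S', F S' ≤ F S := fun S' =>
    le_trans (hS₀ S' (mem_univ _)) (mem_filter.mp hSC).2
  suffices hS0 : F S ≤ 0 from fun S' => (hFS S').trans hS0
  -- notation
  set cmin : ∀ i : Fin m, ℝ := fun i => ∏ j ∈ univ.erase i, (1 - ∑ B ∈ S j, μ j B) with hcmin
  set c : ℝ := ∏ i, (1 - ∑ A ∈ S i, μ i A) with hcdef
  have hms : ∀ (i) (t : Finset (T i)), ∑ A ∈ t, μ i A ≤ 1 := fun i t => by
    rw [← hμ1 i]
    exact Finset.sum_le_sum_of_subset_of_nonneg (subset_univ t) fun A _ _ => hμ0 i A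
  have hms0 : ∀ (i) (t : Finset (T i)), (0:ℝ) ≤ ∑ A ∈ t, μ i A := fun i t =>
    Finset.sum_nonneg fun A _ => hμ0 i A
  have h01 : ∀ (i) (t : Finset (T i)), (0:ℝ) ≤ 1 - ∑ A ∈ t, μ i A := fun i t => by
    have := hms i t; linarith
  have hcmin0 : ∀ i, 0 ≤ cmin i := fun i =>
    Finset.prod_nonneg fun j _ => h01 j (S j)
  have hccmin : ∀ i, c = (1 - ∑ A ∈ S i, μ i A) * cmin i := fun i =>
    (Finset.mul_prod_erase univ _ (mem_univ i)).symm
  have hc0 : 0 ≤ c := Finset.prod_nonneg fun j _ => h01 j (S j)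
  -- update formula
  have hupd : ∀ (i) (t : Finset (T i)), F (Function.update S i t) =
      F S + ((∑ A ∈ t, π i A * μ i A) - ∑ A ∈ S i, π i A * μ i A)
        + ((∑ A ∈ S i, μ i A) - ∑ A ∈ t, μ i A) * cmin i := by
    intro i t
    have e1 : ∑ j, ∑ A ∈ (Function.update S i t) j, π j A * μ j A
        = (∑ A ∈ t, π i A * μ i A) + ∑ j ∈ univ.erase i, ∑ A ∈ S j, π j A * μ j A := by
      rw [← Finset.add_sum_erase univ _ (mem_univ i)]
      congr 1
      · rw [Function.update_self]
      · refine Finset.sum_congr rfl fun j hj => ?_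
        rw [Function.update_of_ne (mem_erase.mp hj).1]
    have e2 : ∏ j, (1 - ∑ A ∈ (Function.update S i t) j, μ j A)
        = (1 - ∑ A ∈ t, μ i A) * cmin i := by
      rw [← Finset.mul_prod_erase univ _ (mem_univ i), Function.update_self]
      congr 1
      refine Finset.prod_congr rfl fun j hj => ?_
      rw [Function.update_of_ne (mem_erase.mp hj).1]
    have e3 : ∑ j, ∑ A ∈ S j, π j A * μ j A
        = (∑ A ∈ S i, π i A * μ i A) + ∑ j ∈ univ.erase i, ∑ A ∈ S j, π j A * μ j A :=
      (Finset.add_sum_erase univ _ (mem_univ i)).symm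
    rw [hF]; dsimp only
    rw [e1, e2, e3, ← hcdef, hccmin i]; ring
  -- P1
  have P1 : ∀ (i) (A : T i), A ∉ S i → 0 < μ i A ∧ π i A < cmin i := by
    intro i A hA
    have hins : F (Function.update S i (insert A (S i)))
        = F S + μ i A * (π i A - cmin i) := by
      rw [hupd i (insert A (S i)), Finset.sum_insert hA, Finset.sum_insert hA]; ring
    have h1 : μ i A * (π i A - cmin i) ≤ 0 := by
      have := hFS (Function.update S i (insert A (S i))); rw [hins] at this; linarith
    have h2 : μ i A * (π i A - cmin i) ≠ 0 := by
      intro h0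
      have hmem : Function.update S i (insert A (S i)) ∈ C := by
        rw [hC, mem_filter]
        refine ⟨mem_univ _, ?_⟩
        rw [hins, h0, add_zero]
        exact (mem_filter.mp hSC).2
      have hcard := hScard _ hmem
      have e4 : ∑ j, ((Function.update S i (insert A (S i))) j).card
          = (∑ j, (S j).card) + 1 := by
        rw [← Finset.add_sum_erase univ _ (mem_univ i),
          ← Finset.add_sum_erase univ (fun j => (S j).card) (mem_univ i),
          Function.update_self, Finset.card_insert_of_notMem hA]
        have : ∑ j ∈ univ.erase i, ((Function.update S i (insert A (S i))) j).card
            = ∑ j ∈ univ.erase i, (S j).card :=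
          Finset.sum_congr rfl fun j hj => by
            rw [Function.update_of_ne (mem_erase.mp hj).1]
        omega
      rw [e4] at hcard; omega
    have h3 : μ i A * (π i A - cmin i) < 0 := lt_of_le_of_ne h1 h2
    have h4 : 0 < μ i A := by
      rcases lt_or_eq_of_le (hμ0 i A) with h | h
      · exact h
      · exfalso; rw [← h, zero_mul] at h3; exact lt_irrefl _ h3
    refine ⟨h4, ?_⟩
    by_contra h5
    push_neg at h5
    have : 0 ≤ μ i A * (π i A - cmin i) := mul_nonneg h4.le (by linarith)
    linarith
  -- P2
  have P2 : ∀ (i) (A : T i), A ∈ S i → 0 < μ i A → cmin i ≤ π i A := by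
    intro i A hA hμA
    have hers : F (Function.update S i ((S i).erase A))
        = F S - μ i A * (π i A - cmin i) := by
      rw [hupd i ((S i).erase A), Finset.sum_erase_eq_sub hA, Finset.sum_erase_eq_sub hA]
      ring
    have h1 : 0 ≤ μ i A * (π i A - cmin i) := by
      have := hFS (Function.update S i ((S i).erase A)); rw [hers] at this; linarith
    by_contra h5
    push_neg at h5
    have : μ i A * (π i A - cmin i) < 0 := mul_neg_of_pos_of_neg hμA (by linarith)
    linarith
  -- virtual threshold set at level c
  have hvc := hv c hc0
  have V1 : ∀ (i) (A : T i), 0 < μ i A →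
      A ∈ univ.filter (fun A : T i =>
        c < (∑ B ∈ univ.filter (fun B : T i => π i B ≤ π i A), μ i B) * π i A) →
      A ∈ S i := by
    intro i A hμA hAV
    by_contra hA
    obtain ⟨-, hπA⟩ := P1 i A hA
    have hPr : (∑ B ∈ univ.filter (fun B : T i => π i B ≤ π i A), μ i B)
        ≤ 1 - ∑ B ∈ S i, μ i B := by
      have hsub : (univ.filter (fun B : T i => π i B ≤ π i A)).filter
          (fun B => μ i B ≠ 0) ⊆ (S i)ᶜ := by
        intro B hB
        rw [mem_filter] at hB
        obtain ⟨hB1, hB2⟩ := hB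
        rw [mem_filter] at hB1
        rw [Finset.mem_compl]
        intro hBS
        have hμB : 0 < μ i B := lt_of_le_of_ne (hμ0 i B) (Ne.symm hB2)
        have := P2 i B hBS hμB
        linarith [hB1.2]
      calc (∑ B ∈ univ.filter (fun B : T i => π i B ≤ π i A), μ i B)
          = ∑ B ∈ (univ.filter (fun B : T i => π i B ≤ π i A)).filter
            (fun B => μ i B ≠ 0), μ i B := (Finset.sum_filter_ne_zero _).symm
        _ ≤ ∑ B ∈ (S i)ᶜ, μ i B :=
            Finset.sum_le_sum_of_subset_of_nonneg hsub fun B _ _ => hμ0 i B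
        _ = 1 - ∑ B ∈ S i, μ i B := by
            have := Finset.sum_compl_add_sum (S i) (μ i)
            rw [hμ1 i] at this; linarith
    have hfin : (∑ B ∈ univ.filter (fun B : T i => π i B ≤ π i A), μ i B) * π i A ≤ c := by
      calc (∑ B ∈ univ.filter (fun B : T i => π i B ≤ π i A), μ i B) * π i A
          ≤ (1 - ∑ B ∈ S i, μ i B) * π i A :=
            mul_le_mul_of_nonneg_right hPr (hπ0 i A)
        _ ≤ (1 - ∑ B ∈ S i, μ i B) * cmin i :=
            mul_le_mul_of_nonneg_left hπA.le (h01 i (S i))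
        _ = c := (hccmin i).symm
    rw [mem_filter] at hAV
    linarith [hAV.2]
  have V2 : ∀ (i) (A : T i), A ∈ S i → 0 < μ i A → 0 < π i A →
      A ∈ univ.filter (fun A : T i =>
        c < (∑ B ∈ univ.filter (fun B : T i => π i B ≤ π i A), μ i B) * π i A) := by
    intro i A hAS hμA hπA
    have hcm : cmin i ≤ π i A := P2 i A hAS hμA
    have hPr : 1 - (∑ B ∈ S i, μ i B) + μ i A
        ≤ ∑ B ∈ univ.filter (fun B : T i => π i B ≤ π i A), μ i B := by
      have hsub : insert A ((S i)ᶜ) ⊆ univ.filter (fun B : T i => π i B ≤ π i A) := by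
        intro B hB
        rw [Finset.mem_insert] at hB
        rw [mem_filter]
        refine ⟨mem_univ _, ?_⟩
        rcases hB with rfl | hB
        · exact le_refl _
        · rw [Finset.mem_compl] at hB
          obtain ⟨-, h⟩ := P1 i B hB
          linarith
      have hAn : A ∉ (S i)ᶜ := by rw [Finset.mem_compl]; exact fun h => h hAS
      calc 1 - (∑ B ∈ S i, μ i B) + μ i A
          = ∑ B ∈ insert A ((S i)ᶜ), μ i B := by
            rw [Finset.sum_insert hAn]
            have := Finset.sum_compl_add_sum (S i) (μ i)
            rw [hμ1 i] at this; linarith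
        _ ≤ _ := Finset.sum_le_sum_of_subset_of_nonneg hsub fun B _ _ => hμ0 i B
    have hgoal : c < (∑ B ∈ univ.filter (fun B : T i => π i B ≤ π i A), μ i B) * π i A := by
      have e1 : c ≤ (1 - ∑ B ∈ S i, μ i B) * π i A := by
        rw [hccmin i]
        exact mul_le_mul_of_nonneg_left hcm (h01 i (S i))
      have e2 : (1 - (∑ B ∈ S i, μ i B) + μ i A) * π i A
          ≤ (∑ B ∈ univ.filter (fun B : T i => π i B ≤ π i A), μ i B) * π i A :=
        mul_le_mul_of_nonneg_right hPr hπA.le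
      nlinarith [mul_pos hμA hπA]
    rw [mem_filter]
    exact ⟨mem_univ _, hgoal⟩
  have veq : ∀ i, ∑ A ∈ univ.filter (fun A : T i =>
        c < (∑ B ∈ univ.filter (fun B : T i => π i B ≤ π i A), μ i B) * π i A),
        π i A * μ i A
      = ∑ A ∈ S i, π i A * μ i A := by
    intro i
    set W : Finset (T i) := univ.filter (fun A : T i =>
        c < (∑ B ∈ univ.filter (fun B : T i => π i B ≤ π i A), μ i B) * π i A) with hW
    have e1 : ∑ A ∈ W ∩ S i, π i A * μ i A = ∑ A ∈ W, π i A * μ i A := by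
      refine Finset.sum_subset Finset.inter_subset_left fun A hA hA' => ?_
      have hAS : A ∉ S i := fun h => hA' (Finset.mem_inter.mpr ⟨hA, h⟩)
      have hμA : μ i A = 0 := by
        by_contra h
        exact hAS (V1 i A (lt_of_le_of_ne (hμ0 i A) (Ne.symm h)) hA)
      rw [hμA, mul_zero]
    have e2 : ∑ A ∈ W ∩ S i, π i A * μ i A = ∑ A ∈ S i, π i A * μ i A := by
      refine Finset.sum_subset Finset.inter_subset_right fun A hA hA' => ?_
      have hAV : A ∉ W := fun h => hA' (Finset.mem_inter.mpr ⟨h, hA⟩)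
      rcases eq_or_lt_of_le (hμ0 i A) with h | h
      · rw [← h, mul_zero]
      rcases eq_or_lt_of_le (hπ0 i A) with h' | h'
      · rw [← h', zero_mul]
      exact absurd (V2 i A hA h h') hAV
    rw [← e1, e2]
  have vle : ∀ i, ∑ A ∈ univ.filter (fun A : T i =>
        c < (∑ B ∈ univ.filter (fun B : T i => π i B ≤ π i A), μ i B) * π i A), μ i A
      ≤ ∑ A ∈ S i, μ i A := by
    intro i
    set W : Finset (T i) := univ.filter (fun A : T i =>
        c < (∑ B ∈ univ.filter (fun B : T i => π i B ≤ π i A), μ i B) * π i A) with hW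
    have e1 : ∑ A ∈ W ∩ S i, μ i A = ∑ A ∈ W, μ i A := by
      refine Finset.sum_subset Finset.inter_subset_left fun A hA hA' => ?_
      have hAS : A ∉ S i := fun h => hA' (Finset.mem_inter.mpr ⟨hA, h⟩)
      by_contra h
      exact hAS (V1 i A (lt_of_le_of_ne (hμ0 i A) (Ne.symm h)) hA)
    rw [← e1]
    exact Finset.sum_le_sum_of_subset_of_nonneg Finset.inter_subset_right
      fun A _ _ => hμ0 i A
  have hprodle : ∏ i, (1 - ∑ A ∈ S i, μ i A)
      ≤ ∏ i, (1 - ∑ A ∈ univ.filter (fun A : T i =>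
          c < (∑ B ∈ univ.filter (fun B : T i => π i B ≤ π i A), μ i B) * π i A), μ i A) :=
    Finset.prod_le_prod (fun i _ => h01 i (S i)) fun i _ => by linarith [vle i]
  have hsum_eq : ∑ i, ∑ A ∈ S i, π i A * μ i A
      = ∑ i, ∑ A ∈ univ.filter (fun A : T i =>
          c < (∑ B ∈ univ.filter (fun B : T i => π i B ≤ π i A), μ i B) * π i A),
          π i A * μ i A :=
    Finset.sum_congr rfl fun i _ => (veq i).symm
  rw [hF]; dsimp only
  linarith [hprodle, hvc, hsum_eq]

/-- layer-cake: the dual inequality for arbitrary nonnegative weights -/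
lemma layercake (hune : (univ : Finset (Fin m)).Nonempty)
    (μ : ∀ i, T i → ℝ) (hμ0 : ∀ i t, 0 ≤ μ i t)
    (hμ1 : ∀ i, ∑ t, μ i t = 1) (π : ∀ i, T i → ℝ)
    (hborder : ∀ S : ∀ i, Finset (T i),
      ∑ i, ∑ A ∈ S i, π i A * μ i A ≤ 1 - ∏ i, (1 - ∑ A ∈ S i, μ i A))
    (y : ∀ i, T i → ℝ) (hy : ∀ i A, 0 ≤ y i A) :
    ∑ i, ∑ A, y i A * (π i A * μ i A)
      ≤ ∑ P : ∀ i, T i, (∏ i, μ i (P i)) * (univ.sup' hune (fun i => y i (P i))) := by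
  classical
  suffices key : ∀ (n : ℕ) (y : ∀ i, T i → ℝ), (∀ i A, 0 ≤ y i A) →
      (insert (0:ℝ) (univ.image (fun p : Σ i, T i => y p.1 p.2))).card ≤ n →
      ∑ i, ∑ A, y i A * (π i A * μ i A)
        ≤ ∑ P : ∀ i, T i, (∏ i, μ i (P i)) * (univ.sup' hune (fun i => y i (P i))) by
    exact key _ y hy le_rfl
  intro n
  induction n with
  | zero =>
    intro y hy hcard
    exfalso
    have : 0 < (insert (0:ℝ) (univ.image (fun p : Σ i, T i => y p.1 p.2))).card :=
      Finset.card_pos.mpr ⟨0, Finset.mem_insert_self _ _⟩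
    omega
  | succ n ih =>
    intro y hy hcard
    set W := insert (0:ℝ) (univ.image (fun p : Σ i, T i => y p.1 p.2)) with hW
    have hWne : W.Nonempty := ⟨0, Finset.mem_insert_self _ _⟩
    have hmemW : ∀ i A, y i A ∈ W := fun i A =>
      Finset.mem_insert_of_mem (Finset.mem_image.mpr ⟨⟨i, A⟩, mem_univ _, rfl⟩)
    set M := W.max' hWne with hM
    rcases le_or_gt M 0 with hM0 | hM0
    · -- all values zero
      have hy0 : ∀ i A, y i A = 0 := fun i A =>
        le_antisymm (le_trans (Finset.le_max' W _ (hmemW i A)) hM0) (hy i A)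
      have hL : ∑ i, ∑ A, y i A * (π i A * μ i A) = 0 :=
        Finset.sum_eq_zero fun i _ => Finset.sum_eq_zero fun A _ => by
          rw [hy0 i A, zero_mul]
      have hR : ∀ P : ∀ i, T i,
          (univ.sup' hune (fun i => y i (P i))) = 0 := fun P => by
        rw [show (fun i => y i (P i)) = fun _ => (0:ℝ) from funext fun i => hy0 i (P i)]
        exact Finset.sup'_const hune 0
      rw [hL]
      refine Finset.sum_nonneg fun P _ => ?_
      rw [hR P, mul_zero]
    · -- M > 0
      have hMW : M ∈ W := W.max'_mem hWne
      set W' := W.erase M with hW'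
      have h0W' : (0:ℝ) ∈ W' :=
        Finset.mem_erase.mpr ⟨ne_of_lt hM0, Finset.mem_insert_self _ _⟩
      have hW'ne : W'.Nonempty := ⟨0, h0W'⟩
      set m2 := W'.max' hW'ne with hm2
      have hm2W' : m2 ∈ W' := W'.max'_mem hW'ne
      have hm2M : m2 < M :=
        lt_of_le_of_ne (Finset.le_max' W m2 (Finset.mem_of_mem_erase hm2W'))
          (Finset.mem_erase.mp hm2W').1
      have hm20 : 0 ≤ m2 := Finset.le_max' W' 0 h0W'
      have htop : ∀ i A, m2 < y i A → y i A = M := by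
        intro i A h
        by_contra hne
        have : y i A ∈ W' := Finset.mem_erase.mpr ⟨hne, hmemW i A⟩
        exact absurd (Finset.le_max' W' _ this) (not_le.mpr h)
      have hleM : ∀ i A, y i A ≤ M := fun i A => Finset.le_max' W _ (hmemW i A)
      set y' : ∀ i, T i → ℝ := fun i A => min (y i A) m2 with hy'def
      have hy'A : ∀ i A, y' i A = min (y i A) m2 := fun i A => rfl
      have hy'0 : ∀ i A, 0 ≤ y' i A := fun i A => le_min (hy i A) hm20
      set S : ∀ i, Finset (T i) := fun i => univ.filter (fun A => m2 < y i A) with hS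
      have hmemS : ∀ i (A : T i), A ∈ S i ↔ m2 < y i A := by
        intro i A; rw [hS]; simp
      -- identity 1
      have id1 : ∀ i A, y i A = y' i A + (M - m2) * (if A ∈ S i then 1 else 0) := by
        intro i A
        by_cases h : m2 < y i A
        · rw [if_pos ((hmemS i A).mpr h), hy'A, htop i A h, min_eq_right hm2M.le]; ring
        · rw [if_neg (fun hc => h ((hmemS i A).mp hc)), hy'A,
            min_eq_left (not_lt.mp h)]; ring
      -- identity 2
      have id2 : ∀ P : ∀ i, T i, univ.sup' hune (fun i => y i (P i))
          = univ.sup' hune (fun i => y' i (P i))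
            + (M - m2) * (if ∃ i, P i ∈ S i then 1 else 0) := by
        intro P
        by_cases h : ∃ i, P i ∈ S i
        · obtain ⟨i₀, hi₀⟩ := h
          have hi₀' : m2 < y i₀ (P i₀) := (hmemS i₀ (P i₀)).mp hi₀
          have hyM : y i₀ (P i₀) = M := htop _ _ hi₀'
          have e1 : univ.sup' hune (fun i => y i (P i)) = M := by
            apply le_antisymm
            · exact Finset.sup'_le _ _ fun i _ => hleM i (P i)
            · rw [← hyM]
              exact Finset.le_sup' (fun i => y i (P i)) (mem_univ i₀)
          have e2 : univ.sup' hune (fun i => y' i (P i)) = m2 := by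
            apply le_antisymm
            · refine Finset.sup'_le _ _ fun i _ => ?_
              rw [hy'A]
              exact min_le_right _ _
            · have h3 : y' i₀ (P i₀) = m2 := by
                rw [hy'A, hyM]; exact min_eq_right hm2M.le
              rw [← h3]; exact Finset.le_sup' (fun i => y' i (P i)) (mem_univ i₀)
          rw [e1, e2, if_pos ⟨i₀, hi₀⟩]; ring
        · have hall : ∀ i, y i (P i) ≤ m2 := by
            intro i
            by_contra hcon
            push_neg at hcon
            exact h ⟨i, (hmemS i (P i)).mpr hcon⟩
          have e1 : univ.sup' hune (fun i => y' i (P i))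
              = univ.sup' hune (fun i => y i (P i)) := by
            apply Finset.sup'_congr _ rfl
            intro i _
            rw [hy'A]; exact min_eq_left (hall i)
          rw [e1, if_neg h]; ring
      -- card bound for y'
      have hcard' : (insert (0:ℝ) (univ.image (fun p : Σ i, T i => y' p.1 p.2))).card ≤ n := by
        have hsub : insert (0:ℝ) (univ.image (fun p : Σ i, T i => y' p.1 p.2)) ⊆ W' := by
          intro v hv
          rcases Finset.mem_insert.mp hv with rfl | hv
          · exact h0W'
          · obtain ⟨⟨i, A⟩, -, rfl⟩ := Finset.mem_image.mp hv
            by_cases h : y i A ≤ m2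
            · rw [hy'A, min_eq_left h]
              refine Finset.mem_erase.mpr ⟨?_, hmemW i A⟩
              intro hEq
              rw [hEq] at h
              exact absurd hm2M (not_lt.mpr h)
            · push_neg at h
              rw [hy'A, min_eq_right (le_of_lt h)]
              exact hm2W'
        calc (insert (0:ℝ) (univ.image (fun p : Σ i, T i => y' p.1 p.2))).card
            ≤ W'.card := Finset.card_le_card hsub
          _ = W.card - 1 := Finset.card_erase_of_mem hMW
          _ ≤ n := by omega
      have IH := ih y' hy'0 hcard'
      -- assemble
      have hLsplit : ∑ i, ∑ A, y i A * (π i A * μ i A)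
          = (∑ i, ∑ A, y' i A * (π i A * μ i A))
            + (M - m2) * ∑ i, ∑ A ∈ S i, π i A * μ i A := by
        rw [Finset.mul_sum, ← Finset.sum_add_distrib]
        refine Finset.sum_congr rfl fun i _ => ?_
        have e : ∑ A, (if A ∈ S i then (M - m2) * (π i A * μ i A) else 0)
            = (M - m2) * ∑ A ∈ S i, π i A * μ i A := by
          rw [Finset.sum_ite_mem, univ_inter, Finset.mul_sum]
        rw [← e, ← Finset.sum_add_distrib]
        refine Finset.sum_congr rfl fun A _ => ?_
        rw [id1 i A]
        by_cases h : A ∈ S i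
        · rw [if_pos h, if_pos h]; ring
        · rw [if_neg h, if_neg h]; ring
      have hRsplit : ∑ P : ∀ i, T i, (∏ i, μ i (P i)) * (univ.sup' hune (fun i => y i (P i)))
          = (∑ P : ∀ i, T i, (∏ i, μ i (P i)) * (univ.sup' hune (fun i => y' i (P i))))
            + (M - m2) * (1 - ∏ i, (1 - ∑ A ∈ S i, μ i A)) := by
        rw [← coverage μ hμ1 S, Finset.mul_sum, ← Finset.sum_add_distrib]
        refine Finset.sum_congr rfl fun P _ => ?_
        rw [id2 P]
        ring
      rw [hLsplit, hRsplit]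
      have hB := hborder S
      have hMm2 : 0 ≤ M - m2 := by linarith
      have := mul_le_mul_of_nonneg_left hB hMm2
      linarith [IH]

/-- the interim (μ-weighted) allocation map, as a linear map -/
noncomputable def interimMap (μ : ∀ i, T i → ℝ) :
    ((∀ i, T i) → Fin m → ℝ) →ₗ[ℝ] (∀ i, T i → ℝ) where
  toFun φ := fun i A => μ i A *
    ∑ P : ∀ j, T j, if P i = A then (∏ j ∈ univ.erase i, μ j (P j)) * φ P i else 0
  map_add' φ ψ := by
    funext i A
    have h : ∀ P : ∀ j, T j,
        (if P i = A then (∏ j ∈ univ.erase i, μ j (P j)) * (φ P i + ψ P i) else 0)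
        = (if P i = A then (∏ j ∈ univ.erase i, μ j (P j)) * φ P i else 0)
          + (if P i = A then (∏ j ∈ univ.erase i, μ j (P j)) * ψ P i else 0) := by
      intro P
      by_cases h : P i = A
      · simp only [if_pos h]; ring
      · simp only [if_neg h, add_zero]
    simp only [Pi.add_apply]
    rw [Finset.sum_congr rfl fun P _ => h P, Finset.sum_add_distrib]
    ring
  map_smul' c φ := by
    funext i A
    have h : ∀ P : ∀ j, T j,
        (if P i = A then (∏ j ∈ univ.erase i, μ j (P j)) * (c * φ P i) else 0)
        = c * (if P i = A then (∏ j ∈ univ.erase i, μ j (P j)) * φ P i else 0) := by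
      intro P
      by_cases h : P i = A
      · simp only [if_pos h]; ring
      · simp only [if_neg h, mul_zero]
    simp only [RingHom.id_apply, Pi.smul_apply, smul_eq_mul]
    rw [Finset.sum_congr rfl fun P _ => h P, ← Finset.mul_sum]
    ring

lemma interimMap_apply (μ : ∀ i, T i → ℝ) (φ : (∀ i, T i) → Fin m → ℝ)
    (i : Fin m) (A : T i) :
    interimMap μ φ i A = μ i A *
      ∑ P : ∀ j, T j, if P i = A then (∏ j ∈ univ.erase i, μ j (P j)) * φ P i else 0 := rfl

/-- representation of a continuous linear functional on the pi space -/
lemma clm_rep (f : (∀ i, T i → ℝ) →L[ℝ] ℝ) (c : ∀ i, T i → ℝ)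
    (hc : ∀ i A, c i A = f (Pi.single i (Pi.single A 1))) (z : ∀ i, T i → ℝ) :
    f z = ∑ i, ∑ A, z i A * c i A := by
  have hz : z = ∑ i, ∑ A, z i A • (Pi.single i (Pi.single A (1:ℝ)) : ∀ k, T k → ℝ) := by
    funext j B
    simp only [Finset.sum_apply, Pi.smul_apply, smul_eq_mul]
    rw [Finset.sum_eq_single j]
    · have h1 : ∀ A : T j, z j A * ((Pi.single j (Pi.single A (1:ℝ)) : ∀ k, T k → ℝ) j B)
          = if B = A then z j A else 0 := by
        intro A
        rw [Pi.single_eq_same, Pi.single_apply]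
        by_cases h : B = A
        · rw [if_pos h, if_pos h, mul_one]
        · rw [if_neg h, if_neg h, mul_zero]
      rw [Finset.sum_congr rfl fun A _ => h1 A, Finset.sum_ite_eq univ B (z j),
        if_pos (mem_univ B)]
    · intro i _ hij
      refine Finset.sum_eq_zero fun A _ => ?_
      rw [Pi.single_eq_of_ne (Ne.symm hij)]
      simp
    · intro h; exact absurd (mem_univ j) h
  conv_lhs => rw [hz]
  rw [map_sum]
  refine Finset.sum_congr rfl fun i _ => ?_
  rw [map_sum]
  refine Finset.sum_congr rfl fun A _ => ?_
  rw [map_smul, smul_eq_mul, hc i A]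

/-- sum over profiles with coordinate i pinned to A -/
lemma onecoord (μ : ∀ i, T i → ℝ) (hμ1 : ∀ i, ∑ t, μ i t = 1) (i : Fin m) (A : T i) :
    ∑ P : ∀ j, T j, (if P i = A then ∏ j ∈ univ.erase i, μ j (P j) else 0) = 1 := by
  classical
  set w : ∀ j, T j → ℝ := Function.update μ i (fun B => if B = A then 1 else 0) with hw
  have hterm : ∀ P : ∀ j, T j,
      (if P i = A then ∏ j ∈ univ.erase i, μ j (P j) else 0) = ∏ j, w j (P j) := by
    intro P
    rw [← Finset.mul_prod_erase univ (fun j => w j (P j)) (mem_univ i)]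
    have h1 : w i (P i) = if P i = A then 1 else 0 := by rw [hw, Function.update_self]
    have h2 : ∏ j ∈ univ.erase i, w j (P j) = ∏ j ∈ univ.erase i, μ j (P j) :=
      Finset.prod_congr rfl fun j hj => by
        rw [hw, Function.update_of_ne (mem_erase.mp hj).1]
    rw [h1, h2]
    by_cases h : P i = A
    · rw [if_pos h, if_pos h, one_mul]
    · rw [if_neg h, if_neg h, zero_mul]
  rw [Finset.sum_congr rfl fun P _ => hterm P, ← Fintype.prod_sum w]
  refine Finset.prod_eq_one fun j _ => ?_
  by_cases hj : j = i
  · subst hj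
    rw [hw, Function.update_self]
    rw [Finset.sum_ite_eq' univ A (fun _ => (1:ℝ)), if_pos (mem_univ A)]
  · rw [hw, Function.update_of_ne hj]
    exact hμ1 j

/-- Construction of a feasible mechanism from the Border inequalities. -/
lemma feasible_of_border (hune : (univ : Finset (Fin m)).Nonempty)
    (μ : ∀ i, T i → ℝ) (hμ0 : ∀ i t, 0 ≤ μ i t) (hμ1 : ∀ i, ∑ t, μ i t = 1)
    (π : ∀ i, T i → ℝ) (hπ0 : ∀ i t, 0 ≤ π i t) (hπ1 : ∀ i t, π i t ≤ 1)
    (hborder : ∀ S : ∀ i, Finset (T i),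
      ∑ i, ∑ A ∈ S i, π i A * μ i A ≤ 1 - ∏ i, (1 - ∑ A ∈ S i, μ i A)) :
    ∃ φ : (∀ i, T i) → Fin m → ℝ,
      (∀ P i, 0 ≤ φ P i) ∧ (∀ P, ∑ i, φ P i ≤ 1) ∧
      (∀ (i : Fin m) (A : T i),
        (∑ P : ∀ j, T j,
          if P i = A then (∏ j ∈ Finset.univ.erase i, μ j (P j)) * φ P i else 0)
        = π i A) := by
  classical
  set Φ : Set ((∀ i, T i) → Fin m → ℝ) :=
    {φ | (∀ P i, 0 ≤ φ P i) ∧ ∀ P, ∑ i, φ P i ≤ 1} with hΦdef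
  have hΦconv : Convex ℝ Φ := by
    intro φ hφ ψ hψ a b ha hb hab
    constructor
    · intro P i
      exact add_nonneg (mul_nonneg ha (hφ.1 P i)) (mul_nonneg hb (hψ.1 P i))
    · intro P
      have : ∑ i, (a • φ + b • ψ) P i = a * ∑ i, φ P i + b * ∑ i, ψ P i := by
        simp only [Pi.add_apply, Pi.smul_apply, smul_eq_mul]
        rw [Finset.sum_add_distrib, Finset.mul_sum, Finset.mul_sum]
      rw [this]
      calc a * ∑ i, φ P i + b * ∑ i, ψ P i ≤ a * 1 + b * 1 := by
            refine add_le_add ?_ ?_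
            · exact mul_le_mul_of_nonneg_left (hφ.2 P) ha
            · exact mul_le_mul_of_nonneg_left (hψ.2 P) hb
        _ = 1 := by rw [mul_one, mul_one, hab]
  have hΦcl : IsClosed Φ := by
    have h1 : Φ = (⋂ (P : ∀ i, T i) (i : Fin m), {φ : (∀ i, T i) → Fin m → ℝ | 0 ≤ φ P i})
        ∩ ⋂ (P : ∀ i, T i), {φ : (∀ i, T i) → Fin m → ℝ | ∑ i, φ P i ≤ 1} := by
      ext φ
      simp only [hΦdef, Set.mem_setOf_eq, Set.mem_inter_iff, Set.mem_iInter]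
    rw [h1]
    refine IsClosed.inter (isClosed_iInter fun P => isClosed_iInter fun i => ?_)
      (isClosed_iInter fun P => ?_)
    · exact isClosed_le continuous_const ((continuous_apply i).comp (continuous_apply P))
    · exact isClosed_le (continuous_finset_sum univ fun i _ =>
        (continuous_apply i).comp (continuous_apply P)) continuous_const
  have hΦb : Bornology.IsBounded Φ := by
    refine (Metric.isBounded_closedBall (x := (0 : (∀ i, T i) → Fin m → ℝ)) (r := 1)).subset ?_
    intro φ hφ
    rw [Metric.mem_closedBall, dist_zero_right]
    refine (pi_norm_le_iff_of_nonneg (by norm_num)).mpr fun P => ?_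
    refine (pi_norm_le_iff_of_nonneg (by norm_num)).mpr fun i => ?_
    rw [Real.norm_eq_abs, abs_le]
    constructor
    · linarith [hφ.1 P i]
    · calc φ P i ≤ ∑ j, φ P j := Finset.single_le_sum (fun j _ => hφ.1 P j) (mem_univ i)
        _ ≤ 1 := hφ.2 P
  have hKcomp : IsCompact (interimMap μ '' Φ) :=
    (Metric.isCompact_of_isClosed_isBounded hΦcl hΦb).image
      (interimMap μ).continuous_of_finiteDimensional
  have hKcl : IsClosed (interimMap μ '' Φ) := hKcomp.isClosed
  have hKconv : Convex ℝ (interimMap μ '' Φ) := hΦconv.linear_image (interimMap μ)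
  -- main step: the weighted reduced form is in the image
  have hqmem : (fun i (A : T i) => μ i A * π i A) ∈ interimMap μ '' Φ := by
    by_contra hq
    obtain ⟨f, u, hfK, hfq⟩ := geometric_hahn_banach_closed_point hKconv hKcl hq
    set cf : ∀ i, T i → ℝ := fun i A => f (Pi.single i (Pi.single A 1)) with hcf
    have hcf' : ∀ i A, cf i A = f (Pi.single i (Pi.single A 1)) := fun i A => rfl
    set y : ∀ i, T i → ℝ := fun i A => max (cf i A) 0 with hy
    have hy0 : ∀ i A, 0 ≤ y i A := fun i A => le_max_right _ _
    have hsel : ∀ P : ∀ i, T i, ∃ i₀,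
        univ.sup' hune (fun i => y i (P i)) = y i₀ (P i₀) := by
      intro P
      obtain ⟨b, -, hb⟩ := Finset.exists_mem_eq_sup' hune (fun i => y i (P i))
      exact ⟨b, hb⟩
    choose sel hselspec using hsel
    set φs : (∀ i, T i) → Fin m → ℝ := fun P i =>
      if i = sel P then (if 0 ≤ cf i (P i) then 1 else 0) else 0 with hφs
    have hφsΦ : φs ∈ Φ := by
      constructor
      · intro P i
        rw [hφs]; dsimp only
        split_ifs <;> norm_num
      · intro P
        rw [hφs]; dsimp only
        rw [Finset.sum_ite_eq' univ (sel P)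
          (fun i => if 0 ≤ cf i (P i) then (1:ℝ) else 0), if_pos (mem_univ _)]
        split_ifs <;> norm_num
    have heval : f (interimMap μ φs)
        = ∑ P : ∀ i, T i, (∏ i, μ i (P i)) * (univ.sup' hune (fun i => y i (P i))) := by
      rw [clm_rep f cf hcf' (interimMap μ φs)]
      calc ∑ i, ∑ A, (interimMap μ φs) i A * cf i A
          = ∑ i, ∑ A, cf i A * μ i A * (∑ P : ∀ j, T j,
              if P i = A then (∏ j ∈ univ.erase i, μ j (P j)) * φs P i else 0) := by
            refine Finset.sum_congr rfl fun i _ => Finset.sum_congr rfl fun A _ => ?_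
            rw [interimMap_apply]; ring
        _ = ∑ P : ∀ i, T i, (∏ i, μ i (P i)) * ∑ i, cf i (P i) * φs P i :=
            interim_identity μ cf φs
        _ = ∑ P : ∀ i, T i, (∏ i, μ i (P i)) * (univ.sup' hune (fun i => y i (P i))) := by
            refine Finset.sum_congr rfl fun P _ => ?_
            congr 1
            have e2 : ∀ i, cf i (P i) * φs P i
                = if i = sel P then (if 0 ≤ cf i (P i) then cf i (P i) else 0) else 0 := by
              intro i
              rw [hφs]; dsimp only
              split_ifs <;> ring
            rw [Finset.sum_congr rfl fun i _ => e2 i, Finset.sum_ite_eq' univ (sel P) _,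
              if_pos (mem_univ _), hselspec P]
            by_cases h : 0 ≤ cf (sel P) (P (sel P))
            · rw [if_pos h]
              exact (max_eq_left h).symm
            · rw [if_neg h]
              exact (max_eq_right (le_of_not_ge h)).symm
    have hflt : f (interimMap μ φs) < u := hfK _ (Set.mem_image_of_mem _ hφsΦ)
    have hfq2 : f (fun i (A : T i) => μ i A * π i A) ≤ ∑ i, ∑ A, y i A * (π i A * μ i A) := by
      rw [clm_rep f cf hcf' _]
      refine Finset.sum_le_sum fun i _ => Finset.sum_le_sum fun A _ => ?_
      have h1 : cf i A ≤ y i A := le_max_left _ _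
      have h2 : 0 ≤ μ i A * π i A := mul_nonneg (hμ0 i A) (hπ0 i A)
      calc μ i A * π i A * cf i A ≤ μ i A * π i A * y i A :=
            mul_le_mul_of_nonneg_left h1 h2
        _ = y i A * (π i A * μ i A) := by ring
    have hlc := layercake hune μ hμ0 hμ1 π hborder y hy0
    linarith [hfq, hfq2, hlc, heval, hflt]
  obtain ⟨φ₀, hφ₀Φ, hLφ₀⟩ := hqmem
  have hint0 : ∀ (i : Fin m) (A : T i), μ i A *
      (∑ P : ∀ j, T j, if P i = A then (∏ j ∈ univ.erase i, μ j (P j)) * φ₀ P i else 0)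
      = μ i A * π i A := by
    intro i A
    have h := congrFun (congrFun hLφ₀ i) A
    rw [interimMap_apply] at h
    exact h
  -- fix up zero-probability types
  set φ₁ : (∀ i, T i) → Fin m → ℝ := fun P i =>
    if μ i (P i) = 0 then (if ∀ j, j ≠ i → μ j (P j) ≠ 0 then π i (P i) else 0)
    else (if ∀ j, μ j (P j) ≠ 0 then φ₀ P i else 0) with hφ₁
  refine ⟨φ₁, ?_, ?_, ?_⟩
  · intro P i
    rw [hφ₁]; dsimp only
    split_ifs
    exacts [hπ0 i (P i), le_refl 0, hφ₀Φ.1 P i, le_refl 0]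
  · intro P
    by_cases hall : ∀ j, μ j (P j) ≠ 0
    · have h : ∀ i, φ₁ P i = φ₀ P i := by
        intro i
        rw [hφ₁]; dsimp only
        rw [if_neg (hall i), if_pos hall]
      rw [Finset.sum_congr rfl fun i _ => h i]
      exact hφ₀Φ.2 P
    · by_cases hex : ∃ i₀, μ i₀ (P i₀) = 0 ∧ ∀ j, j ≠ i₀ → μ j (P j) ≠ 0
      · obtain ⟨i₀, hi₀, hi₀'⟩ := hex
        have hz : ∀ i ∈ univ, i ≠ i₀ → φ₁ P i = 0 := by
          intro i _ hi
          rw [hφ₁]; dsimp only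
          rw [if_neg (hi₀' i hi), if_neg hall]
        rw [Finset.sum_eq_single i₀ hz (fun h => absurd (mem_univ i₀) h)]
        rw [hφ₁]; dsimp only
        rw [if_pos hi₀, if_pos hi₀']
        exact hπ1 i₀ (P i₀)
      · have hz : ∀ i ∈ univ, φ₁ P i = 0 := by
          intro i _
          rw [hφ₁]; dsimp only
          by_cases hμi : μ i (P i) = 0
          · rw [if_pos hμi, if_neg]
            intro hcond
            exact hex ⟨i, hμi, hcond⟩
          · rw [if_neg hμi, if_neg hall]
        rw [Finset.sum_eq_zero hz]
        norm_num
  · intro i A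
    by_cases hA : μ i A = 0
    · have hterm : ∀ P : ∀ j, T j,
          (if P i = A then (∏ j ∈ univ.erase i, μ j (P j)) * φ₁ P i else 0)
          = (if P i = A then (∏ j ∈ univ.erase i, μ j (P j)) else 0) * π i A := by
        intro P
        by_cases hPA : P i = A
        · rw [if_pos hPA, if_pos hPA]
          by_cases hz : ∃ j, j ≠ i ∧ μ j (P j) = 0
          · obtain ⟨j, hji, hj0⟩ := hz
            have h0 : ∏ j ∈ univ.erase i, μ j (P j) = 0 :=
              Finset.prod_eq_zero (mem_erase.mpr ⟨hji, mem_univ j⟩) hj0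
            rw [h0]; ring
          · push_neg at hz
            have hφval : φ₁ P i = π i A := by
              rw [hφ₁]; dsimp only
              rw [if_pos (by rw [hPA]; exact hA), if_pos hz, hPA]
            rw [hφval]
        · rw [if_neg hPA, if_neg hPA, zero_mul]
      rw [Finset.sum_congr rfl fun P _ => hterm P, ← Finset.sum_mul,
        onecoord μ hμ1 i A, one_mul]
    · have hterm : ∀ P : ∀ j, T j,
          (if P i = A then (∏ j ∈ univ.erase i, μ j (P j)) * φ₁ P i else 0)
          = (if P i = A then (∏ j ∈ univ.erase i, μ j (P j)) * φ₀ P i else 0) := by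
        intro P
        by_cases hPA : P i = A
        · rw [if_pos hPA, if_pos hPA]
          by_cases hz : ∃ j, j ≠ i ∧ μ j (P j) = 0
          · obtain ⟨j, hji, hj0⟩ := hz
            have h0 : ∏ j ∈ univ.erase i, μ j (P j) = 0 :=
              Finset.prod_eq_zero (mem_erase.mpr ⟨hji, mem_univ j⟩) hj0
            rw [h0, zero_mul, zero_mul]
          · push_neg at hz
            have hall : ∀ j, μ j (P j) ≠ 0 := by
              intro j
              by_cases hji : j = i
              · subst hji; rw [hPA]; exact hA
              · exact hz j hji
            have h : φ₁ P i = φ₀ P i := by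
              rw [hφ₁]; dsimp only
              rw [if_neg (hall i), if_pos hall]
            rw [h]
        · rw [if_neg hPA, if_neg hPA]
      rw [Finset.sum_congr rfl fun P _ => hterm P]
      exact mul_left_cancel₀ hA (hint0 i A)

end BorderAux

/-- Virtual-threshold form of Border's theorem for independent bidders (single item):
defining the virtual reduced form `π̂_i(A) = Pr[π_i(t_i) ≤ π_i(A)]·π_i(A)`, a reduced
form `π` is feasible if and only if for every `x ≥ 0`, the virtual-threshold sets
`S^{(i)}_x = {A ∈ T_i : π̂_i(A) > x}` satisfy
`Σ_i Σ_{A ∈ S^{(i)}_x} π_i(A)·Pr[t_i = A] ≤ 1 − Π_i (1 − Pr[t_i ∈ S^{(i)}_x])`. -/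
theorem stmt_5 (m : ℕ) (hm : 0 < m) (T : Fin m → Type*)
    [∀ i, Fintype (T i)] [∀ i, DecidableEq (T i)]
    (μ : ∀ i, T i → ℝ) (hμ0 : ∀ i t, 0 ≤ μ i t) (hμ1 : ∀ i, ∑ t, μ i t = 1)
    (π : ∀ i, T i → ℝ) (hπ0 : ∀ i t, 0 ≤ π i t) (hπ1 : ∀ i t, π i t ≤ 1) :
    (∃ φ : (∀ i, T i) → Fin m → ℝ,
        (∀ P i, 0 ≤ φ P i) ∧ (∀ P, ∑ i, φ P i ≤ 1) ∧
        (∀ (i : Fin m) (A : T i),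
          (∑ P : ∀ j, T j,
            if P i = A then (∏ j ∈ Finset.univ.erase i, μ j (P j)) * φ P i else 0)
          = π i A)) ↔
    (∀ x : ℝ, 0 ≤ x →
      ∑ i, ∑ A ∈ Finset.univ.filter (fun A : T i =>
          x < (∑ B ∈ Finset.univ.filter (fun B : T i => π i B ≤ π i A), μ i B) * π i A),
        π i A * μ i A
      ≤ 1 - ∏ i, (1 - ∑ A ∈ Finset.univ.filter (fun A : T i =>
          x < (∑ B ∈ Finset.univ.filter (fun B : T i => π i B ≤ π i A), μ i B) * π i A),
            μ i A)) := by
  classical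
  constructor
  · rintro ⟨φ, hφ0, hφ1, hint⟩ x hx
    exact border_of_feasible μ hμ0 hμ1 π φ hφ0 hφ1 hint
      (fun i => Finset.univ.filter (fun A : T i =>
        x < (∑ B ∈ Finset.univ.filter (fun B : T i => π i B ≤ π i A), μ i B) * π i A))
  · intro hv
    have hune : (Finset.univ : Finset (Fin m)).Nonempty := by
      have : Nonempty (Fin m) := Fin.pos_iff_nonempty.mp hm
      exact Finset.univ_nonempty
    exact feasible_of_border hune μ hμ0 hμ1 π hπ0 hπ1
      (border_general_of_virtual μ hμ0 hμ1 π hπ0 hv)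
end

section
/- There exists an infeasible single-item reduced form for two independent bidders such that every collection of threshold sets of the form S^i_x = {A ∈ T_i : π_i(A) > x} (with the same threshold x for all bidders) satisfies the Border inequality Σ_i Σ_{A∈S^i_x} π_i(A)Pr[t_i=A] ≤ 1 − Π_i(1 − Pr[t_i ∈ S^i_x]). Concretely: bidder 1 has types A, B with Pr[A]=1/8, Pr[B]=7/8, π_1(A)=5/8, π_1(B)=0; bidder 2 has types C, D with Pr[C]=Pr[D]=1/2, π_2(C)=1, π_2(D)=3/4; this reduced form is infeasible (the set {A,C} is constricting) yet all common-threshold sets satisfy the inequality. -/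
/- Two independent bidders, single item. Bidder 1 has types A (`true`) and B (`false`)
with probabilities 1/8, 7/8 and reduced form values 5/8, 0. Bidder 2 has types C
(`true`) and D (`false`) with probabilities 1/2, 1/2 and reduced form values 1, 3/4. -/

noncomputable def mu1 : Bool → ℝ := fun t => if t then 1/8 else 7/8
noncomputable def pi1 : Bool → ℝ := fun t => if t then 5/8 else 0
noncomputable def mu2 : Bool → ℝ := fun t => if t then 1/2 else 1/2
noncomputable def pi2 : Bool → ℝ := fun t => if t then 1 else 3/4

/-- There exists an infeasible single-item reduced form for two independent bidders such
that every collection of threshold sets `S^i_x = {A ∈ T_i : π_i(A) > x}` (with the same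
threshold `x` for all bidders) satisfies the Border inequality.  The concrete reduced
form above is infeasible, yet all common-threshold sets satisfy the inequality. -/
theorem stmt_6 :
    (¬ ∃ φ₁ φ₂ : Bool → Bool → ℝ,
        (∀ t₁ t₂, 0 ≤ φ₁ t₁ t₂) ∧ (∀ t₁ t₂, 0 ≤ φ₂ t₁ t₂) ∧
        (∀ t₁ t₂, φ₁ t₁ t₂ + φ₂ t₁ t₂ ≤ 1) ∧
        (∀ t₁ : Bool, ∑ t₂ : Bool, mu2 t₂ * φ₁ t₁ t₂ = pi1 t₁) ∧
        (∀ t₂ : Bool, ∑ t₁ : Bool, mu1 t₁ * φ₂ t₁ t₂ = pi2 t₂)) ∧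
    (∀ x : ℝ,
      (∑ t ∈ Finset.univ.filter (fun t : Bool => x < pi1 t), pi1 t * mu1 t) +
      (∑ t ∈ Finset.univ.filter (fun t : Bool => x < pi2 t), pi2 t * mu2 t) ≤
        1 - (1 - ∑ t ∈ Finset.univ.filter (fun t : Bool => x < pi1 t), mu1 t) *
            (1 - ∑ t ∈ Finset.univ.filter (fun t : Bool => x < pi2 t), mu2 t)) := by
  constructor
  · rintro ⟨φ₁, φ₂, h1, h2, h3, h4, h5⟩
    have e1 := h4 true
    have e2 := h5 true
    simp [Fintype.sum_bool, mu1, mu2, pi1, pi2] at e1 e2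
    have := h1 true true
    have := h1 true false
    have := h2 true true
    have := h2 false true
    have := h3 true true
    have := h3 true false
    have := h3 false true
    have := h1 false true
    have := h2 true false
    linarith
  · intro x
    rw [Finset.sum_filter, Finset.sum_filter, Finset.sum_filter, Finset.sum_filter]
    simp only [Fintype.sum_bool, mu1, mu2, pi1, pi2]
    norm_num
    split_ifs <;> nlinarith
end
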